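/- arXiv:2605.26916 — 11 statements merged into one kernel-verified Lean document; each statement's English description precedes it below -/
import Mathlib

section
/- The poset P_τ of lattice points of a preorder polytope Q_τ is graded with rank function given by the sum of coordinates: whenever a covers b in P_τ (with the componentwise order), the sum of the coordinates of a exceeds that of b by exactly 1. -/
def IsOrderIdeal {E : Type*} (r : E → E → Prop) (I : Finset E) : Prop :=
  ∀ a b : E, r a b → b ∈ I → a ∈ I

def preorderPolytope (E : Type*) [Fintype E] (r : E → E → Prop) : Set (E → ℝ) :=
  {x | (∀ e, 0 ≤ x e) ∧
    ∀ I : Finset E, IsOrderIdeal r I → ∑ e ∈ I, x e ≤ (I.card : ℝ)}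

def latticePoints (E : Type*) [Fintype E] (r : E → E → Prop) : Set (E → ℕ) :=
  {a | (fun e => (a e : ℝ)) ∈ preorderPolytope E r}

/-- the poset of lattice points of the preorder polytope is graded
with rank the sum of coordinates: if `a` covers `b` (in the componentwise order
restricted to the lattice points), then `∑ a = ∑ b + 1`. -/
theorem latticePoints_graded (E : Type*) [Fintype E]
    (r : E → E → Prop) (hrefl : ∀ a, r a a) (htrans : ∀ a b c, r a b → r b c → r a c)
    (a b : E → ℕ) (ha : a ∈ latticePoints E r) (hb : b ∈ latticePoints E r)
    (hcov : b < a ∧ ¬ ∃ c ∈ latticePoints E r, b < c ∧ c < a) :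
    ∑ e : E, a e = (∑ e : E, b e) + 1 := by
  classical
  obtain ⟨hlt, hnoc⟩ := hcov
  rw [Pi.lt_def] at hlt
  obtain ⟨hle, f, hf⟩ := hlt
  set c : E → ℕ := Function.update b f (b f + 1) with hc
  have hca : c ≤ a := by
    intro e
    by_cases he : e = f
    · subst he; simp [hc, Function.update_self]; omega
    · simp [hc, Function.update_of_ne he]; exact hle e
  have hbc : b < c := by
    refine lt_of_le_of_ne (fun e => ?_) (fun h => ?_)
    · by_cases he : e = f
      · subst he; simp [hc, Function.update_self]
      · simp [hc, Function.update_of_ne he]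
    · have := congrFun h f
      simp [hc, Function.update_self] at this
  have hcmem : c ∈ latticePoints E r := by
    refine ⟨fun e => by positivity, fun I hI => ?_⟩
    calc ∑ e ∈ I, (c e : ℝ) ≤ ∑ e ∈ I, (a e : ℝ) :=
          Finset.sum_le_sum fun e _ => by exact_mod_cast hca e
      _ ≤ (I.card : ℝ) := ha.2 I hI
  have hceq : c = a := by
    by_contra h
    exact hnoc ⟨c, hcmem, hbc, lt_of_le_of_ne hca h⟩
  rw [← hceq, hc, Finset.sum_update_of_mem (Finset.mem_univ f),
    ← Finset.add_sum_erase _ b (Finset.mem_univ f)]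
  rw [Finset.sdiff_singleton_eq_erase]
  ring
end

section
/- Translation by the all-ones vector (1,1,…,1) gives a bijection between the set of lattice points of Q_τ lying in no defining hyperplane Σ_{e∈I} x_e = |I| (for I a nonempty order ideal of τ) and the set of lattice points in the interior of the dilate 2Q_τ. Consequently the number of interior lattice points of 2Q_τ equals the number of lattice points of Q_τ not on the upper boundary. -/
/-- Lattice points of `Q_τ` lying on no defining hyperplane
`∑_{e ∈ I} x_e = |I|` (`I` a nonempty order ideal). -/
def notUpperBoundaryPoints (E : Type*) [Fintype E] (r : E → E → Prop) : Set (E → ℕ) :=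
  {a | (fun e => (a e : ℝ)) ∈ preorderPolytope E r ∧
    ∀ I : Finset E, I.Nonempty → IsOrderIdeal r I → ∑ e ∈ I, a e < I.card}

/-- Interior lattice points of the dilate `2 Q_τ`: all defining inequalities
are satisfied strictly. -/
def interiorPointsTwice (E : Type*) [Fintype E] (r : E → E → Prop) : Set (E → ℕ) :=
  {a | (∀ e, 0 < a e) ∧
    ∀ I : Finset E, I.Nonempty → IsOrderIdeal r I → ∑ e ∈ I, a e < 2 * I.card}

/-- translation by the all-ones vector is a bijection from the
set of lattice points of `Q_τ` on no defining hyperplane onto the set of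
interior lattice points of `2 Q_τ`; consequently the two sets have the same
cardinality. -/
theorem translation_bijOn_interior (E : Type*) [Fintype E]
    (r : E → E → Prop) (hrefl : ∀ a, r a a) (htrans : ∀ a b c, r a b → r b c → r a c) :
    Set.BijOn (fun (a : E → ℕ) (e : E) => a e + 1)
      (notUpperBoundaryPoints E r) (interiorPointsTwice E r) ∧
    (interiorPointsTwice E r).ncard = (notUpperBoundaryPoints E r).ncard := by
  have hbij : Set.BijOn (fun (a : E → ℕ) (e : E) => a e + 1)
      (notUpperBoundaryPoints E r) (interiorPointsTwice E r) := by
    refine ⟨?_, ?_, ?_⟩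
    · rintro a ⟨_, hstrict⟩
      refine ⟨fun e => Nat.succ_pos _, fun I hI hIideal => ?_⟩
      have h := hstrict I hI hIideal
      have : ∑ e ∈ I, (a e + 1) = (∑ e ∈ I, a e) + I.card := by
        rw [Finset.sum_add_distrib, Finset.sum_const, smul_eq_mul, mul_one]
      simp only [this]
      omega
    · intro a _ b _ hab
      funext e
      exact Nat.add_right_cancel (congrFun hab e)
    · rintro b ⟨hpos, hsum⟩
      refine ⟨fun e => b e - 1, ⟨⟨fun e => by positivity, fun I hIideal => ?_⟩,
        fun I hI hIideal => ?_⟩, funext fun e => Nat.succ_pred_eq_of_pos (hpos e)⟩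
      · rcases I.eq_empty_or_nonempty with h | h
        · simp [h]
        · have hb := hsum I h hIideal
          have hkey : (∑ e ∈ I, (b e - 1)) + I.card = ∑ e ∈ I, b e := by
            rw [Finset.card_eq_sum_ones, ← Finset.sum_add_distrib]
            exact Finset.sum_congr rfl fun e _ => Nat.succ_pred_eq_of_pos (hpos e)
          have hle : ∑ e ∈ I, (b e - 1) ≤ I.card := by omega
          calc (∑ e ∈ I, ((b e - 1 : ℕ) : ℝ)) = ((∑ e ∈ I, (b e - 1) : ℕ) : ℝ) := by
                push_cast; ring
            _ ≤ (I.card : ℝ) := by exact_mod_cast hle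
      · have hb := hsum I hI hIideal
        have hkey : (∑ e ∈ I, (b e - 1)) + I.card = ∑ e ∈ I, b e := by
          rw [Finset.card_eq_sum_ones, ← Finset.sum_add_distrib]
          exact Finset.sum_congr rfl fun e _ => Nat.succ_pred_eq_of_pos (hpos e)
        show ∑ e ∈ I, (b e - 1) < I.card
        omega
  refine ⟨hbij, ?_⟩
  rw [← hbij.image_eq]
  exact Set.ncard_image_of_injOn hbij.injOn
end

section
/- Let τ be a preorder on an n-element set E and let τ* be its dual (the reverse preorder). For every m ≥ 1, the number of multichains p₁ ≤ p₂ ≤ ⋯ ≤ p_m in the poset P_{τ*} of lattice points of Q_{τ*} equals Σ_{(a_e) ∈ P_{τ*}} Π_{e∈E} C(m + a_e − 1, a_e), where the sum is over lattice points of Q_{τ*}. -/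
private instance fin_mono_top (k b : ℕ) :
    Finite {g : Fin (k + 1) → ℕ // Monotone g ∧ g (Fin.last k) = b} := by
  apply Finite.of_injective
    (fun g => (fun i => (⟨g.1 i, Nat.lt_succ_of_le
      (le_of_le_of_eq (g.2.1 (Fin.le_last i)) g.2.2)⟩ :
      Fin (b + 1)) : Fin (k + 1) → Fin (b + 1)))
  intro x y h
  ext i
  exact congrArg Fin.val (congrFun h i)

private lemma nat_card_sigma {ι : Type*} [Fintype ι] (α : ι → Type*) [∀ i, Finite (α i)] :
    Nat.card (Σ i, α i) = ∑ i, Nat.card (α i) := by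
  letI : ∀ i, Fintype (α i) := fun i => Fintype.ofFinite _
  simp only [Nat.card_eq_fintype_card, Fintype.card_sigma]

private lemma count_mono_top (k a : ℕ) :
    Nat.card {f : Fin (k + 1) → ℕ // Monotone f ∧ f (Fin.last k) = a} = (a + k).choose k := by
  induction k generalizing a with
  | zero =>
    rw [Nat.choose_zero_right]
    have e : {f : Fin 1 → ℕ // Monotone f ∧ f (Fin.last 0) = a} ≃ PUnit.{1} :=
      { toFun := fun _ => PUnit.unit
        invFun := fun _ => ⟨fun _ => a, monotone_const, rfl⟩
        left_inv := fun f => Subtype.ext (funext fun i => by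
          have h : i = Fin.last 0 := Fin.ext (by omega)
          rw [h]; exact f.2.2.symm)
        right_inv := fun _ => rfl }
    rw [Nat.card_congr e]; simp
  | succ k ih =>
    have e : {f : Fin (k + 2) → ℕ // Monotone f ∧ f (Fin.last (k + 1)) = a} ≃
        Σ b : Fin (a + 1), {g : Fin (k + 1) → ℕ // Monotone g ∧ g (Fin.last k) = (b : ℕ)} :=
      { toFun := fun f =>
          ⟨⟨f.1 (Fin.castSucc (Fin.last k)),
              Nat.lt_succ_of_le (le_of_le_of_eq (f.2.1 (Fin.le_last _)) f.2.2)⟩,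
            ⟨Fin.init f.1, fun i j hij => f.2.1 (Fin.castSucc_le_castSucc_iff.mpr hij), rfl⟩⟩
        invFun := fun x =>
          ⟨Fin.snoc x.2.1 a, by
            rw [Fin.monotone_iff_le_succ]
            intro i
            induction i using Fin.lastCases with
            | last =>
              rw [Fin.succ_last, Fin.snoc_castSucc, Fin.snoc_last, x.2.2.2]
              exact Nat.lt_succ_iff.mp x.1.isLt
            | cast j =>
              rw [Fin.succ_castSucc, Fin.snoc_castSucc, Fin.snoc_castSucc]
              exact x.2.2.1 (Fin.castSucc_lt_succ : Fin.castSucc j < j.succ).le,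
            by simp⟩
        left_inv := fun f => Subtype.ext (by
          show Fin.snoc (Fin.init f.1) a = f.1
          conv_rhs => rw [← Fin.snoc_init_self f.1]
          rw [f.2.2])
        right_inv := fun x => by
          have h1 : (Fin.snoc x.2.1 a : Fin (k + 2) → ℕ) (Fin.castSucc (Fin.last k)) = (x.1 : ℕ) := by
            rw [Fin.snoc_castSucc]; exact x.2.2.2
          refine Sigma.ext (Fin.ext h1) ?_
          refine (Subtype.heq_iff_coe_eq fun g' =>
            and_congr_right fun _ => ⟨fun h => h.trans h1, fun h => h.trans h1.symm⟩).mpr ?_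
          simp [Fin.init_snoc] }
    rw [Nat.card_congr e, nat_card_sigma]
    have h2 : ∀ b : Fin (a + 1),
        Nat.card {g : Fin (k + 1) → ℕ // Monotone g ∧ g (Fin.last k) = (b : ℕ)} =
          ((b : ℕ) + k).choose k := fun b => ih (b : ℕ)
    rw [Finset.sum_congr rfl (fun b _ => h2 b)]
    rw [Fin.sum_univ_eq_sum_range (fun i => (i + k).choose k) (a + 1)]
    exact Nat.sum_range_add_choose a k

/-- for `m ≥ 1`, the number of `m`-multichains
`p₁ ≤ ⋯ ≤ p_m` in the poset `P_{τ*}` of lattice points of the polytope of the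
dual preorder `τ*` equals `∑_{a ∈ P_{τ*}} ∏_e C(m + a_e − 1, a_e)`.
Here `P` is a finset enumerating the lattice points of `Q_{τ*}`. -/
theorem multichains_card (E : Type*) [Fintype E] [DecidableEq E]
    (r : E → E → Prop) (hrefl : ∀ a, r a a) (htrans : ∀ a b c, r a b → r b c → r a c)
    (P : Finset (E → ℕ))
    (hP : ∀ a : E → ℕ, a ∈ P ↔ (fun e => (a e : ℝ)) ∈ preorderPolytope E (fun a b => r b a))
    (m : ℕ) (hm : 1 ≤ m) :
    Nat.card {p : Fin m → (E → ℕ) // (∀ i, p i ∈ P) ∧ Monotone p} =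
      ∑ a ∈ P, ∏ e : E, (m + a e - 1).choose (a e) := by
  have hlow : ∀ a b : E → ℕ, b ≤ a → a ∈ P → b ∈ P := by
    intro a b hba ha
    rw [hP] at ha ⊢
    refine ⟨fun e => by positivity, fun I hI => ?_⟩
    calc ∑ e ∈ I, ((b e : ℝ)) ≤ ∑ e ∈ I, ((a e : ℝ)) :=
          Finset.sum_le_sum (fun e _ => Nat.cast_le.mpr (hba e))
      _ ≤ I.card := ha.2 I hI
  obtain ⟨k, rfl⟩ : ∃ k, m = k + 1 := ⟨m - 1, (Nat.succ_pred_eq_of_pos hm).symm⟩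
  have e1 : {p : Fin (k + 1) → (E → ℕ) // (∀ i, p i ∈ P) ∧ Monotone p} ≃
      Σ a : {x : E → ℕ // x ∈ P},
        Π e : E, {f : Fin (k + 1) → ℕ // Monotone f ∧ f (Fin.last k) = a.1 e} :=
    { toFun := fun p =>
        ⟨⟨p.1 (Fin.last k), p.2.1 _⟩,
          fun e => ⟨fun i => p.1 i e, fun i j hij => p.2.2 hij e, rfl⟩⟩
      invFun := fun x =>
        ⟨fun i e => (x.2 e).1 i,
          ⟨fun i => hlow x.1.1 _
              (fun e => le_of_le_of_eq ((x.2 e).2.1 (Fin.le_last i)) (x.2 e).2.2) x.1.2,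
            fun i j hij e => (x.2 e).2.1 hij⟩⟩
      left_inv := fun p => rfl
      right_inv := fun x => by
        refine Sigma.ext (Subtype.ext (funext fun e => (x.2 e).2.2)) ?_
        refine Function.hfunext rfl (fun e e' he => ?_)
        cases he
        refine (Subtype.heq_iff_coe_eq ?_).mpr rfl
        intro f
        rw [(x.2 e).2.2] }
  rw [Nat.card_congr e1, nat_card_sigma]
  rw [← Finset.sum_coe_sort P (fun a => ∏ e : E, (k + 1 + a e - 1).choose (a e))]
  refine Finset.sum_congr rfl (fun a _ => ?_)
  rw [Nat.card_pi]
  refine Finset.prod_congr rfl (fun e _ => ?_)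
  rw [count_mono_top]
  have h1 : k + 1 + a.1 e - 1 = a.1 e + k := by omega
  rw [h1, Nat.choose_symm_add]
end

section
/- Let τ be a preorder on an n-element set E. The maximal chains of the poset P_{τ*} of lattice points of Q_{τ*} (which all have length n) are in bijection with the words w ∈ E^n such that for every order ideal I of τ, the elements of I appear a total of at least |I| times in w. The bijection sends a maximal chain to the word recording, at each covering step, the unique coordinate that increases. -/
set_option linter.unusedSectionVars false
set_option linter.unusedVariables false
set_option maxHeartbeats 1000000


open Finset

section helpers
variable {E : Type*} [Fintype E] [DecidableEq E] {n : ℕ}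

private def cnt (w : Fin n → E) (i : ℕ) (e : E) : ℕ :=
  (Finset.univ.filter (fun j : Fin n => (j : ℕ) < i ∧ w j = e)).card

private lemma cnt_zero (w : Fin n → E) (e : E) : cnt w 0 e = 0 := by
  simp [cnt]

private lemma cnt_succ (w : Fin n → E) (i : ℕ) (h : i < n) (e : E) :
    cnt w (i+1) e = cnt w i e + if w ⟨i, h⟩ = e then 1 else 0 := by
  classical
  unfold cnt
  have hset : (Finset.univ.filter (fun j : Fin n => (j : ℕ) < i + 1 ∧ w j = e)) =
      (Finset.univ.filter (fun j : Fin n => (j : ℕ) < i ∧ w j = e)) ∪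
      (Finset.univ.filter (fun j : Fin n => j = ⟨i, h⟩ ∧ w j = e)) := by
    ext j; simp only [mem_filter, mem_union, mem_univ, true_and]
    constructor
    · rintro ⟨hlt, he⟩
      rcases Nat.lt_succ_iff_lt_or_eq.mp hlt with h' | h'
      · exact Or.inl ⟨h', he⟩
      · exact Or.inr ⟨Fin.ext h', he⟩
    · rintro (⟨h', he⟩ | ⟨h', he⟩)
      · exact ⟨Nat.lt_succ_of_lt h', he⟩
      · subst h'; exact ⟨Nat.lt_succ_self i, he⟩
  rw [hset, card_union_of_disjoint]
  · congr 1
    by_cases hw : w ⟨i, h⟩ = e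
    · rw [if_pos hw]
      have : (Finset.univ.filter (fun j : Fin n => j = ⟨i, h⟩ ∧ w j = e)) = {⟨i, h⟩} := by
        ext j; simp only [mem_filter, mem_univ, true_and, mem_singleton]
        constructor
        · rintro ⟨h', _⟩; exact h'
        · rintro rfl; exact ⟨rfl, hw⟩
      rw [this, card_singleton]
    · rw [if_neg hw]
      have : (Finset.univ.filter (fun j : Fin n => j = ⟨i, h⟩ ∧ w j = e)) = ∅ := by
        ext j; simp only [mem_filter, mem_univ, true_and, notMem_empty, iff_false]
        rintro ⟨rfl, he⟩; exact hw he
      rw [this, card_empty]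
  · rw [Finset.disjoint_left]
    intro j hj hj'
    have h1 := (mem_filter.mp hj).2.1
    have h2 := (mem_filter.mp hj').2.1
    subst h2; exact lt_irrefl i h1

private lemma sum_cnt (w : Fin n → E) (i : ℕ) (S : Finset E) :
    ∑ e ∈ S, cnt w i e =
      (Finset.univ.filter (fun j : Fin n => (j : ℕ) < i ∧ w j ∈ S)).card := by
  classical
  rw [Finset.card_eq_sum_card_fiberwise
    (f := w) (t := S) (fun j hj => (mem_filter.mp hj).2.2)]
  apply Finset.sum_congr rfl
  intro e he
  unfold cnt
  rw [Finset.filter_filter]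
  congr 1
  ext j
  simp only [mem_filter, mem_univ, true_and]
  constructor
  · rintro ⟨h1, h2⟩; exact ⟨⟨h1, h2.symm ▸ he⟩, h2⟩
  · rintro ⟨⟨h1, _⟩, h2⟩; exact ⟨h1, h2⟩

private lemma cnt_total (w : Fin n → E) : ∀ i, i ≤ n → ∑ e : E, cnt w i e = i := by
  intro i
  induction i with
  | zero => intro _; simp [cnt_zero]
  | succ k ih =>
    intro hk
    have hkn : k < n := hk
    have hh : ∀ e, cnt w (k+1) e = cnt w k e + if w ⟨k, hkn⟩ = e then 1 else 0 :=
      fun e => cnt_succ w k hkn e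
    rw [Finset.sum_congr rfl (fun e _ => hh e), Finset.sum_add_distrib,
      ih (Nat.le_of_lt hkn), Finset.sum_ite_eq Finset.univ (w ⟨k, hkn⟩) (fun _ => 1)]
    simp

private lemma step_unique {a b : E → ℕ} (hab : ∀ e, a e ≤ b e)
    (hsum : ∑ e : E, b e = (∑ e : E, a e) + 1) {e₀ : E} (he₀ : a e₀ < b e₀) :
    ∀ e, b e = a e + if e = e₀ then 1 else 0 := by
  classical
  set d : E → ℕ := fun e => b e - a e with hd
  have hbe : ∀ e, b e = a e + d e := fun e => (Nat.add_sub_cancel' (hab e)).symm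
  have hdsum : ∑ e : E, d e = 1 := by
    have h := hsum
    rw [Finset.sum_congr rfl (fun e _ => hbe e), Finset.sum_add_distrib] at h
    omega
  have hd0 : 1 ≤ d e₀ := by simp only [hd]; omega
  have hrest : ∑ e ∈ Finset.univ.erase e₀, d e = 0 := by
    have h := Finset.add_sum_erase Finset.univ d (Finset.mem_univ e₀)
    omega
  intro e
  by_cases he : e = e₀
  · subst he
    rw [if_pos rfl, hbe e]
    have hde : d e = 1 := by
      have h1 := Finset.add_sum_erase Finset.univ d (Finset.mem_univ e)
      omega
    omega
  · rw [if_neg he, hbe e]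
    have hde : d e = 0 :=
      Finset.sum_eq_zero_iff.mp hrest e (Finset.mem_erase.mpr ⟨he, Finset.mem_univ e⟩)
    omega

end helpers

/-- for a preorder `τ` (relation `r`) on an `n`-element set `E`,
the maximal chains of the poset of lattice points of `Q_{τ*}` — the saturated
chains `0 = c₀ < c₁ < ⋯ < c_n` with top element of coordinate sum `n` — are
in bijection with the words `w ∈ E^n` such that every order ideal `I` of `τ`
contributes at least `|I|` letters of `w`.  The bijection (stated here in the
inverse direction) sends the word `w` to the chain whose `i`-th element counts
the occurrences of each letter among the first `i` letters of `w`; its inverse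
records, at each covering step of a chain, the unique coordinate which
increases. -/
theorem maximal_chains_words_bijection (E : Type*) [Fintype E] [DecidableEq E]
    (r : E → E → Prop) (hrefl : ∀ a, r a a) (htrans : ∀ a b c, r a b → r b c → r a c)
    (n : ℕ) (hn : n = Fintype.card E) :
    Set.BijOn
      (fun (w : Fin n → E) (i : Fin (n + 1)) (e : E) =>
        (Finset.univ.filter (fun j : Fin n => (j : ℕ) < (i : ℕ) ∧ w j = e)).card)
      {w : Fin n → E | ∀ I : Finset E, IsOrderIdeal r I →
        I.card ≤ (Finset.univ.filter (fun i : Fin n => w i ∈ I)).card}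
      {c : Fin (n + 1) → (E → ℕ) |
        (∀ i, c i ∈ latticePoints E (fun a b => r b a)) ∧ StrictMono c ∧
          c 0 = 0 ∧ ∑ e : E, c (Fin.last n) e = n} := by
  classical
  have hcardE : Fintype.card E = n := hn.symm
  have hglobal : ∀ w : Fin n → E,
      (∀ I : Finset E, IsOrderIdeal r I →
        I.card ≤ (Finset.univ.filter (fun i : Fin n => w i ∈ I)).card) →
      ∀ J : Finset E, IsOrderIdeal (fun a b => r b a) J →
      (Finset.univ.filter (fun j : Fin n => w j ∈ J)).card ≤ J.card := by
    intro w hw J hJ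
    have hIc : IsOrderIdeal r Jᶜ := by
      intro a b hab hb
      simp only [Finset.mem_compl] at hb ⊢
      exact fun ha => hb (hJ b a hab ha)
    have h1 := hw Jᶜ hIc
    have hfc : (Finset.univ.filter (fun j : Fin n => w j ∈ Jᶜ)) =
        (Finset.univ.filter (fun j : Fin n => ¬ w j ∈ J)) := by
      simp [Finset.mem_compl]
    have h2 : (Finset.univ.filter (fun j : Fin n => w j ∈ J)).card
        + (Finset.univ.filter (fun j : Fin n => ¬ w j ∈ J)).card = n := by
      rw [Finset.card_filter_add_card_filter_not]
      simp
    have h3 : J.card + Jᶜ.card = n := by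
      rw [Finset.card_add_card_compl, hcardE]
    rw [hfc] at h1
    omega
  constructor
  · -- MapsTo
    intro w hw
    simp only [Set.mem_setOf_eq] at hw ⊢
    refine ⟨?_, ?_, ?_, ?_⟩
    · intro i
      refine ⟨fun e => by positivity, ?_⟩
      intro J hJ
      have hkey : ∑ e ∈ J, cnt w (i : ℕ) e ≤ J.card := by
        rw [sum_cnt]
        calc (Finset.univ.filter (fun j : Fin n => (j : ℕ) < (i : ℕ) ∧ w j ∈ J)).card
            ≤ (Finset.univ.filter (fun j : Fin n => w j ∈ J)).card :=
              Finset.card_le_card (Finset.monotone_filter_right _ (fun j _ hj => hj.2))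
          _ ≤ J.card := hglobal w hw J hJ
      show ∑ e ∈ J, ((cnt w (i : ℕ) e : ℕ) : ℝ) ≤ (J.card : ℝ)
      exact_mod_cast hkey
    · rw [Fin.strictMono_iff_lt_succ]
      intro i
      rw [Pi.lt_def]
      constructor
      · intro e
        show cnt w ((i.castSucc : Fin (n+1)) : ℕ) e ≤ cnt w ((i.succ : Fin (n+1)) : ℕ) e
        rw [Fin.coe_castSucc, Fin.val_succ, cnt_succ w (i : ℕ) i.isLt e]
        omega
      · refine ⟨w i, ?_⟩
        show cnt w ((i.castSucc : Fin (n+1)) : ℕ) (w i) < cnt w ((i.succ : Fin (n+1)) : ℕ) (w i)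
        rw [Fin.coe_castSucc, Fin.val_succ, cnt_succ w (i : ℕ) i.isLt (w i)]
        simp [Fin.eta]
    · funext e
      show cnt w ((0 : Fin (n+1)) : ℕ) e = 0
      rw [Fin.val_zero, cnt_zero]
    · show ∑ e : E, cnt w ((Fin.last n : Fin (n+1)) : ℕ) e = n
      rw [Fin.val_last]
      exact cnt_total w n le_rfl
  constructor
  · -- InjOn
    intro w _ w' _ hf
    funext j
    have key : ∀ k : ℕ, k ≤ n → ∀ e, cnt w k e = cnt w' k e := by
      intro k hk e
      exact congrFun (congrFun hf ⟨k, Nat.lt_succ_of_le hk⟩) e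
    have h1 := key (j + 1) j.isLt (w j)
    rw [cnt_succ w (j : ℕ) j.isLt, cnt_succ w' (j : ℕ) j.isLt,
      key (j : ℕ) (le_of_lt j.isLt) (w j)] at h1
    simp only [Fin.eta, eq_self_iff_true, if_true] at h1
    by_contra hne
    rw [if_neg (fun h => hne h.symm)] at h1
    omega
  · -- SurjOn
    intro c hc
    obtain ⟨hlat, hmono, h0, hsum⟩ := hc
    have hle : ∀ j : Fin n, ∀ e, c j.castSucc e ≤ c j.succ e := by
      intro j e
      exact (le_of_lt (hmono (Fin.castSucc_lt_succ (i := j)))) e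
    have hstep : ∀ j : Fin n, (∑ e : E, c j.castSucc e) < ∑ e : E, c j.succ e := by
      intro j
      have h := hmono (Fin.castSucc_lt_succ (i := j))
      rw [Pi.lt_def] at h
      obtain ⟨hle', e₀, he₀⟩ := h
      exact Finset.sum_lt_sum (fun e _ => hle' e) ⟨e₀, Finset.mem_univ e₀, he₀⟩
    have D : ∀ m k, (h : k + m ≤ n) →
        (∑ e : E, c ⟨k, by omega⟩ e) + m ≤ ∑ e : E, c ⟨k + m, by omega⟩ e := by
      intro m
      induction m with
      | zero => intro k h; simp
      | succ m ih =>
        intro k h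
        have h1 := ih k (by omega)
        have h2 : (∑ e : E, c ⟨k + m, by omega⟩ e) < ∑ e : E, c ⟨k + (m+1), by omega⟩ e :=
          hstep ⟨k + m, by omega⟩
        omega
    have hsk : ∀ k, (hk : k ≤ n) → (∑ e : E, c ⟨k, Nat.lt_succ_of_le hk⟩ e) = k := by
      intro k hk
      have hA := D k 0 (by omega)
      have hB := D (n - k) k (by omega)
      have eA : (∑ e : E, c ⟨0 + k, by omega⟩ e)
          = ∑ e : E, c ⟨k, Nat.lt_succ_of_le hk⟩ e :=
        congrArg (fun i => ∑ e : E, c i e) (Fin.ext (Nat.zero_add k))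
      have eB : (∑ e : E, c ⟨k + (n - k), by omega⟩ e) = ∑ e : E, c (Fin.last n) e :=
        congrArg (fun i => ∑ e : E, c i e) (Fin.ext (by simp [Fin.val_last]; omega))
      have hs0 : (∑ e : E, c ⟨0, by omega⟩ e) = 0 := by
        rw [show c ⟨0, by omega⟩ = 0 from h0]
        simp
      omega
    have hstep1 : ∀ j : Fin n, ∑ e : E, c j.succ e = (∑ e : E, c j.castSucc e) + 1 := by
      intro j
      have h1 : (∑ e : E, c j.castSucc e) = (j : ℕ) := hsk (j : ℕ) (le_of_lt j.isLt)
      have h2 : (∑ e : E, c j.succ e) = (j : ℕ) + 1 := hsk ((j : ℕ) + 1) j.isLt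
      omega
    have hex : ∀ j : Fin n, ∃ e, c j.castSucc e < c j.succ e := by
      intro j
      have h := hmono (Fin.castSucc_lt_succ (i := j))
      rw [Pi.lt_def] at h
      exact h.2
    set w : Fin n → E := fun j => Classical.choose (hex j) with hwdef
    have hwstep : ∀ j : Fin n, ∀ e, c j.succ e = c j.castSucc e + if e = w j then 1 else 0 :=
      fun j => step_unique (hle j) (hstep1 j) (Classical.choose_spec (hex j))
    have hkey : ∀ k, (hk : k ≤ n) → ∀ e, cnt w k e = c ⟨k, Nat.lt_succ_of_le hk⟩ e := by
      intro k
      induction k with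
      | zero =>
        intro hk e
        rw [cnt_zero]
        exact congrFun h0.symm e
      | succ k ih =>
        intro hk e
        have hkn : k < n := hk
        have hc := cnt_succ w k hkn e
        have hi := ih (le_of_lt hkn) e
        have hws : c ⟨k + 1, Nat.lt_succ_of_le hk⟩ e
            = c ⟨k, Nat.lt_succ_of_le (le_of_lt hkn)⟩ e + if e = w ⟨k, hkn⟩ then 1 else 0 :=
          hwstep ⟨k, hkn⟩ e
        by_cases he : w ⟨k, hkn⟩ = e
        · rw [if_pos he] at hc
          rw [if_pos he.symm] at hws
          omega
        · rw [if_neg he] at hc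
          rw [if_neg (fun hh => he hh.symm)] at hws
          omega
    have hFw : (fun (i : Fin (n+1)) (e : E) => cnt w (i : ℕ) e) = c := by
      funext i e
      exact hkey (i : ℕ) (Nat.lt_succ_iff.mp i.isLt) e
    refine ⟨w, ?_, hFw⟩
    intro I hI
    have hJ : IsOrderIdeal (fun a b => r b a) Iᶜ := by
      intro a b hab hb
      simp only [Finset.mem_compl] at hb ⊢
      exact fun ha => hb (hI b a hab ha)
    have h1 := (hlat (Fin.last n)).2 Iᶜ hJ
    have h1' : ∑ e ∈ Iᶜ, c (Fin.last n) e ≤ Iᶜ.card := by simp only at h1; exact_mod_cast h1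
    have h2 : ∑ e ∈ I, c (Fin.last n) e + ∑ e ∈ Iᶜ, c (Fin.last n) e = n := by
      rw [Finset.sum_add_sum_compl]
      exact hsum
    have h3 : I.card + Iᶜ.card = n := by
      rw [Finset.card_add_card_compl, hcardE]
    have h4 : ∑ e ∈ I, cnt w n e = (Finset.univ.filter (fun j : Fin n => w j ∈ I)).card := by
      rw [sum_cnt]
      congr 1
      ext j
      simp [j.isLt]
    have h5 : ∑ e ∈ I, cnt w n e = ∑ e ∈ I, c (Fin.last n) e :=
      Finset.sum_congr rfl (fun e _ => hkey n le_rfl e)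
    omega
end

section
/- Let τ* be a chain preorder on E = {1,…,n} with vertex sizes r₁,…,r_p and partial sums s_i = r₁+⋯+r_i. The maximal elements of P_{τ*} are exactly the tuples (a₁,…,a_n) ∈ ℕ^n with a₁+⋯+a_n = n and a₁+⋯+a_{s_i} ≥ s_i for 1 ≤ i ≤ p−1, and these are in bijection with the lattice points (b₁,…,b_n) ∈ ℕ^n satisfying b₁+⋯+b_{s_i} < s_i for 1 ≤ i ≤ p, via b_j = #{ i ∈ {1,…,n} : a₁+⋯+a_i = j−1 }. -/
open Finset

private def PS {n : ℕ} (x : Fin n → ℕ) (m : ℕ) : ℕ :=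
  ∑ j ∈ univ.filter (fun j : Fin n => (j : ℕ) < m), x j

private def Phi {n : ℕ} (x : Fin n → ℕ) (j : Fin n) : ℕ :=
  (univ.filter (fun i : Fin n =>
    (∑ k ∈ univ.filter (fun k : Fin n => (k : ℕ) ≤ (i : ℕ)), x k) = (j : ℕ))).card

private lemma PS_mono {n : ℕ} (x : Fin n → ℕ) {m₁ m₂ : ℕ} (h : m₁ ≤ m₂) :
    PS x m₁ ≤ PS x m₂ := by
  apply Finset.sum_le_sum_of_subset
  intro j hj
  simp only [mem_filter, mem_univ, true_and] at hj ⊢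
  omega

private lemma PS_top {n : ℕ} (x : Fin n → ℕ) : PS x n = ∑ j, x j := by
  unfold PS
  congr 1
  apply Finset.filter_true_of_mem
  intro j _
  exact j.isLt

private lemma PS_succ {n : ℕ} (x : Fin n → ℕ) (i : Fin n) :
    PS x ((i : ℕ) + 1) = PS x (i : ℕ) + x i := by
  unfold PS
  have h : (univ.filter (fun j : Fin n => (j : ℕ) < (i : ℕ) + 1)) =
      insert i (univ.filter (fun j : Fin n => (j : ℕ) < (i : ℕ))) := by
    ext k
    simp only [mem_filter, mem_univ, true_and, mem_insert, Fin.ext_iff]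
    omega
  rw [h, Finset.sum_insert (by simp)]
  ring

private lemma Phi_def {n : ℕ} (x : Fin n → ℕ) (j : Fin n) :
    Phi x j = (univ.filter (fun i : Fin n => PS x ((i : ℕ) + 1) = (j : ℕ))).card := by
  unfold Phi PS
  congr 1
  apply Finset.filter_congr
  intro i _
  have h : (univ.filter (fun k : Fin n => (k : ℕ) ≤ (i : ℕ))) =
      (univ.filter (fun k : Fin n => (k : ℕ) < (i : ℕ) + 1)) := by
    ext k; simp only [mem_filter, mem_univ, true_and]; omega
  rw [h]

private lemma sum_fin_lt (n m : ℕ) (h : m ≤ n) (g : ℕ → ℕ) :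
    ∑ j ∈ univ.filter (fun j : Fin n => (j : ℕ) < m), g (j : ℕ) = ∑ b ∈ range m, g b := by
  rw [Finset.sum_filter, Fin.sum_univ_eq_sum_range (fun b => if b < m then g b else 0) n,
    ← Finset.sum_filter]
  congr 1
  ext b
  simp only [mem_filter, mem_range]
  omega

private lemma card_fin_lt (n v : ℕ) (h : v ≤ n) :
    (univ.filter (fun k : Fin n => (k : ℕ) < v)).card = v := by
  rw [Finset.card_eq_sum_ones, sum_fin_lt n v h (fun _ => 1), Finset.sum_const,
    Finset.card_range, smul_eq_mul, mul_one]

private lemma card_fin_Ico (n lo hi : ℕ) (h1 : lo ≤ hi) (h2 : hi ≤ n) :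
    (univ.filter (fun k : Fin n => lo ≤ (k : ℕ) ∧ (k : ℕ) < hi)).card = hi - lo := by
  have key : (univ.filter (fun k : Fin n => lo ≤ (k : ℕ) ∧ (k : ℕ) < hi)) =
      (univ.filter (fun k : Fin n => (k : ℕ) < hi)) \
      (univ.filter (fun k : Fin n => (k : ℕ) < lo)) := by
    ext k
    simp only [mem_filter, mem_univ, true_and, mem_sdiff]
    omega
  rw [key, Finset.card_sdiff_of_subset]
  · rw [card_fin_lt n hi h2, card_fin_lt n lo (le_trans h1 h2)]
  · intro k hk
    simp only [mem_filter, mem_univ, true_and] at hk ⊢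
    omega

private lemma PS_Phi {n : ℕ} (x : Fin n → ℕ) (m : ℕ) (hm : m ≤ n) :
    PS (Phi x) m = (univ.filter (fun k : Fin n => PS x ((k : ℕ) + 1) < m)).card := by
  have hPhi : PS (Phi x) m =
      ∑ j ∈ univ.filter (fun j : Fin n => (j : ℕ) < m),
        (univ.filter (fun i : Fin n => PS x ((i : ℕ) + 1) = (j : ℕ))).card := by
    unfold PS
    exact Finset.sum_congr rfl (fun j _ => Phi_def x j)
  rw [hPhi, sum_fin_lt n m hm (fun b => (univ.filter (fun i : Fin n => PS x ((i : ℕ) + 1) = b)).card)]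
  rw [Finset.card_eq_sum_card_fiberwise
    (f := fun k : Fin n => PS x ((k : ℕ) + 1)) (t := range m)
    (fun k hk => mem_range.mpr (by simpa using hk))]
  apply Finset.sum_congr rfl
  intro b hb
  congr 1
  ext k
  simp only [mem_filter, mem_univ, true_and]
  have := mem_range.mp hb
  omega

private lemma count_eq_iff {n : ℕ} (x : Fin n → ℕ) (i : Fin n) (k : ℕ) :
    (univ.filter (fun k' : Fin n => PS x ((k' : ℕ) + 1) ≤ k)).card = (i : ℕ) ↔
      (PS x (i : ℕ) ≤ k ∧ k < PS x ((i : ℕ) + 1)) := by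
  constructor
  · intro h
    by_contra hc
    rcases Decidable.not_and_iff_or_not.mp hc with h1 | h2
    · -- k < PS x i, so card ≤ i - 1 < i
      push_neg at h1
      have hi1 : 1 ≤ (i : ℕ) := by
        by_contra h0
        have : (i : ℕ) = 0 := by omega
        rw [this] at h1
        unfold PS at h1
        simp at h1
      have hsub : (univ.filter (fun k' : Fin n => PS x ((k' : ℕ) + 1) ≤ k)) ⊆
          (univ.filter (fun k' : Fin n => (k' : ℕ) < (i : ℕ) - 1)) := by
        intro k' hk'
        simp only [mem_filter, mem_univ, true_and] at hk' ⊢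
        by_contra hge
        have : (i : ℕ) ≤ (k' : ℕ) + 1 := by omega
        have := PS_mono x this
        omega
      have := Finset.card_le_card hsub
      rw [card_fin_lt n ((i : ℕ) - 1) (by omega)] at this
      omega
    · -- PS x (i+1) ≤ k, so card ≥ i + 1 > i
      push_neg at h2
      have hsub : (univ.filter (fun k' : Fin n => (k' : ℕ) < (i : ℕ) + 1)) ⊆
          (univ.filter (fun k' : Fin n => PS x ((k' : ℕ) + 1) ≤ k)) := by
        intro k' hk'
        simp only [mem_filter, mem_univ, true_and] at hk' ⊢
        exact le_trans (PS_mono x (by omega)) h2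
      have := Finset.card_le_card hsub
      rw [card_fin_lt n ((i : ℕ) + 1) i.isLt] at this
      omega
  · rintro ⟨h1, h2⟩
    have key : (univ.filter (fun k' : Fin n => PS x ((k' : ℕ) + 1) ≤ k)) =
        (univ.filter (fun k' : Fin n => (k' : ℕ) < (i : ℕ))) := by
      ext k'
      simp only [mem_filter, mem_univ, true_and]
      constructor
      · intro h
        by_contra hge
        have : (i : ℕ) + 1 ≤ (k' : ℕ) + 1 := by omega
        have := PS_mono x this
        omega
      · intro h
        exact le_trans (PS_mono x (by omega)) h1
    rw [key, card_fin_lt n (i : ℕ) i.isLt.le]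

private lemma Phi_Phi {n : ℕ} (x : Fin n → ℕ) (hx : ∑ j, x j ≤ n) : Phi (Phi x) = x := by
  funext i
  rw [Phi_def]
  have hstep : ∀ k : Fin n, PS (Phi x) ((k : ℕ) + 1) =
      (univ.filter (fun k' : Fin n => PS x ((k' : ℕ) + 1) ≤ (k : ℕ))).card := by
    intro k
    rw [PS_Phi x ((k : ℕ) + 1) k.isLt]
    congr 1
    ext k'
    simp only [mem_filter, mem_univ, true_and]
    omega
  have hcongr : (univ.filter (fun k : Fin n => PS (Phi x) ((k : ℕ) + 1) = (i : ℕ))) =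
      (univ.filter (fun k : Fin n => PS x (i : ℕ) ≤ (k : ℕ) ∧ (k : ℕ) < PS x ((i : ℕ) + 1))) := by
    ext k
    simp only [mem_filter, mem_univ, true_and]
    rw [hstep k]
    exact count_eq_iff x i (k : ℕ)
  rw [hcongr, card_fin_Ico n _ _ (PS_mono x (by omega))
    (le_trans (PS_mono x i.isLt) (le_of_eq_of_le (PS_top x) hx))]
  rw [PS_succ]
  omega

/-- for a chain preorder with vertex sizes `r₁,…,r_p` and partial
sums `s i` (`s 0 = 0`, `s p = n`), the maximal elements of the poset of lattice
points of the dual polytope `Q_{τ*}` (given by `x_{s_i+1}+⋯+x_n ≤ n−s_i`,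
`0 ≤ i ≤ p−1`) are exactly the tuples `a ∈ ℕ^n` with total sum `n` and
`a₁+⋯+a_{s_i} ≥ s_i` for `1 ≤ i ≤ p−1`, and the map
`b_j = #{i : a₁+⋯+a_i = j−1}` is a bijection from these onto the tuples
`b ∈ ℕ^n` with `b₁+⋯+b_{s_i} < s_i` for `1 ≤ i ≤ p`. -/
theorem chain_maximal_elements_bijection (n p : ℕ) (hp : 1 ≤ p) (s : ℕ → ℕ)
    (hs0 : s 0 = 0) (hsp : s p = n) (hmono : ∀ i < p, s i < s (i + 1)) :
    ({a : Fin n → ℕ |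
        (∀ i < p, ∑ j ∈ Finset.univ.filter (fun j : Fin n => s i ≤ (j : ℕ)), a j ≤ n - s i) ∧
        ∀ c : Fin n → ℕ,
          (∀ i < p, ∑ j ∈ Finset.univ.filter (fun j : Fin n => s i ≤ (j : ℕ)), c j ≤ n - s i) →
          (∀ j, a j ≤ c j) → c = a} =
      {a : Fin n → ℕ | ∑ j, a j = n ∧
        ∀ i, 1 ≤ i → i ≤ p - 1 →
          s i ≤ ∑ j ∈ Finset.univ.filter (fun j : Fin n => (j : ℕ) < s i), a j}) ∧
    Set.BijOn
      (fun (a : Fin n → ℕ) (j : Fin n) =>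
        (Finset.univ.filter (fun i : Fin n =>
          (∑ k ∈ Finset.univ.filter (fun k : Fin n => (k : ℕ) ≤ (i : ℕ)), a k) = (j : ℕ))).card)
      {a : Fin n → ℕ | ∑ j, a j = n ∧
        ∀ i, 1 ≤ i → i ≤ p - 1 →
          s i ≤ ∑ j ∈ Finset.univ.filter (fun j : Fin n => (j : ℕ) < s i), a j}
      {b : Fin n → ℕ | ∀ i, 1 ≤ i → i ≤ p →
        ∑ j ∈ Finset.univ.filter (fun j : Fin n => (j : ℕ) < s i), b j < s i} := by
  have smono : ∀ i j, i ≤ j → j ≤ p → s i ≤ s j := by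
    intro i j hij hjp
    induction j with
    | zero =>
      have : i = 0 := by omega
      subst this; exact le_rfl
    | succ j ih =>
      rcases Nat.lt_or_ge i (j + 1) with h | h
      · exact le_trans (ih (by omega) (by omega)) (le_of_lt (hmono j (by omega)))
      · have : i = j + 1 := by omega
        subst this; exact le_rfl
  have hsn : ∀ i, i ≤ p → s i ≤ n := fun i hi => hsp ▸ smono i p hi le_rfl
  have hs1 : 0 < s 1 := hs0 ▸ hmono 0 hp
  have hn : 1 ≤ n := lt_of_lt_of_le hs1 (hsn 1 hp)
  have hs_pos : ∀ i, 1 ≤ i → i ≤ p → 1 ≤ s i :=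
    fun i h1 h2 => lt_of_lt_of_le hs1 (smono 1 i h1 h2)
  have suffix_eq : ∀ (x : Fin n → ℕ) (m : ℕ),
      PS x m + ∑ j ∈ univ.filter (fun j : Fin n => m ≤ (j : ℕ)), x j = ∑ j, x j := by
    intro x m
    have h : (univ.filter (fun j : Fin n => m ≤ (j : ℕ))) =
        (univ.filter (fun j : Fin n => ¬ (j : ℕ) < m)) := by
      ext j; simp only [mem_filter, mem_univ, true_and, not_lt]
    rw [h]
    exact Finset.sum_filter_add_sum_filter_not univ _ x
  constructor
  · -- Part 1 : set equality
    ext a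
    simp only [Set.mem_setOf_eq]
    constructor
    · rintro ⟨hfeas, hmax⟩
      set e : Fin n := ⟨0, hn⟩ with he
      have htot : ∑ j, a j = n := by
        have hle : ∀ j, a j ≤ (fun j => a j + if j = e then 1 else 0) j :=
          fun j => Nat.le_add_right _ _
        have hne : (fun j => a j + if j = e then 1 else 0) ≠ a := by
          intro h
          have h2 : a e + 1 = a e := by simpa using congrFun h e
          omega
        have hinfeas : ¬ (∀ i < p, ∑ j ∈ univ.filter (fun j : Fin n => s i ≤ (j : ℕ)),
            (fun j => a j + if j = e then 1 else 0) j ≤ n - s i) := by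
          intro h
          exact hne (hmax _ h hle)
        push_neg at hinfeas
        obtain ⟨i, hip, hviol⟩ := hinfeas
        have hsum : ∑ j ∈ univ.filter (fun j : Fin n => s i ≤ (j : ℕ)),
            (a j + if j = e then 1 else 0) =
            (∑ j ∈ univ.filter (fun j : Fin n => s i ≤ (j : ℕ)), a j) +
            (if s i ≤ 0 then 1 else 0) := by
          rw [Finset.sum_add_distrib]
          congr 1
          rw [Finset.sum_ite_eq' _ e (fun _ => 1)]
          simp [he]
        have hfi := hfeas i hip
        by_cases h0 : s i ≤ 0
        · rw [if_pos h0] at hsum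
          have huniv : (univ.filter (fun j : Fin n => s i ≤ (j : ℕ))) = univ := by
            apply filter_true_of_mem
            intro j _
            omega
          rw [huniv] at hsum hviol hfi
          omega
        · rw [if_neg h0] at hsum
          omega
      refine ⟨htot, ?_⟩
      intro i h1i hip1
      have hip : i < p := by omega
      have hfi := hfeas i hip
      have hsplit := suffix_eq a (s i)
      rw [htot] at hsplit
      have hsin := hsn i (le_of_lt hip)
      show s i ≤ PS a (s i)
      omega
    · rintro ⟨htot, hpre⟩
      have hPS : ∀ i, i < p → s i ≤ PS a (s i) := by
        intro i hip
        by_cases h1 : 1 ≤ i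
        · exact hpre i h1 (by omega)
        · have : i = 0 := by omega
          subst this
          rw [hs0]
          exact Nat.zero_le _
      constructor
      · intro i hip
        have hsplit := suffix_eq a (s i)
        rw [htot] at hsplit
        have h1 := hPS i hip
        have h2 := hsn i (le_of_lt hip)
        omega
      · intro c hcfeas hle
        have hcle : ∑ j, c j ≤ n := by
          have h := hcfeas 0 hp
          rw [hs0] at h
          have huniv : (univ.filter (fun j : Fin n => 0 ≤ (j : ℕ))) = univ := by
            apply filter_true_of_mem
            intro j _
            exact Nat.zero_le _
          rw [huniv] at h
          omega
        have hsum_eq : ∑ j, c j = ∑ j, a j := by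
          have h1 : ∑ j, a j ≤ ∑ j, c j := Finset.sum_le_sum fun j _ => hle j
          omega
        funext j
        exact (((Finset.sum_eq_sum_iff_of_le (fun i _ => hle i)).mp hsum_eq.symm) j
          (mem_univ j)).symm
  · -- Part 2 : bijection
    refine Set.InvOn.bijOn (f' := Phi) ⟨?_, ?_⟩ ?_ ?_
    · -- LeftInvOn
      intro a ha
      exact Phi_Phi a (le_of_eq ha.1)
    · -- RightInvOn
      intro b hb
      have hb' : ∀ i, 1 ≤ i → i ≤ p → PS b (s i) < s i := hb
      have hSb : PS b n < n := by
        have := hb' p hp le_rfl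
        rwa [hsp] at this
      have hle : ∑ j, b j ≤ n := by rw [← PS_top b]; omega
      exact Phi_Phi b hle
    · -- MapsTo forward
      intro a ha
      obtain ⟨ha1, ha2⟩ := ha
      have ha1' : PS a n = n := by rw [PS_top]; exact ha1
      have ha2' : ∀ i, 1 ≤ i → i ≤ p - 1 → s i ≤ PS a (s i) := ha2
      show Phi a ∈ _
      simp only [Set.mem_setOf_eq]
      intro i h1i hip
      show PS (Phi a) (s i) < s i
      rw [PS_Phi a (s i) (hsn i hip)]
      by_cases hiplt : i < p
      · have hkey : (univ.filter (fun k : Fin n => PS a ((k : ℕ) + 1) < s i)) ⊆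
            (univ.filter (fun k : Fin n => (k : ℕ) < s i - 1)) := by
          intro k hk
          simp only [mem_filter, mem_univ, true_and] at hk ⊢
          by_contra hge
          have h1 : s i ≤ (k : ℕ) + 1 := by omega
          have := le_trans (ha2' i h1i (by omega)) (PS_mono a h1)
          omega
        have hcard := Finset.card_le_card hkey
        rw [card_fin_lt n (s i - 1) (by have := hsn i hip; omega)] at hcard
        have := hs_pos i h1i hip
        omega
      · have hie : i = p := by omega
        subst hie
        rw [hsp]
        have hsub : (univ.filter (fun k : Fin n => PS a ((k : ℕ) + 1) < n)) ⊆
            univ.erase ⟨n - 1, by omega⟩ := by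
          intro k hk
          simp only [mem_filter, mem_univ, true_and] at hk
          apply mem_erase.mpr
          refine ⟨?_, mem_univ k⟩
          intro hke
          rw [hke] at hk
          simp only at hk
          have hnn : n - 1 + 1 = n := by omega
          rw [hnn] at hk
          omega
        have hcard := Finset.card_le_card hsub
        rw [Finset.card_erase_of_mem (mem_univ _), card_univ, Fintype.card_fin] at hcard
        omega
    · -- MapsTo backward
      intro b hb
      have hb' : ∀ i, 1 ≤ i → i ≤ p → PS b (s i) < s i := hb
      have hSb : PS b n < n := by
        have := hb' p hp le_rfl
        rwa [hsp] at this
      show Phi b ∈ _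
      simp only [Set.mem_setOf_eq]
      constructor
      · rw [← PS_top (Phi b), PS_Phi b n le_rfl]
        have huniv : (univ.filter (fun k : Fin n => PS b ((k : ℕ) + 1) < n)) = univ := by
          apply filter_true_of_mem
          intro k _
          exact lt_of_le_of_lt (PS_mono b k.isLt) hSb
        rw [huniv, card_univ, Fintype.card_fin]
      · intro i h1i hip
        have hipp : i ≤ p := by omega
        show s i ≤ PS (Phi b) (s i)
        rw [PS_Phi b (s i) (hsn i hipp)]
        have hsub : (univ.filter (fun k : Fin n => (k : ℕ) < s i)) ⊆
            (univ.filter (fun k : Fin n => PS b ((k : ℕ) + 1) < s i)) := by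
          intro k hk
          simp only [mem_filter, mem_univ, true_and] at hk ⊢
          exact lt_of_le_of_lt (PS_mono b (by omega)) (hb' i h1i hipp)
        have hcard := Finset.card_le_card hsub
        rwa [card_fin_lt n (s i) (hsn i hipp)] at hcard
end

section
/- Let τ be a chain preorder on {1,…,n} with partial sums s₁ < s₂ < ⋯ < s_p = n, and let k, ℓ ∈ ℕ. The number of points (a₁,…,a_{nk}) ∈ ℕ^{nk} satisfying a₁+⋯+a_{s_i k} ≤ s_i ℓ for 1 ≤ i ≤ p equals the number of points (b₁,…,b_{nℓ}) ∈ ℕ^{nℓ} satisfying b_{s_i ℓ + 1}+⋯+b_{nℓ} ≤ (n−s_i)k for 0 ≤ i ≤ p−1. -/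
namespace CMEZD
open Finset

/-- prefix sum of `a` up to (exclusive) index `m`. -/
def PS (K : ℕ) (a : Fin K → ℕ) (m : ℕ) : ℕ :=
  ∑ t ∈ Finset.univ.filter (fun t : Fin K => (t : ℕ) < m), a t

/-- tail sum of `b` from index `m` (inclusive). -/
def TS (L : ℕ) (b : Fin L → ℕ) (m : ℕ) : ℕ :=
  ∑ j ∈ Finset.univ.filter (fun j : Fin L => m ≤ (j : ℕ)), b j

/-- the conjugation map. -/
def Fm (K L : ℕ) (a : Fin K → ℕ) : Fin L → ℕ :=
  fun j => (Finset.univ.filter (fun t : Fin K => PS K a ((t : ℕ) + 1) = (j : ℕ) + 1)).card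

def SF (K L : ℕ) (b : Fin L → ℕ) (m : ℕ) : ℕ :=
  (Finset.univ.filter (fun j : Fin L => K - m < TS L b (j : ℕ))).card

/-- the inverse conjugation map. -/
def Gm (K L : ℕ) (b : Fin L → ℕ) : Fin K → ℕ :=
  fun t => SF K L b ((t : ℕ) + 1) - SF K L b (t : ℕ)

variable {K L : ℕ}

lemma PS_mono (a : Fin K → ℕ) : Monotone (PS K a) := by
  intro m m' h
  apply Finset.sum_le_sum_of_subset
  intro x hx
  simp only [Finset.mem_filter, Finset.mem_univ, true_and] at hx ⊢
  omega

lemma PS_succ (a : Fin K → ℕ) (t : Fin K) :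
    PS K a ((t : ℕ) + 1) = PS K a (t : ℕ) + a t := by
  unfold PS
  have : (Finset.univ.filter (fun x : Fin K => (x : ℕ) < (t : ℕ) + 1)) =
      insert t (Finset.univ.filter (fun x : Fin K => (x : ℕ) < (t : ℕ))) := by
    ext x
    simp [Fin.ext_iff]
    omega
  rw [this, Finset.sum_insert (by simp)]
  ring

lemma PS_top (a : Fin K → ℕ) {m : ℕ} (h : K ≤ m) : PS K a m = ∑ t, a t := by
  unfold PS
  congr 1
  apply Finset.filter_true_of_mem
  intro x _
  exact lt_of_lt_of_le x.isLt h

lemma TS_anti (b : Fin L → ℕ) : Antitone (TS L b) := by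
  intro m m' h
  apply Finset.sum_le_sum_of_subset
  intro x hx
  simp only [Finset.mem_filter, Finset.mem_univ, true_and] at hx ⊢
  omega

lemma TS_succ (b : Fin L → ℕ) (j : Fin L) :
    TS L b (j : ℕ) = b j + TS L b ((j : ℕ) + 1) := by
  unfold TS
  have : (Finset.univ.filter (fun x : Fin L => (j : ℕ) ≤ (x : ℕ))) =
      insert j (Finset.univ.filter (fun x : Fin L => (j : ℕ) + 1 ≤ (x : ℕ))) := by
    ext x
    simp [Fin.ext_iff]
    omega
  rw [this, Finset.sum_insert (by simp)]

lemma TS_zero (b : Fin L → ℕ) : TS L b 0 = ∑ j, b j := by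
  unfold TS
  congr 1
  apply Finset.filter_true_of_mem
  intro x _
  exact Nat.zero_le _

lemma TS_eq_zero (b : Fin L → ℕ) {m : ℕ} (h : L ≤ m) : TS L b m = 0 := by
  unfold TS
  rw [Finset.filter_false_of_mem, Finset.sum_empty]
  intro x _
  push_neg
  exact lt_of_lt_of_le x.isLt h

lemma card_lt_val {v : ℕ} (h : v ≤ L) :
    (Finset.univ.filter (fun j : Fin L => (j : ℕ) < v)).card = v := by
  rw [Finset.card_filter]
  rw [Fin.sum_univ_eq_sum_range (fun j => if j < v then 1 else 0)]
  rw [← Finset.card_filter]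
  have : (Finset.range L).filter (fun j => j < v) = Finset.range v := by
    ext x; simp; omega
  rw [this, Finset.card_range]

lemma card_ge_val {c : ℕ} (h : c ≤ K) :
    (Finset.univ.filter (fun t : Fin K => c ≤ (t : ℕ))).card = K - c := by
  rw [Finset.card_filter]
  rw [Fin.sum_univ_eq_sum_range (fun t => if c ≤ t then 1 else 0)]
  rw [← Finset.card_filter]
  have : (Finset.range K).filter (fun t => c ≤ t) = Finset.Ico c K := by
    ext x; simp; omega
  rw [this, Nat.card_Ico]


lemma card_upward (P : Fin K → Prop) [DecidablePred P]
    (hup : ∀ t t' : Fin K, (t : ℕ) ≤ (t' : ℕ) → P t → P t') {t₀ : ℕ} (h : t₀ < K) :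
    t₀ < (Finset.univ.filter P).card ↔ P ⟨K - 1 - t₀, by omega⟩ := by
  constructor
  · intro hc
    by_contra hP
    have hsub : (Finset.univ.filter P) ⊆
        (Finset.univ.filter (fun t : Fin K => K - t₀ ≤ (t : ℕ))) := by
      intro x hx
      simp only [Finset.mem_filter, Finset.mem_univ, true_and] at hx ⊢
      by_contra hlt
      push_neg at hlt
      exact hP (hup x ⟨K - 1 - t₀, by omega⟩ (by simp only [Fin.val_mk]; omega) hx)
    have := Finset.card_le_card hsub
    rw [card_ge_val (by omega)] at this
    omega
  · intro hP
    have hsub : (Finset.univ.filter (fun t : Fin K => K - 1 - t₀ ≤ (t : ℕ))) ⊆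
        (Finset.univ.filter P) := by
      intro x hx
      simp only [Finset.mem_filter, Finset.mem_univ, true_and] at hx ⊢
      exact hup ⟨K - 1 - t₀, by omega⟩ x (by simp only [Fin.val_mk]; omega) hP
    have := Finset.card_le_card hsub
    rw [card_ge_val (by omega)] at this
    omega

lemma card_downward (P : Fin L → Prop) [DecidablePred P]
    (hdn : ∀ j j' : Fin L, (j : ℕ) ≤ (j' : ℕ) → P j' → P j) (j₀ : Fin L) :
    (j₀ : ℕ) < (Finset.univ.filter P).card ↔ P j₀ := by
  constructor
  · intro hc
    by_contra hP
    have hsub : (Finset.univ.filter P) ⊆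
        (Finset.univ.filter (fun j : Fin L => (j : ℕ) < (j₀ : ℕ))) := by
      intro x hx
      simp only [Finset.mem_filter, Finset.mem_univ, true_and] at hx ⊢
      by_contra hlt
      push_neg at hlt
      exact hP (hdn j₀ x hlt hx)
    have := Finset.card_le_card hsub
    rw [card_lt_val (le_of_lt j₀.isLt)] at this
    omega
  · intro hP
    have hsub : (Finset.univ.filter (fun j : Fin L => (j : ℕ) < (j₀ : ℕ) + 1)) ⊆
        (Finset.univ.filter P) := by
      intro x hx
      simp only [Finset.mem_filter, Finset.mem_univ, true_and] at hx ⊢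
      exact hdn x j₀ (by omega) hP
    have := Finset.card_le_card hsub
    rw [card_lt_val j₀.isLt] at this
    omega


/-- Tail sums of the conjugate count indices whose prefix sum exceeds the threshold. -/
lemma TS_Fm (a : Fin K → ℕ) (hL : PS K a K ≤ L) (d : ℕ) :
    TS L (Fm K L a) d =
      (Finset.univ.filter (fun t : Fin K => d < PS K a ((t : ℕ) + 1))).card := by
  classical
  have hg : ∀ t : Fin K, PS K a ((t : ℕ) + 1) ≤ L := fun t =>
    le_trans (PS_mono a (by omega : (t : ℕ) + 1 ≤ K)) hL
  -- rewrite LHS as a sum over (range L).filter (d ≤ ·)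
  have lhs_eq : TS L (Fm K L a) d =
      ∑ j ∈ (Finset.range L).filter (fun j => d ≤ j),
        (Finset.univ.filter (fun t : Fin K => PS K a ((t : ℕ) + 1) = j + 1)).card := by
    unfold TS Fm
    rw [Finset.sum_filter, Fin.sum_univ_eq_sum_range
      (fun j => if d ≤ j then (Finset.univ.filter
        (fun t : Fin K => PS K a ((t : ℕ) + 1) = j + 1)).card else 0), ← Finset.sum_filter]
  rw [lhs_eq]
  rw [Finset.card_eq_sum_card_fiberwise
    (f := fun t : Fin K => PS K a ((t : ℕ) + 1) - 1)
    (t := (Finset.range L).filter (fun j => d ≤ j))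
    (by
      intro x hx
      simp only [Finset.mem_coe, Finset.mem_filter, Finset.mem_univ, true_and, Finset.mem_range] at hx ⊢
      have := hg x
      omega)]
  apply Finset.sum_congr rfl
  intro j hj
  simp only [Finset.mem_filter, Finset.mem_range] at hj
  congr 1
  ext x
  simp only [Finset.mem_filter, Finset.mem_univ, true_and]
  omega

lemma SF_mono (b : Fin L → ℕ) : Monotone (SF K L b) := by
  intro m m' h
  apply Finset.card_le_card
  intro x hx
  simp only [Finset.mem_filter, Finset.mem_univ, true_and] at hx ⊢
  omega

lemma SF_le (b : Fin L → ℕ) (m : ℕ) : SF K L b m ≤ L := by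
  calc (Finset.univ.filter _).card ≤ (Finset.univ : Finset (Fin L)).card :=
        Finset.card_filter_le _ _
    _ = L := by simp

lemma SF_zero (b : Fin L → ℕ) (hb : TS L b 0 ≤ K) : SF K L b 0 = 0 := by
  unfold SF
  rw [Finset.card_eq_zero, Finset.filter_false_of_mem]
  intro x _
  have := TS_anti b (Nat.zero_le (x : ℕ))
  omega

lemma PS_Gm (b : Fin L → ℕ) (hb : TS L b 0 ≤ K) :
    ∀ m ≤ K, PS K (Gm K L b) m = SF K L b m := by
  intro m
  induction m with
  | zero =>
    intro _
    rw [SF_zero b hb]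
    unfold PS
    rw [Finset.filter_false_of_mem (by intro x _; omega), Finset.sum_empty]
  | succ m ih =>
    intro hm
    have hmK : m < K := by omega
    have : PS K (Gm K L b) (m + 1) = PS K (Gm K L b) m + Gm K L b ⟨m, hmK⟩ :=
      PS_succ (Gm K L b) ⟨m, hmK⟩
    rw [this, ih (by omega)]
    unfold Gm
    simp only [Fin.val_mk]
    have := SF_mono (K := K) b (by omega : m ≤ m + 1)
    omega

/-- `SF` of the conjugate recovers the prefix sums. -/
lemma SF_Fm (a : Fin K → ℕ) (hL : PS K a K ≤ L) :
    ∀ m ≤ K, SF K L (Fm K L a) m = PS K a m := by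
  intro m hm
  rcases Nat.eq_zero_or_pos m with hm0 | hm1
  · subst hm0
    have h1 : SF K L (Fm K L a) 0 = 0 := by
      apply SF_zero
      rw [TS_Fm a hL 0]
      calc (Finset.univ.filter _).card ≤ (Finset.univ : Finset (Fin K)).card :=
            Finset.card_filter_le _ _
        _ = K := by simp
    rw [h1]
    unfold PS
    rw [Finset.filter_false_of_mem (by intro x _; omega), Finset.sum_empty]
  · unfold SF
    have hcond : ∀ j : Fin L,
        (K - m < TS L (Fm K L a) (j : ℕ)) ↔ ((j : ℕ) < PS K a m) := by
      intro j
      rw [TS_Fm a hL (j : ℕ)]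
      have := card_upward (K := K) (fun t : Fin K => (j : ℕ) < PS K a ((t : ℕ) + 1))
        (by
          intro t t' htt hPt
          exact lt_of_lt_of_le hPt (PS_mono a (by omega)))
        (t₀ := K - m) (by omega)
      rw [this]
      have hval : K - 1 - (K - m) = m - 1 := by omega
      simp only [hval]
      have : (m - 1) + 1 = m := by omega
      rw [this]
    rw [Finset.filter_congr (fun j _ => by rw [hcond j])]
    exact card_lt_val (le_trans (PS_mono a hm) hL)

lemma card_Ksub (V : ℕ) (hV : V ≤ K) :
    (Finset.univ.filter (fun t : Fin K => K - ((t : ℕ) + 1) < V)).card = V := by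
  have : ∀ t : Fin K, (K - ((t : ℕ) + 1) < V) ↔ (K - V ≤ (t : ℕ)) := by
    intro t
    have := t.isLt
    omega
  rw [Finset.filter_congr (fun t _ => by rw [this t])]
  rw [card_ge_val (by omega)]
  omega

/-- applying the conjugation to `Gm b` recovers the tail sums of `b`. -/
lemma count_SF_gt (b : Fin L → ℕ) (hb : TS L b 0 ≤ K) (d : ℕ) :
    (Finset.univ.filter (fun t : Fin K => d < SF K L b ((t : ℕ) + 1))).card = TS L b d := by
  rcases lt_or_ge d L with hd | hd
  · have hcond : ∀ t : Fin K, (d < SF K L b ((t : ℕ) + 1)) ↔ (K - ((t : ℕ) + 1) < TS L b d) := by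
      intro t
      unfold SF
      exact card_downward (fun j : Fin L => K - ((t : ℕ) + 1) < TS L b (j : ℕ))
        (by
          intro j j' hjj hP
          exact lt_of_lt_of_le hP (TS_anti b hjj))
        ⟨d, hd⟩
    rw [Finset.filter_congr (fun t _ => by rw [hcond t])]
    exact card_Ksub _ (le_trans (TS_anti b (Nat.zero_le d)) hb)
  · rw [TS_eq_zero b hd, Finset.card_eq_zero, Finset.filter_false_of_mem]
    intro x _
    have := SF_le (K := K) b ((x : ℕ) + 1)
    omega

lemma card_fiber_sub (f : Fin K → ℕ) (j : ℕ) :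
    (Finset.univ.filter (fun t : Fin K => f t = j + 1)).card =
      (Finset.univ.filter (fun t : Fin K => j < f t)).card -
        (Finset.univ.filter (fun t : Fin K => j + 1 < f t)).card := by
  have hset : (Finset.univ.filter (fun t : Fin K => f t = j + 1)) =
      (Finset.univ.filter (fun t : Fin K => j < f t)) \
        (Finset.univ.filter (fun t : Fin K => j + 1 < f t)) := by
    ext x
    simp only [Finset.mem_filter, Finset.mem_univ, true_and, Finset.mem_sdiff]
    omega
  rw [hset, Finset.card_sdiff_of_subset]
  intro x hx
  simp only [Finset.mem_filter, Finset.mem_univ, true_and] at hx ⊢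
  omega


end CMEZD

/-- for a chain preorder with partial sums
`0 = s₀ < s₁ < ⋯ < s_p = n` and `k, ℓ ∈ ℕ`, the number of points
`a ∈ ℕ^{nk}` with `a₁+⋯+a_{s_i k} ≤ s_i ℓ` for `1 ≤ i ≤ p` equals the number
of points `b ∈ ℕ^{nℓ}` with `b_{s_i ℓ+1}+⋯+b_{nℓ} ≤ (n−s_i)k` for
`0 ≤ i ≤ p−1`. -/
theorem chain_matrix_ehrhart_zeta_duality (n p k l : ℕ) (hp : 1 ≤ p) (s : ℕ → ℕ)
    (hs0 : s 0 = 0) (hsp : s p = n) (hmono : ∀ i < p, s i < s (i + 1)) :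
    Nat.card {a : Fin (n * k) → ℕ //
        ∀ i, 1 ≤ i → i ≤ p →
          ∑ j ∈ Finset.univ.filter (fun j : Fin (n * k) => (j : ℕ) < s i * k), a j ≤ s i * l} =
      Nat.card {b : Fin (n * l) → ℕ //
        ∀ i < p,
          ∑ j ∈ Finset.univ.filter (fun j : Fin (n * l) => s i * l ≤ (j : ℕ)), b j ≤
            (n - s i) * k} := by
  classical
  open CMEZD in
  set K := n * k with hKdef
  set L := n * l with hLdef
  -- monotonicity of `s` on `[0, p]`
  have hchain : ∀ j, j ≤ p → ∀ i, i ≤ j → s i ≤ s j := by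
    intro j
    induction j with
    | zero =>
      intro _ i hi
      have : i = 0 := by omega
      subst this; exact le_rfl
    | succ j ih =>
      intro hj i hi
      rcases Nat.lt_or_ge i (j + 1) with h | h
      · exact le_trans (ih (by omega) i (by omega)) (le_of_lt (hmono j (by omega)))
      · have : i = j + 1 := by omega
        subst this; exact le_rfl
  have hsle : ∀ i, i ≤ p → s i ≤ n := fun i hi => hsp ▸ hchain p le_rfl i hi
  -- repackage the defining conditions
  have condA : ∀ a : Fin K → ℕ,
      (∀ i, 1 ≤ i → i ≤ p →
        ∑ j ∈ Finset.univ.filter (fun j : Fin K => (j : ℕ) < s i * k), a j ≤ s i * l) ↔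
      (∀ i, 1 ≤ i → i ≤ p → CMEZD.PS K a (s i * k) ≤ s i * l) := by
    intro a; rfl
  have condB : ∀ b : Fin L → ℕ,
      (∀ i, i < p →
        ∑ j ∈ Finset.univ.filter (fun j : Fin L => s i * l ≤ (j : ℕ)), b j ≤ (n - s i) * k) ↔
      (∀ i, i < p → CMEZD.TS L b (s i * l) ≤ (n - s i) * k) := by
    intro b; rfl
  -- forward direction preserves the conditions
  have forward : ∀ a : Fin K → ℕ,
      (∀ i, 1 ≤ i → i ≤ p → CMEZD.PS K a (s i * k) ≤ s i * l) →
      (∀ i, i < p → CMEZD.TS L (CMEZD.Fm K L a) (s i * l) ≤ (n - s i) * k) := by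
    intro a ha
    have hL : CMEZD.PS K a K ≤ L := by
      have := ha p hp le_rfl
      rwa [hsp] at this
    intro i hip
    rw [CMEZD.TS_Fm a hL]
    have hsub : (n - s i) * k = K - s i * k := by
      rw [hKdef, Nat.sub_mul]
    rcases Nat.eq_zero_or_pos (s i * k) with hc | hc
    · rw [hsub, hc]
      have : (Finset.univ.filter
          (fun t : Fin K => s i * l < CMEZD.PS K a ((t : ℕ) + 1))).card ≤ K := by
        calc (Finset.univ.filter _).card ≤ (Finset.univ : Finset (Fin K)).card :=
              Finset.card_filter_le _ _
          _ = K := by simp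
      omega
    · have hi1 : 1 ≤ i := by
        rcases Nat.eq_zero_or_pos i with h | h
        · subst h; rw [hs0] at hc; simp at hc
        · exact h
      have hcK : s i * k ≤ K := by
        rw [hKdef]; exact Nat.mul_le_mul_right k (hsle i (le_of_lt hip))
      have key := CMEZD.card_upward (K := K)
        (fun t : Fin K => s i * l < CMEZD.PS K a ((t : ℕ) + 1))
        (fun t t' htt hPt => lt_of_lt_of_le hPt (CMEZD.PS_mono a (by omega)))
        (t₀ := K - s i * k) (by omega)
      simp only [Fin.val_mk] at key
      have hidx : K - 1 - (K - s i * k) + 1 = s i * k := by omega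
      rw [hidx] at key
      have hHA := ha i hi1 (le_of_lt hip)
      rw [hsub]
      by_contra hcon
      push_neg at hcon
      have := key.mp hcon
      omega
  -- backward direction preserves the conditions
  have backward : ∀ b : Fin L → ℕ,
      (∀ i, i < p → CMEZD.TS L b (s i * l) ≤ (n - s i) * k) →
      (∀ i, 1 ≤ i → i ≤ p → CMEZD.PS K (CMEZD.Gm K L b) (s i * k) ≤ s i * l) := by
    intro b hb
    have hK0 : CMEZD.TS L b 0 ≤ K := by
      have := hb 0 hp
      rw [hs0] at this
      simpa using this
    intro i hi1 hip
    have hcK : s i * k ≤ K := by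
      rw [hKdef]; exact Nat.mul_le_mul_right k (hsle i hip)
    rw [CMEZD.PS_Gm b hK0 (s i * k) hcK]
    rcases lt_or_ge (s i * l) L with hd | hd
    · have hiltp : i < p := by
        rcases Nat.lt_or_ge i p with h | h
        · exact h
        · exfalso
          have : i = p := le_antisymm hip h
          subst this
          rw [hsp] at hd
          omega
      have hHB := hb i hiltp
      have hsub : (n - s i) * k = K - s i * k := by
        rw [hKdef, Nat.sub_mul]
      rw [hsub] at hHB
      unfold CMEZD.SF
      have key := CMEZD.card_downward (fun j : Fin L => K - s i * k < CMEZD.TS L b (j : ℕ))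
        (fun j j' hjj hP => lt_of_lt_of_le hP (CMEZD.TS_anti b hjj))
        ⟨s i * l, hd⟩
      simp only [Fin.val_mk] at key
      by_contra hcon
      push_neg at hcon
      have := key.mp hcon
      omega
    · exact le_trans (CMEZD.SF_le b _) hd
  -- mutual inverses
  have leftinv : ∀ a : Fin K → ℕ,
      (∀ i, 1 ≤ i → i ≤ p → CMEZD.PS K a (s i * k) ≤ s i * l) →
      CMEZD.Gm K L (CMEZD.Fm K L a) = a := by
    intro a ha
    have hL : CMEZD.PS K a K ≤ L := by
      have := ha p hp le_rfl
      rwa [hsp] at this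
    funext t
    unfold CMEZD.Gm
    rw [CMEZD.SF_Fm a hL ((t : ℕ) + 1) (by omega), CMEZD.SF_Fm a hL (t : ℕ) (by omega)]
    rw [CMEZD.PS_succ a t]
    omega
  have rightinv : ∀ b : Fin L → ℕ,
      (∀ i, i < p → CMEZD.TS L b (s i * l) ≤ (n - s i) * k) →
      CMEZD.Fm K L (CMEZD.Gm K L b) = b := by
    intro b hb
    have hK0 : CMEZD.TS L b 0 ≤ K := by
      have := hb 0 hp
      rw [hs0] at this
      simpa using this
    funext j
    unfold CMEZD.Fm
    have hcong : ∀ t : Fin K,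
        (CMEZD.PS K (CMEZD.Gm K L b) ((t : ℕ) + 1) = (j : ℕ) + 1) ↔
        (CMEZD.SF K L b ((t : ℕ) + 1) = (j : ℕ) + 1) := by
      intro t
      rw [CMEZD.PS_Gm b hK0 ((t : ℕ) + 1) (by omega)]
    rw [Finset.filter_congr (fun t _ => by rw [hcong t])]
    rw [CMEZD.card_fiber_sub (fun t : Fin K => CMEZD.SF K L b ((t : ℕ) + 1)) (j : ℕ)]
    rw [CMEZD.count_SF_gt b hK0 (j : ℕ), CMEZD.count_SF_gt b hK0 ((j : ℕ) + 1)]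
    have := CMEZD.TS_succ b j
    omega
  apply Nat.card_congr
  exact
    { toFun := fun a => ⟨CMEZD.Fm K L a.1, (condB _).mpr (forward a.1 ((condA _).mp a.2))⟩
      invFun := fun b => ⟨CMEZD.Gm K L b.1, (condA _).mpr (backward b.1 ((condB _).mp b.2))⟩
      left_inv := fun a => Subtype.ext (leftinv a.1 ((condA _).mp a.2))
      right_inv := fun b => Subtype.ext (rightinv b.1 ((condB _).mp b.2)) }
end

section
/- MacMahon's formula: for a finite tuple (a_e)_{e∈E} of nonnegative integers with total sum N, the generating function Σ_{m≥0} (Π_{e∈E} C(m + a_e, a_e)) t^m equals (Σ_w t^{des(w)}) / (1−t)^{N+1}, where the sum is over all permutations w of the multiset containing a_e copies of e for each e ∈ E (E totally ordered), and des(w) is the number of descents of w. -/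
open scoped Classical

/-- The number of descents of a word `w : Fin N → E`, `E` linearly ordered. -/
noncomputable def desN {E : Type*} [LinearOrder E] {N : ℕ} (w : Fin N → E) : ℕ :=
  (Finset.univ.filter (fun i : Fin N =>
    if h : (i : ℕ) + 1 < N then w ⟨(i : ℕ) + 1, h⟩ < w i else False)).card

section Aux

section SortedEquiv

variable {α : Type*} (r : α → α → Prop) [DecidableRel r] [IsTrans α r] [IsAntisymm α r]
  [IsTotal α r]

private lemma ofFn_get_cast {n : ℕ} (L : List α) (h : L.length = n) :
    List.ofFn (fun i : Fin n => L.get (Fin.cast h.symm i)) = L := by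
  subst h; simp [List.ofFn_get]

noncomputable def sortedFnEquivMultiset (n : ℕ) :
    {f : Fin n → α // List.Pairwise r (List.ofFn f)} ≃
      {M : Multiset α // Multiset.card M = n} where
  toFun f := ⟨(List.ofFn f.1 : Multiset α), by simp⟩
  invFun M := ⟨fun i => (M.1.sort r).get (Fin.cast (by simp [M.2]) i), by
    rw [ofFn_get_cast (M.1.sort r) (by simp [M.2])]
    exact Multiset.pairwise_sort M.1 r⟩
  left_inv := by
    rintro ⟨f, hf⟩
    have hperm : (Multiset.ofList (List.ofFn f)).sort r = List.ofFn f :=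
      List.Perm.eq_of_pairwise' (Multiset.pairwise_sort _ r) hf
        (Multiset.coe_eq_coe.mp (Multiset.sort_eq _ r))
    apply Subtype.ext
    apply List.ofFn_injective
    rw [ofFn_get_cast _ (by simp)]
    exact hperm
  right_inv := by
    rintro ⟨M, hM⟩
    apply Subtype.ext
    dsimp only
    rw [ofFn_get_cast (Multiset.sort M r) (by simp [hM])]
    exact Multiset.sort_eq M r

lemma card_sortedFn [Fintype α] [DecidableEq α] (n : ℕ) :
    Fintype.card {f : Fin n → α // List.Pairwise r (List.ofFn f)} =
      (Fintype.card α + n - 1).choose n := by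
  have e : {f : Fin n → α // List.Pairwise r (List.ofFn f)} ≃ Sym α n :=
    sortedFnEquivMultiset r n
  rw [Fintype.card_congr e]
  exact Sym.card_sym_eq_choose n

end SortedEquiv

lemma sorted_ofFn_iff_adj {α : Type*} {r : α → α → Prop} [IsTrans α r] {n : ℕ} {f : Fin n → α} :
    List.Pairwise r (List.ofFn f) ↔
      ∀ k, ∀ h : k + 1 < n, r (f ⟨k, Nat.lt_of_succ_lt h⟩) (f ⟨k + 1, h⟩) := by
  rw [← List.isChain_iff_pairwise, List.isChain_iff_getElem]
  constructor
  · intro H k hk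
    have hk' : k + 1 < (List.ofFn f).length := by simpa using hk
    have := H k hk'
    simpa [List.get_ofFn, Fin.cast_mk] using this
  · intro H k hk
    have hk2 : k + 1 < n := by simpa using hk
    have := H k hk2
    simpa [List.get_ofFn, Fin.cast_mk] using this

section RR
variable {E : Type*} [LinearOrder E] {m : ℕ}

def RR (m : ℕ) (E : Type*) [LinearOrder E] (p q : Fin (m + 1) × E) : Prop :=
  toLex (OrderDual.toDual p.1, p.2) ≤ toLex (OrderDual.toDual q.1, q.2)

instance : IsTrans (Fin (m + 1) × E) (RR m E) := ⟨fun _ _ _ h1 h2 => le_trans h1 h2⟩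

instance : IsAntisymm (Fin (m + 1) × E) (RR m E) :=
  ⟨fun p q h1 h2 => by
    have := le_antisymm h1 h2
    have h3 := congrArg ofLex this
    simp only [ofLex_toLex, Prod.mk.injEq] at h3
    exact Prod.ext (OrderDual.toDual.injective h3.1) h3.2⟩

instance : IsTotal (Fin (m + 1) × E) (RR m E) := ⟨fun _ _ => le_total _ _⟩

instance : DecidableRel (RR m E) := fun _ _ => inferInstanceAs (Decidable (_ ≤ _))

lemma RR_iff (p q : Fin (m + 1) × E) :
    RR m E p q ↔ q.1 < p.1 ∨ (p.1 = q.1 ∧ p.2 ≤ q.2) := by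
  rw [RR, Prod.Lex.le_iff]
  constructor
  · rintro (h | ⟨h1, h2⟩)
    · exact Or.inl h
    · exact Or.inr ⟨OrderDual.toDual.injective h1, h2⟩
  · rintro (h | ⟨h1, h2⟩)
    · exact Or.inl h
    · exact Or.inr ⟨congrArg OrderDual.toDual h1, h2⟩

end RR

section Part
variable {σ E : Type*} [Fintype E] [DecidableEq E] [DecidableEq σ]

def filterHom (p : σ → Prop) [DecidablePred p] : Multiset σ →+ Multiset σ where
  toFun := Multiset.filter p
  map_zero' := Multiset.filter_zero p
  map_add' := Multiset.filter_add p

lemma filter_finset_sum {β : Type*} (p : σ → Prop) [DecidablePred p] (s : Finset β)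
    (f : β → Multiset σ) :
    Multiset.filter p (∑ b ∈ s, f b) = ∑ b ∈ s, Multiset.filter p (f b) :=
  map_sum (filterHom p) f s

lemma sum_filter_snd (M : Multiset (σ × E)) :
    ∑ e : E, M.filter (fun p => p.2 = e) = M := by
  ext x
  rw [Multiset.count_sum']
  rw [Finset.sum_eq_single x.2]
  · simp [Multiset.count_filter]
  · intro b _ hb
    rw [Multiset.count_filter, if_neg (fun h => hb h.symm)]
  · simp

lemma card_eq_sum_filter_snd (M : Multiset (σ × E)) :
    Multiset.card M = ∑ e : E, (M.filter (fun p => p.2 = e)).card := by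
  conv_lhs => rw [← sum_filter_snd M]
  exact map_sum Multiset.cardHom _ _

lemma filter_sum_map (f : E → Multiset σ) (e : E) :
    (∑ e' : E, (f e').map (fun v => (v, e'))).filter (fun p : σ × E => p.2 = e) =
      (f e).map (fun v => (v, e)) := by
  rw [filter_finset_sum]
  rw [Finset.sum_eq_single e]
  · rw [Multiset.filter_map]
    exact congrArg _ (Multiset.filter_eq_self.mpr (fun a _ => rfl))
  · intro b _ hb
    rw [Multiset.filter_map]
    convert Multiset.map_zero _
    rw [Multiset.filter_eq_nil]
    intro a _
    simp [Function.comp, hb]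
  · simp

noncomputable def msEquivPi (a : E → ℕ) :
    {M : Multiset (σ × E) // ∀ e, (M.filter (fun p => p.2 = e)).card = a e} ≃
      ∀ e : E, Sym σ (a e) where
  toFun M e := ⟨(M.1.filter (fun p => p.2 = e)).map Prod.fst, by simp [M.2 e]⟩
  invFun h := ⟨∑ e : E, (h e).1.map (fun v => (v, e)), by
    intro e
    rw [filter_sum_map (fun e => (h e).1) e]
    simp [(h e).2]⟩
  left_inv := by
    rintro ⟨M, hM⟩
    apply Subtype.ext
    dsimp only
    have key : ∀ e : E, (Multiset.map Prod.fst (M.filter fun p => p.2 = e)).map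
        (fun v => (v, e)) = M.filter (fun p => p.2 = e) := by
      intro e
      rw [Multiset.map_map]
      have : Multiset.map ((fun v : σ => (v, e)) ∘ Prod.fst) (M.filter fun p => p.2 = e) =
          Multiset.map id (M.filter fun p => p.2 = e) :=
        Multiset.map_congr rfl (fun p hp => by
          obtain ⟨-, h2⟩ := Multiset.mem_filter.mp hp
          exact Prod.ext rfl h2.symm)
      rw [this, Multiset.map_id]
    calc ∑ e : E, (Multiset.map Prod.fst (M.filter fun p => p.2 = e)).map (fun v => (v, e))
        = ∑ e : E, M.filter (fun p => p.2 = e) := by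
          exact Finset.sum_congr rfl (fun e _ => key e)
      _ = M := sum_filter_snd M
  right_inv := by
    rintro h
    funext e
    apply Subtype.ext
    dsimp only
    rw [filter_sum_map (fun e => (h e).1) e]
    rw [Multiset.map_map]
    simp

end Part



section Desc
variable {E : Type*} [LinearOrder E] {N : ℕ}

def descP (w : Fin N → E) (j : Fin N) : Prop :=
  if h : (j : ℕ) + 1 < N then w ⟨(j : ℕ) + 1, h⟩ < w j else False

noncomputable def dN (w : Fin N → E) (k : ℕ) : ℕ :=
  (Finset.univ.filter (fun j : Fin N => k ≤ (j : ℕ) ∧ descP w j)).card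

lemma desN_eq (w : Fin N → E) : desN w = (Finset.univ.filter (descP w)).card := by
  rw [desN]
  apply congrArg
  apply Finset.filter_congr
  intro j _
  rw [descP]

lemma dN_zero (w : Fin N → E) : dN w 0 = desN w := by
  rw [desN_eq, dN]
  congr 1
  apply Finset.filter_congr
  intro j _
  simp

lemma dN_le (w : Fin N → E) (k : ℕ) : dN w k ≤ desN w := by
  rw [desN_eq, dN]
  apply Finset.card_le_card
  intro j hj
  simp only [Finset.mem_filter] at *
  exact ⟨hj.1, hj.2.2⟩

lemma desN_le (w : Fin N → E) : desN w ≤ N := by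
  rw [desN_eq]
  simpa using Finset.card_filter_le Finset.univ (descP w)

lemma dN_eq_zero (w : Fin N → E) (k : ℕ) (h : N ≤ k + 1) : dN w k = 0 := by
  rw [dN, Finset.card_eq_zero, Finset.filter_eq_empty_iff]
  rintro j _ ⟨h1, h2⟩
  rw [descP] at h2
  split at h2
  · omega
  · exact h2

lemma descP_mk (w : Fin N → E) (k : ℕ) (hk : k + 1 < N) :
    descP w ⟨k, Nat.lt_of_succ_lt hk⟩ ↔ w ⟨k + 1, hk⟩ < w ⟨k, Nat.lt_of_succ_lt hk⟩ := by
  rw [descP]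
  simp only [dif_pos hk]

lemma dN_succ (w : Fin N → E) (k : ℕ) (hk : k + 1 < N) :
    dN w k = dN w (k + 1) +
      (if w ⟨k + 1, hk⟩ < w ⟨k, Nat.lt_of_succ_lt hk⟩ then 1 else 0) := by
  have hpt : ∀ j : Fin N, (if k ≤ (j : ℕ) ∧ descP w j then (1:ℕ) else 0) =
      (if k + 1 ≤ (j : ℕ) ∧ descP w j then 1 else 0) +
        (if j = ⟨k, Nat.lt_of_succ_lt hk⟩ then (if descP w j then 1 else 0) else 0) := by
    intro j
    by_cases hd : descP w j
    · by_cases hjk : (j : ℕ) = k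
      · have : j = (⟨k, Nat.lt_of_succ_lt hk⟩ : Fin N) := Fin.ext hjk
        simp [hd, this, hjk]
      · have : j ≠ (⟨k, Nat.lt_of_succ_lt hk⟩ : Fin N) := fun h => hjk (by rw [h])
        simp only [hd, and_true, if_neg this, add_zero]
        by_cases h1 : k ≤ (j : ℕ)
        · rw [if_pos h1, if_pos (by omega)]
        · rw [if_neg h1, if_neg (by omega)]
    · simp [hd]
  rw [dN, dN, Finset.card_filter, Finset.card_filter,
    Finset.sum_congr rfl (fun j _ => hpt j), Finset.sum_add_distrib]
  congr 1
  rw [Finset.sum_ite_eq' Finset.univ (⟨k, Nat.lt_of_succ_lt hk⟩ : Fin N)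
    (fun j => if descP w j then (1:ℕ) else 0)]
  simp only [Finset.mem_univ, if_true]
  by_cases hd : w ⟨k + 1, hk⟩ < w ⟨k, Nat.lt_of_succ_lt hk⟩
  · rw [if_pos ((descP_mk w k hk).mpr hd), if_pos hd]
  · rw [if_neg (fun h => hd ((descP_mk w k hk).mp h)), if_neg hd]

end Desc
section Fiber
variable {E : Type*} [LinearOrder E] {N m : ℕ}

lemma ge_dN (w : Fin N → E) (g : Fin N → Fin (m + 1))
    (compat : ∀ k, ∀ hk : k + 1 < N,
      RR m E (g ⟨k, Nat.lt_of_succ_lt hk⟩, w ⟨k, Nat.lt_of_succ_lt hk⟩) (g ⟨k + 1, hk⟩, w ⟨k + 1, hk⟩)) :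
    ∀ t k, ∀ hk : k < N, N - k ≤ t → dN w k ≤ (g ⟨k, hk⟩ : ℕ) := by
  intro t
  induction t with
  | zero => intro k hk h; omega
  | succ t ih =>
    intro k hk h
    by_cases hk1 : k + 1 < N
    · have hrec := dN_succ w k hk1
      have hc := (RR_iff _ _).mp (compat k hk1)
      simp only at hc
      have hih := ih (k + 1) hk1 (by omega)
      have hA : (g ⟨k + 1, hk1⟩ : ℕ) < (g ⟨k, hk⟩ : ℕ) ∨
          ((g ⟨k, hk⟩ : ℕ) = (g ⟨k + 1, hk1⟩ : ℕ) ∧ w ⟨k, hk⟩ ≤ w ⟨k + 1, hk1⟩) := by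
        rcases hc with h1 | ⟨h1, h2⟩
        · exact Or.inl h1
        · exact Or.inr ⟨congrArg Fin.val h1, h2⟩
      by_cases hd : w ⟨k + 1, hk1⟩ < w ⟨k, Nat.lt_of_succ_lt hk1⟩
      · rw [if_pos hd] at hrec
        have : (g ⟨k + 1, hk1⟩ : ℕ) < (g ⟨k, hk⟩ : ℕ) := by
          rcases hA with h1 | ⟨h1, h2⟩
          · exact h1
          · exact absurd hd (not_lt.mpr h2)
        omega
      · rw [if_neg hd] at hrec
        have : (g ⟨k + 1, hk1⟩ : ℕ) ≤ (g ⟨k, hk⟩ : ℕ) := by omega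
        omega
    · rw [dN_eq_zero w k (by omega)]
      omega

lemma bound_dN (w : Fin N → E) (g : Fin N → Fin (m + 1))
    (compat : ∀ k, ∀ hk : k + 1 < N,
      RR m E (g ⟨k, Nat.lt_of_succ_lt hk⟩, w ⟨k, Nat.lt_of_succ_lt hk⟩) (g ⟨k + 1, hk⟩, w ⟨k + 1, hk⟩)) :
    ∀ k, ∀ hk : k < N, (g ⟨k, hk⟩ : ℕ) + dN w 0 ≤ m + dN w k := by
  intro k
  induction k with
  | zero => intro hk; have := (g ⟨0, hk⟩).is_le; omega
  | succ k ih =>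
    intro hk
    have hk1 : k + 1 < N := hk
    have hih := ih (by omega)
    have hrec := dN_succ w k hk1
    have hc := (RR_iff _ _).mp (compat k hk1)
    simp only at hc
    have hA : (g ⟨k + 1, hk1⟩ : ℕ) < (g ⟨k, Nat.lt_of_succ_lt hk1⟩ : ℕ) ∨
        ((g ⟨k, Nat.lt_of_succ_lt hk1⟩ : ℕ) = (g ⟨k + 1, hk1⟩ : ℕ) ∧
          w ⟨k, Nat.lt_of_succ_lt hk1⟩ ≤ w ⟨k + 1, hk1⟩) := by
      rcases hc with h1 | ⟨h1, h2⟩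
      · exact Or.inl h1
      · exact Or.inr ⟨congrArg Fin.val h1, h2⟩
    by_cases hd : w ⟨k + 1, hk1⟩ < w ⟨k, Nat.lt_of_succ_lt hk1⟩
    · rw [if_pos hd] at hrec
      have : (g ⟨k + 1, hk1⟩ : ℕ) < (g ⟨k, Nat.lt_of_succ_lt hk1⟩ : ℕ) := by
        rcases hA with h1 | ⟨h1, h2⟩
        · exact h1
        · exact absurd hd (not_lt.mpr h2)
      omega
    · rw [if_neg hd] at hrec
      have : (g ⟨k + 1, hk1⟩ : ℕ) ≤ (g ⟨k, Nat.lt_of_succ_lt hk1⟩ : ℕ) := by omega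
      omega

end Fiber

section FiberCard
variable {E : Type*} [LinearOrder E] {N m : ℕ}

def geR (K : ℕ) (x y : Fin K) : Prop := y ≤ x
instance {K : ℕ} : IsTrans (Fin K) (geR K) := ⟨fun _ _ _ h1 h2 => le_trans h2 h1⟩
instance {K : ℕ} : IsAntisymm (Fin K) (geR K) := ⟨fun _ _ h1 h2 => le_antisymm h2 h1⟩
instance {K : ℕ} : IsTotal (Fin K) (geR K) := ⟨fun a b => (le_total b a).elim Or.inl Or.inr⟩
instance {K : ℕ} : DecidableRel (geR K) := fun a b => inferInstanceAs (Decidable (b ≤ a))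

lemma fiber_card (w : Fin N → E) :
    Fintype.card {g : Fin N → Fin (m + 1) //
        List.Pairwise (RR m E) (List.ofFn (fun i => (g i, w i)))} =
      if desN w ≤ m then (m - desN w + N).choose N else 0 := by
  split_ifs with hdm
  · set K := m - desN w + 1 with hK
    have hcard2 : Fintype.card {g' : Fin N → Fin K // List.Pairwise (geR K) (List.ofFn g')} =
        (m - desN w + N).choose N := by
      rw [card_sortedFn (geR K) N, Fintype.card_fin]
      congr 1
      omega
    have hsub : ∀ (g' : Fin N → Fin K) (i : Fin N), (g' i : ℕ) + dN w i ≤ m := by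
      intro g' i
      have h1 := (g' i).is_le
      have h2 := dN_le w (i : ℕ)
      omega
    let F : {g' : Fin N → Fin K // List.Pairwise (geR K) (List.ofFn g')} →
        {g : Fin N → Fin (m + 1) // List.Pairwise (RR m E) (List.ofFn (fun i => (g i, w i)))} :=
      fun gp => ⟨fun i => ⟨(gp.1 i : ℕ) + dN w i, Nat.lt_succ_of_le (hsub gp.1 i)⟩, by
        rw [sorted_ofFn_iff_adj]
        intro k hk
        have hadj' : (gp.1 ⟨k + 1, hk⟩ : ℕ) ≤ (gp.1 ⟨k, Nat.lt_of_succ_lt hk⟩ : ℕ) :=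
          sorted_ofFn_iff_adj.mp gp.2 k hk
        rw [RR_iff]
        dsimp only
        have hrec := dN_succ w k hk
        by_cases hdc : w ⟨k + 1, hk⟩ < w ⟨k, Nat.lt_of_succ_lt hk⟩
        · rw [if_pos hdc] at hrec
          left
          rw [Fin.mk_lt_mk]
          omega
        · rw [if_neg hdc] at hrec
          rcases lt_or_eq_of_le hadj' with hlt | heq
          · left
            rw [Fin.mk_lt_mk]
            omega
          · right
            refine ⟨Fin.ext ?_, le_of_not_gt hdc⟩
            show (gp.1 ⟨k, Nat.lt_of_succ_lt hk⟩ : ℕ) + dN w k =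
              (gp.1 ⟨k + 1, hk⟩ : ℕ) + dN w (k + 1)
            omega⟩
    have hinj : Function.Injective F := by
      rintro ⟨g1, h1⟩ ⟨g2, h2⟩ h
      have hval := congrArg Subtype.val h
      apply Subtype.ext
      funext i
      have hi := congrFun hval i
      have hvv : (g1 i : ℕ) + dN w i = (g2 i : ℕ) + dN w i := congrArg Fin.val hi
      show g1 i = g2 i
      exact Fin.ext (by omega)
    have hsurj : Function.Surjective F := by
      rintro ⟨g, hg⟩
      have compat := sorted_ofFn_iff_adj.mp hg
      have hge : ∀ k, ∀ hk : k < N, dN w k ≤ (g ⟨k, hk⟩ : ℕ) :=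
        fun k hk => ge_dN w g compat (N - k) k hk le_rfl
      have hbd := bound_dN w g compat
      have hrange : ∀ i : Fin N, (g i : ℕ) - dN w i < K := by
        intro i
        have h1 : (g i : ℕ) + dN w 0 ≤ m + dN w (i : ℕ) := hbd (i : ℕ) i.isLt
        rw [dN_zero] at h1
        have h2 : dN w (i : ℕ) ≤ (g i : ℕ) := hge (i : ℕ) i.isLt
        omega
      refine ⟨⟨fun i => ⟨(g i : ℕ) - dN w i, hrange i⟩, ?_⟩, ?_⟩
      · rw [sorted_ofFn_iff_adj]
        intro k hk
        show geR K _ _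
        rw [geR]
        dsimp only
        rw [Fin.mk_le_mk]
        have hc := (RR_iff _ _).mp (compat k hk)
        dsimp only at hc
        have hrec := dN_succ w k hk
        have hg1 : dN w (k + 1) ≤ (g ⟨k + 1, hk⟩ : ℕ) := hge (k + 1) hk
        have hg0 : dN w k ≤ (g ⟨k, Nat.lt_of_succ_lt hk⟩ : ℕ) := hge k (Nat.lt_of_succ_lt hk)
        by_cases hdc : w ⟨k + 1, hk⟩ < w ⟨k, Nat.lt_of_succ_lt hk⟩
        · rw [if_pos hdc] at hrec
          have : (g ⟨k + 1, hk⟩ : ℕ) < (g ⟨k, Nat.lt_of_succ_lt hk⟩ : ℕ) := by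
            rcases hc with h1 | ⟨h1, h2⟩
            · exact h1
            · exact absurd hdc (not_lt.mpr h2)
          omega
        · rw [if_neg hdc] at hrec
          have : (g ⟨k + 1, hk⟩ : ℕ) ≤ (g ⟨k, Nat.lt_of_succ_lt hk⟩ : ℕ) := by
            rcases hc with h1 | ⟨h1, h2⟩
            · exact le_of_lt h1
            · exact le_of_eq (congrArg Fin.val h1).symm
          omega
      · apply Subtype.ext
        funext i
        apply Fin.ext
        show ((g i : ℕ) - dN w i) + dN w i = (g i : ℕ)
        have h5 : dN w (i : ℕ) ≤ (g i : ℕ) := hge (i : ℕ) i.isLt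
        omega
    calc Fintype.card {g : Fin N → Fin (m + 1) //
          List.Pairwise (RR m E) (List.ofFn (fun i => (g i, w i)))}
        = Fintype.card {g' : Fin N → Fin K // List.Pairwise (geR K) (List.ofFn g')} :=
          (Fintype.card_congr (Equiv.ofBijective F ⟨hinj, hsurj⟩)).symm
      _ = (m - desN w + N).choose N := hcard2
  · rw [Fintype.card_eq_zero_iff]
    constructor
    rintro ⟨g, hg⟩
    have compat := sorted_ofFn_iff_adj.mp hg
    have hdN : desN w ≤ N := desN_le w
    have hN0 : 0 < N := by omega
    have h0 := ge_dN w g compat N 0 hN0 (by omega)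
    rw [dN_zero] at h0
    have := (g ⟨0, hN0⟩).is_le
    omega

end FiberCard

section Main
variable {E : Type*} [Fintype E] [LinearOrder E] {N : ℕ}

lemma card_filter_ofFn {β : Type*} {n : ℕ} (f : Fin n → β) (q : β → Prop) [DecidablePred q] :
    ((↑(List.ofFn f) : Multiset β).filter q).card =
      (Finset.univ.filter (fun i => q (f i))).card := by
  rw [← Fin.univ_val_map, ← Multiset.countP_eq_card_filter, Multiset.countP_map]
  rw [← Finset.filter_val, Finset.card_def]

lemma card_A (m : ℕ) (a : E → ℕ) (hN : N = ∑ e, a e) :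
    Fintype.card {p : (Fin N → E) × (Fin N → Fin (m + 1)) //
        (∀ e, (Finset.univ.filter (fun i => p.1 i = e)).card = a e) ∧
          List.Pairwise (RR m E) (List.ofFn (fun i => (p.2 i, p.1 i)))} =
      ∏ e, (m + a e).choose (a e) := by
  let B : (Fin N → Fin (m + 1) × E) ≃ (Fin N → E) × (Fin N → Fin (m + 1)) :=
    { toFun := fun f => (fun i => (f i).2, fun i => (f i).1)
      invFun := fun p i => (p.2 i, p.1 i)
      left_inv := fun f => rfl
      right_inv := fun p => rfl }
  have e1 : {f : Fin N → Fin (m + 1) × E //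
      (∀ e, (Finset.univ.filter (fun i => (f i).2 = e)).card = a e) ∧
        List.Pairwise (RR m E) (List.ofFn f)} ≃
      {p : (Fin N → E) × (Fin N → Fin (m + 1)) //
        (∀ e, (Finset.univ.filter (fun i => p.1 i = e)).card = a e) ∧
          List.Pairwise (RR m E) (List.ofFn (fun i => (p.2 i, p.1 i)))} :=
    B.subtypeEquiv (fun f => Iff.rfl)
  have e2 : {f : Fin N → Fin (m + 1) × E //
      (∀ e, (Finset.univ.filter (fun i => (f i).2 = e)).card = a e) ∧
        List.Pairwise (RR m E) (List.ofFn f)} ≃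
      {M : Multiset (Fin (m + 1) × E) // ∀ e, (M.filter (fun p => p.2 = e)).card = a e} := by
    refine (Equiv.subtypeEquivRight (fun f => and_comm)).trans ?_
    refine (Equiv.subtypeSubtypeEquivSubtypeInter _ _).symm.trans ?_
    refine (Equiv.subtypeEquiv
      (q := fun y : {M : Multiset (Fin (m + 1) × E) // Multiset.card M = N} =>
        ∀ e, ((y.1.filter (fun p => p.2 = e)).card = a e))
      (sortedFnEquivMultiset (RR m E) N) ?_).trans ?_
    · intro x
      refine forall_congr' fun e => ?_
      have hxx : ((sortedFnEquivMultiset (RR m E) N) x).1 =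
          (↑(List.ofFn x.1) : Multiset (Fin (m + 1) × E)) := rfl
      rw [hxx, card_filter_ofFn x.1 (fun p => p.2 = e)]
    refine (Equiv.subtypeSubtypeEquivSubtypeInter
      (fun M : Multiset (Fin (m + 1) × E) => Multiset.card M = N)
      (fun M => ∀ e, ((M.filter (fun p => p.2 = e)).card = a e))).trans ?_
    apply Equiv.subtypeEquivRight
    intro M
    constructor
    · exact fun h => h.2
    · intro h
      refine ⟨?_, h⟩
      rw [card_eq_sum_filter_snd M, hN]
      exact Finset.sum_congr rfl (fun e _ => h e)
  have e3 := (e1.symm.trans e2).trans (msEquivPi a)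
  rw [Fintype.card_congr e3, Fintype.card_pi]
  apply Finset.prod_congr rfl
  intro e _
  rw [Sym.card_sym_eq_choose, Fintype.card_fin]
  congr 1
  omega

lemma key_count (m : ℕ) (a : E → ℕ) (hN : N = ∑ e, a e) :
    ∏ e, (m + a e).choose (a e) =
      ∑ w ∈ Finset.univ.filter (fun w : Fin N → E =>
          ∀ e, (Finset.univ.filter (fun i => w i = e)).card = a e),
        (if desN w ≤ m then (m - desN w + N).choose N else 0) := by
  rw [← card_A m a hN, Fintype.card_subtype, Finset.card_filter, Fintype.sum_prod_type,
    Finset.sum_filter]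
  apply Finset.sum_congr rfl
  intro w _
  by_cases hw : ∀ e, (Finset.univ.filter (fun i => w i = e)).card = a e
  · rw [if_pos hw]
    have hpt : ∀ g : Fin N → Fin (m + 1),
        (if (∀ e, (Finset.univ.filter (fun i => w i = e)).card = a e) ∧
            List.Pairwise (RR m E) (List.ofFn (fun i => (g i, w i))) then (1:ℕ) else 0) =
          if List.Pairwise (RR m E) (List.ofFn (fun i => (g i, w i))) then 1 else 0 := by
      intro g
      by_cases hq : List.Pairwise (RR m E) (List.ofFn (fun i => (g i, w i)))
      · rw [if_pos ⟨hw, hq⟩, if_pos hq]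
      · rw [if_neg (fun hc => hq hc.2), if_neg hq]
    rw [Finset.sum_congr rfl (fun g _ => hpt g), ← Finset.card_filter, ← Fintype.card_subtype,
      fiber_card w]
  · rw [if_neg hw]
    apply Finset.sum_eq_zero
    intro g _
    rw [if_neg (fun hc => hw hc.1)]

end Main


end Aux

/-- MacMahon's formula: for nonnegative integers `(a_e)_{e ∈ E}`
with total sum `N`,
`Σ_{m ≥ 0} (Π_e C(m + a_e, a_e)) t^m = (Σ_w t^{des w}) / (1−t)^{N+1}`,
the sum being over all permutations `w` of the multiset with `a_e` copies of
each `e`; stated as an identity of formal power series after clearing the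
denominator. -/
theorem macmahon_formula (E : Type*) [Fintype E] [LinearOrder E]
    (a : E → ℕ) (N : ℕ) (hN : N = ∑ e, a e) :
    PowerSeries.mk (fun m => (∏ e, ((m + a e).choose (a e) : ℚ))) *
        (1 - PowerSeries.X) ^ (N + 1) =
      ∑ w ∈ Finset.univ.filter
          (fun w : Fin N → E =>
            ∀ e, (Finset.univ.filter (fun i => w i = e)).card = a e),
        (PowerSeries.X : PowerSeries ℚ) ^ desN w := by
  have hmain : (PowerSeries.mk (fun m => (∏ e, ((m + a e).choose (a e) : ℚ)))) =
      (∑ w ∈ Finset.univ.filter (fun w : Fin N → E =>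
          ∀ e, (Finset.univ.filter (fun i => w i = e)).card = a e),
        (PowerSeries.X : PowerSeries ℚ) ^ desN w) *
        (PowerSeries.invOneSubPow ℚ (N + 1)).val := by
    rw [PowerSeries.invOneSubPow_val_succ_eq_mk_add_choose]
    ext m
    rw [PowerSeries.coeff_mk, Finset.sum_mul, map_sum]
    have hterm : ∀ w : Fin N → E,
        (PowerSeries.coeff m) ((PowerSeries.X : PowerSeries ℚ) ^ desN w *
          PowerSeries.mk fun n => ((N + n).choose N : ℚ)) =
        if desN w ≤ m then (((m - desN w + N).choose N : ℕ) : ℚ) else 0 := by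
      intro w
      rw [mul_comm, PowerSeries.coeff_mul_X_pow']
      split_ifs with h
      · rw [PowerSeries.coeff_mk]
        norm_cast
        rw [add_comm]
      · rfl
    rw [Finset.sum_congr rfl (fun w _ => hterm w)]
    calc (∏ e, ((m + a e).choose (a e) : ℚ))
        = ((∏ e, (m + a e).choose (a e) : ℕ) : ℚ) := by push_cast; rfl
      _ = _ := by
          rw [key_count m a hN, Nat.cast_sum]
          exact Finset.sum_congr rfl fun w _ => by
            rw [apply_ite (Nat.cast : ℕ → ℚ)]
            norm_num
  rw [hmain, mul_assoc, ← PowerSeries.invOneSubPow_inv_eq_one_sub_pow,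
    (PowerSeries.invOneSubPow ℚ (N + 1)).val_inv, mul_one]
end

section
/- Let h_n(t) be the polynomial counting lattice points of the preorder polytope of the zig-zag poset Z_n by the number of nonzero coordinates. Then h_n(t) satisfies the Delannoy recurrence h_n(t) = (1+t)h_{n−1}(t) + t h_{n−2}(t) for n ≥ 2, with h₀(t) = 1 and h₁(t) = 1 + t; hence h_n(t) equals the n-th Delannoy polynomial d_n(t), and the number of lattice points h_n(1) is the n-th Pell-type number satisfying h_n(1) = 2h_{n−1}(1) + h_{n−2}(1). -/
open Polynomial

/-- The zig-zag partial order `Z_n` on `{1, …, n}` (indices `0, …, n−1`):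
with 1-indexed positions, `i ≺ i+1` for odd `i` and `i ≻ i+1` for even `i`. -/
def zigzagRel (n : ℕ) (x y : Fin n) : Prop :=
  x = y ∨ ((y : ℕ) = (x : ℕ) + 1 ∧ Even (x : ℕ)) ∨
    ((x : ℕ) = (y : ℕ) + 1 ∧ Odd (y : ℕ))

/-- The polynomial counting lattice points of the preorder polytope of `Z_n`
by number of nonzero coordinates. -/
noncomputable def zigzagH (n : ℕ) : Polynomial ℤ :=
  ∑ᶠ a ∈ {a : Fin n → ℕ | (fun i => (a i : ℝ)) ∈ preorderPolytope (Fin n) (zigzagRel n)},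
    (X : Polynomial ℤ) ^ (Finset.univ.filter (fun i => a i ≠ 0)).card

/-- The Delannoy polynomials. -/
noncomputable def delannoy : ℕ → Polynomial ℤ
  | 0 => 1
  | 1 => 1 + X
  | (n + 2) => (1 + X) * delannoy (n + 1) + X * delannoy n

namespace ZZ
/-- number of nonzero coordinates among the first `n`. -/
def cnt (n : ℕ) (a : ℕ → ℕ) : ℕ := ((Finset.range n).filter (fun i => a i ≠ 0)).card

/-- interval conditions characterizing lattice points -/
def Ok (n : ℕ) (a : ℕ → ℕ) : Prop :=
  ∀ l r : ℕ, Even l → l ≤ r → r < n → (Even r ∨ r + 1 = n) →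
    (∑ i ∈ Finset.Icc l r, a i) ≤ r - l + 1

def Z (n : ℕ) : Set (ℕ → ℕ) := {a | (∀ i, n ≤ i → a i = 0) ∧ Ok n a}

lemma cnt_congr {n : ℕ} {a b : ℕ → ℕ} (h : ∀ i, i < n → a i = b i) : cnt n a = cnt n b := by
  unfold cnt
  congr 1
  apply Finset.filter_congr
  intro i hi
  rw [h i (Finset.mem_range.mp hi)]

lemma cnt_succ_of_eq {n : ℕ} {a : ℕ → ℕ} (h : a n = 0) : cnt (n+1) a = cnt n a := by
  unfold cnt
  rw [Finset.range_add_one, Finset.filter_insert]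
  simp [h]

lemma cnt_succ_of_ne {n : ℕ} {a : ℕ → ℕ} (h : a n ≠ 0) : cnt (n+1) a = cnt n a + 1 := by
  unfold cnt
  rw [Finset.range_add_one, Finset.filter_insert, if_pos h,
    Finset.card_insert_of_notMem (by simp)]

lemma sum_update_of_gt {a : ℕ → ℕ} {k v l r : ℕ} (h : r < k) :
    ∑ i ∈ Finset.Icc l r, Function.update a k v i = ∑ i ∈ Finset.Icc l r, a i := by
  apply Finset.sum_congr rfl
  intro i hi
  have : i ≠ k := by
    have := (Finset.mem_Icc.mp hi).2; omega
  simp [Function.update_of_ne this]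

lemma sum_Icc_self (a : ℕ → ℕ) (l : ℕ) : ∑ i ∈ Finset.Icc l l, a i = a l := by
  simp

lemma sum_attachFin {n : ℕ} (s : Finset ℕ) (h : ∀ m ∈ s, m < n) (f : ℕ → ℕ) :
    ∑ i ∈ s.attachFin h, f i.val = ∑ m ∈ s, f m := by
  apply Finset.sum_bij (fun (x : Fin n) _ => (x : ℕ))
  · intro a ha; exact (Finset.mem_attachFin h).mp ha
  · intro a ha a' ha' hh; exact Fin.ext hh
  · intro m hm; exact ⟨⟨m, h m hm⟩, by simp [hm], rfl⟩
  · intro a ha; rfl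

/-- Part (⇒): polytope ideal conditions imply interval conditions. -/
lemma ok_of_ideal {n : ℕ} {b : ℕ → ℕ}
    (h : ∀ I : Finset (Fin n), IsOrderIdeal (zigzagRel n) I → ∑ i ∈ I, b i.val ≤ I.card) :
    Ok n b := by
  intro l r hl hlr hrn hc
  have hmem : ∀ m ∈ Finset.Icc l r, m < n := by
    intro m hm; have := (Finset.mem_Icc.mp hm).2; omega
  set I : Finset (Fin n) := (Finset.Icc l r).attachFin hmem with hI
  have hideal : IsOrderIdeal (zigzagRel n) I := by
    intro x y hr hy
    rw [hI, Finset.mem_attachFin] at hy ⊢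
    rw [Finset.mem_Icc] at hy ⊢
    rcases hr with h1 | ⟨h2, h3⟩ | ⟨h4, h5⟩
    · rw [h1]; exact hy
    · constructor
      · by_contra hlt
        push_neg at hlt
        have hyl : (y : ℕ) = l := by omega
        rw [hyl] at h2
        have : Even ((x:ℕ) + 1) := h2 ▸ hl
        rw [Nat.even_add_one] at this
        exact this h3
      · omega
    · constructor
      · omega
      · rcases hc with hev | hrn1
        · have : (y : ℕ) ≠ r := by
            intro hyr; rw [hyr] at h5
            exact (Nat.not_odd_iff_even.mpr hev) h5
          omega
        · have := x.isLt; omega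
  have hsum : ∑ i ∈ I, b i.val = ∑ m ∈ Finset.Icc l r, b m := by
    rw [hI]
    exact sum_attachFin _ hmem b
  have hcard : I.card = r - l + 1 := by
    rw [hI, Finset.card_attachFin, Nat.card_Icc]; omega
  calc ∑ m ∈ Finset.Icc l r, b m = ∑ i ∈ I, b i.val := hsum.symm
    _ ≤ I.card := h I hideal
    _ = r - l + 1 := hcard
/-- Part (⇐): interval conditions imply all ideal conditions. -/
lemma ideal_of_ok {n : ℕ} {b : ℕ → ℕ} (hOk : Ok n b) :
    ∀ I : Finset (Fin n), IsOrderIdeal (zigzagRel n) I → ∑ i ∈ I, b i.val ≤ I.card := by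
  classical
  intro I
  induction I using Finset.strongInduction with
  | _ I ih =>
    intro hI
    rcases I.eq_empty_or_nonempty with rfl | hne
    · simp
    set m := I.max' hne with hm
    set P : ℕ → Prop := fun l => ∀ k, l ≤ k → k ≤ (m : ℕ) → ∃ hk : k < n, (⟨k, hk⟩ : Fin n) ∈ I
      with hP
    have hPm : P (m : ℕ) := by
      intro k h1 h2
      have hk : k = (m : ℕ) := le_antisymm h2 h1
      subst hk
      exact ⟨m.isLt, by simpa using I.max'_mem hne⟩
    have hex : ∃ l, P l := ⟨(m : ℕ), hPm⟩
    set l := Nat.find hex with hldef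
    have hPl : P l := Nat.find_spec hex
    have hlm : l ≤ (m : ℕ) := Nat.find_le hPm
    have hnotmem : l ≠ 0 → ∀ y : Fin n, (y : ℕ) = l - 1 → y ∉ I := by
      intro hl0 y hy hyI
      have hnp : ¬ P (l - 1) := Nat.find_min hex (by omega)
      apply hnp
      intro k h1 h2
      by_cases hkl : l ≤ k
      · exact hPl k hkl h2
      · have hk : k = l - 1 := by omega
        have hyn := y.isLt
        refine ⟨by omega, ?_⟩
        have : (⟨k, by omega⟩ : Fin n) = y := Fin.ext (show k = (y : ℕ) by omega)
        rw [this]; exact hyI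
    have hleven : Even l := by
      by_contra hlodd
      have hl0 : l ≠ 0 := by intro h0; rw [h0] at hlodd; exact hlodd Even.zero
      have hlodd' : Odd l := Nat.odd_iff.mpr (by
        rcases Nat.even_or_odd l with h | h
        · exact absurd h hlodd
        · exact Nat.odd_iff.mp h)
      obtain ⟨hln, hlI⟩ := hPl l le_rfl hlm
      have hrel : zigzagRel n ⟨l - 1, by omega⟩ ⟨l, hln⟩ := by
        right; left
        refine ⟨by simp; omega, ?_⟩
        show Even (l - 1)
        exact Nat.Odd.sub_odd hlodd' odd_one
      exact hnotmem hl0 ⟨l - 1, by omega⟩ rfl (hI _ _ hrel hlI)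
    have hmc : Even (m : ℕ) ∨ (m : ℕ) + 1 = n := by
      by_contra hc
      push_neg at hc
      obtain ⟨hmodd, hmn⟩ := hc
      have hmn' : (m : ℕ) + 1 < n := by have := m.isLt; omega
      have hrel : zigzagRel n ⟨(m : ℕ) + 1, hmn'⟩ m := by
        right; right
        exact ⟨rfl, Nat.odd_iff.mpr (by
          rcases Nat.even_or_odd (m : ℕ) with h | h
          · exact absurd h hmodd
          · exact Nat.odd_iff.mp h)⟩
      have hxI : (⟨(m : ℕ) + 1, hmn'⟩ : Fin n) ∈ I := hI _ _ hrel (I.max'_mem hne)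
      have := I.le_max' _ hxI
      rw [Fin.le_def] at this
      simp only at this
      omega
    have hmemR : ∀ k ∈ Finset.Icc l (m : ℕ), k < n := by
      intro k hk
      have h1 := (Finset.mem_Icc.mp hk).2
      have h2 := m.isLt; omega
    set R : Finset (Fin n) := (Finset.Icc l (m : ℕ)).attachFin hmemR with hR
    have hRI : R ⊆ I := by
      intro x hx
      rw [hR, Finset.mem_attachFin, Finset.mem_Icc] at hx
      obtain ⟨hk, hmem⟩ := hPl (x : ℕ) hx.1 hx.2
      have : (⟨(x : ℕ), hk⟩ : Fin n) = x := Fin.ext rfl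
      rwa [this] at hmem
    have hmR : m ∈ R := by rw [hR, Finset.mem_attachFin, Finset.mem_Icc]; exact ⟨hlm, le_rfl⟩
    set I' := I \ R with hI'
    have hss : I' ⊂ I := Finset.sdiff_ssubset hRI ⟨m, hmR⟩
    have hI'ideal : IsOrderIdeal (zigzagRel n) I' := by
      intro x y hrel hy
      rw [hI', Finset.mem_sdiff] at hy ⊢
      obtain ⟨hyI, hyR⟩ := hy
      refine ⟨hI x y hrel hyI, ?_⟩
      intro hxR
      rw [hR, Finset.mem_attachFin, Finset.mem_Icc] at hxR hyR
      have hyle : (y : ℕ) ≤ (m : ℕ) := by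
        have := I.le_max' y hyI
        rwa [Fin.le_def] at this
      rcases hrel with h1 | ⟨h2, h3⟩ | ⟨h4, h5⟩
      · exact hyR (h1 ▸ hxR)
      · exact hyR ⟨by omega, by omega⟩
      · by_cases hly : l ≤ (y : ℕ)
        · exact hyR ⟨hly, by omega⟩
        · exact hnotmem (by omega) y (by omega) hyI
    have hsplit : ∑ i ∈ I, b i.val = ∑ i ∈ I', b i.val + ∑ i ∈ R, b i.val := by
      rw [hI']; exact (Finset.sum_sdiff hRI).symm
    have hsumR : ∑ i ∈ R, b i.val = ∑ k ∈ Finset.Icc l (m : ℕ), b k := sum_attachFin _ _ _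
    have hRbound : ∑ k ∈ Finset.Icc l (m : ℕ), b k ≤ (m : ℕ) - l + 1 :=
      hOk l m hleven hlm m.isLt hmc
    have hcardR : R.card = (m : ℕ) - l + 1 := by
      rw [hR, Finset.card_attachFin, Nat.card_Icc]; omega
    have hcard : I'.card + R.card = I.card := by
      rw [hI']; exact Finset.card_sdiff_add_card_eq_card hRI
    have hih := ih I' hss hI'ideal
    omega
def ext (n : ℕ) (a : Fin n → ℕ) : ℕ → ℕ := fun i => if h : i < n then a ⟨i, h⟩ else 0

lemma ext_val {n : ℕ} (a : Fin n → ℕ) (i : Fin n) : ext n a i.val = a i := by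
  simp [ext, i.isLt]

lemma mem_polytope_iff {n : ℕ} (a : Fin n → ℕ) :
    ((fun i => (a i : ℝ)) ∈ preorderPolytope (Fin n) (zigzagRel n)) ↔
    ∀ I : Finset (Fin n), IsOrderIdeal (zigzagRel n) I → ∑ i ∈ I, a i ≤ I.card := by
  constructor
  · intro h I hI
    have h2 := h.2 I hI
    rw [← Nat.cast_sum] at h2
    exact_mod_cast h2
  · intro h
    refine ⟨fun e => Nat.cast_nonneg _, fun I hI => ?_⟩
    rw [← Nat.cast_sum]
    exact_mod_cast h I hI

lemma mem_iff_ext_Z {n : ℕ} (a : Fin n → ℕ) :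
    ((fun i => (a i : ℝ)) ∈ preorderPolytope (Fin n) (zigzagRel n)) ↔ ext n a ∈ Z n := by
  rw [mem_polytope_iff]
  constructor
  · intro h
    refine ⟨fun i hi => dif_neg (by omega), ok_of_ideal (fun I hI => ?_)⟩
    calc ∑ i ∈ I, ext n a i.val = ∑ i ∈ I, a i := Finset.sum_congr rfl fun i _ => ext_val a i
      _ ≤ I.card := h I hI
  · intro h I hI
    calc ∑ i ∈ I, a i = ∑ i ∈ I, ext n a i.val := Finset.sum_congr rfl fun i _ => (ext_val a i).symm
      _ ≤ I.card := ideal_of_ok h.2 I hI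

lemma Z_bound {n : ℕ} {a : ℕ → ℕ} (ha : a ∈ Z n) (i : ℕ) : a i ≤ n := by
  rcases le_or_gt n i with h | h
  · rw [ha.1 i h]; exact Nat.zero_le n
  · have := ha.2 0 (n-1) Even.zero (by omega) (by omega) (by right; omega)
    have hmem : i ∈ Finset.Icc 0 (n-1) := by rw [Finset.mem_Icc]; omega
    have hle := Finset.single_le_sum (f := a) (fun j _ => Nat.zero_le _) hmem
    omega

lemma Z_finite (n : ℕ) : (Z n).Finite := by
  apply Set.Finite.subset (Set.finite_range
    (fun f : Fin n → Fin (n+1) => fun i => if h : i < n then (f ⟨i, h⟩ : ℕ) else 0))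
  intro a ha
  refine ⟨fun i => ⟨a i.val, Nat.lt_succ_of_le (Z_bound ha i.val)⟩, ?_⟩
  funext i
  by_cases h : i < n
  · simp [h]
  · simp [h, ha.1 i (le_of_not_gt h)]

noncomputable def Zfin (n : ℕ) : Finset (ℕ → ℕ) := (Z_finite n).toFinset

lemma mem_Zfin {n : ℕ} {a : ℕ → ℕ} : a ∈ Zfin n ↔ (∀ i, n ≤ i → a i = 0) ∧ Ok n a :=
  (Z_finite n).mem_toFinset

noncomputable def hZ (n : ℕ) : Polynomial ℤ := ∑ a ∈ Zfin n, X ^ cnt n a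

lemma zigzagH_eq_hZ (n : ℕ) : zigzagH n = hZ n := by
  unfold zigzagH hZ
  rw [← finsum_mem_coe_finset]
  apply finsum_mem_eq_of_bijOn (ext n)
  · refine ⟨?_, ?_, ?_⟩
    · intro a ha
      rw [Set.mem_setOf_eq, mem_iff_ext_Z] at ha
      rw [Finset.mem_coe, mem_Zfin]
      exact ha
    · intro a _ b _ hab
      funext i
      have := congrFun hab i.val
      rwa [ext_val, ext_val] at this
    · intro b hb
      rw [Finset.mem_coe, mem_Zfin] at hb
      refine ⟨fun i => b i.val, ?_, ?_⟩
      · rw [Set.mem_setOf_eq, mem_polytope_iff]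
        intro I hI
        exact ideal_of_ok hb.2 I hI
      · funext i
        by_cases h : i < n
        · simp [ext, h]
        · simp [ext, h, hb.1 i (le_of_not_gt h)]
  · intro a _
    congr 1
    apply Finset.card_bij (fun (i : Fin n) _ => i.val)
    · intro i hi
      rw [Finset.mem_filter] at hi
      rw [Finset.mem_filter, Finset.mem_range]
      exact ⟨i.isLt, by rw [ext_val]; exact hi.2⟩
    · intro i _ j _ h; exact Fin.ext h
    · intro j hj
      rw [Finset.mem_filter, Finset.mem_range] at hj
      refine ⟨⟨j, hj.1⟩, ?_, rfl⟩
      rw [Finset.mem_filter]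
      refine ⟨Finset.mem_univ _, ?_⟩
      have := hj.2
      rwa [show j = ((⟨j, hj.1⟩ : Fin n) : ℕ) from rfl, ext_val] at this

lemma hZ_zero : hZ 0 = 1 := by
  have hset : Zfin 0 = {fun _ => 0} := by
    apply Finset.ext; intro a
    rw [mem_Zfin, Finset.mem_singleton]
    constructor
    · intro ⟨h1, _⟩; funext i; exact h1 i (Nat.zero_le i)
    · rintro rfl
      exact ⟨fun i _ => rfl, fun l r _ _ hr _ => absurd hr (Nat.not_lt_zero r)⟩
  rw [hZ, hset, Finset.sum_singleton]
  simp [cnt]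

lemma hZ_one : hZ 1 = 1 + X := by
  classical
  have hset : Zfin 1 = {(fun _ => 0 : ℕ → ℕ), (fun i => if i = 0 then 1 else 0)} := by
    apply Finset.ext; intro a
    rw [mem_Zfin, Finset.mem_insert, Finset.mem_singleton]
    constructor
    · intro ⟨h1, h2⟩
      have ha0 : a 0 ≤ 1 := by
        have := h2 0 0 Even.zero le_rfl Nat.zero_lt_one (Or.inr rfl)
        simpa using this
      rcases Nat.le_one_iff_eq_zero_or_eq_one.mp ha0 with h | h
      · left; funext i
        rcases Nat.eq_zero_or_pos i with rfl | hi
        · exact h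
        · exact h1 i hi
      · right; funext i
        rcases Nat.eq_zero_or_pos i with rfl | hi
        · simpa using h
        · simp [Nat.pos_iff_ne_zero.mp hi, h1 i hi]
    · intro h
      rcases h with rfl | rfl
      · exact ⟨fun i _ => rfl, fun l r _ _ _ _ => by simp⟩
      · refine ⟨fun i hi => by simp [Nat.pos_iff_ne_zero.mp hi], ?_⟩
        intro l r _ hlr hr _
        have hl : l = 0 := by omega
        have hrr : r = 0 := by omega
        subst hl; subst hrr
        simp
  rw [hZ, hset]
  have hne : (fun _ => 0 : ℕ → ℕ) ≠ (fun i => if i = 0 then 1 else 0) := by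
    intro h
    have := congrFun h 0
    simp at this
  rw [Finset.sum_pair hne]
  have c0 : cnt 1 (fun _ => 0 : ℕ → ℕ) = 0 := by simp [cnt]
  have c1 : cnt 1 (fun i => if i = 0 then 1 else 0 : ℕ → ℕ) = 1 := by
    simp [cnt, Finset.range_one]
  rw [c0, c1, pow_zero, pow_one]
lemma sum_update_top {a : ℕ → ℕ} {l m v : ℕ} (h : l ≤ m) :
    (∑ i ∈ Finset.Icc l m, Function.update a m v i) + a m
      = (∑ i ∈ Finset.Icc l m, a i) + v := by
  rcases Nat.eq_or_lt_of_le h with rfl | hlt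
  · rw [Finset.Icc_self, Finset.sum_singleton, Finset.sum_singleton, Function.update_self]
    omega
  · obtain ⟨r', rfl⟩ : ∃ r', m = r' + 1 := ⟨m - 1, by omega⟩
    rw [Finset.sum_Icc_succ_top (by omega), Finset.sum_Icc_succ_top (by omega),
      Function.update_self, sum_update_of_gt (by omega)]
    omega

lemma Ok_congr {n : ℕ} {a b : ℕ → ℕ} (h : ∀ i, i < n → a i = b i) (ha : Ok n a) : Ok n b := by
  intro l r hl hlr hr hc
  rw [← Finset.sum_congr rfl (fun i hi => h i (by have := (Finset.mem_Icc.mp hi).2; omega))]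
  exact ha l r hl hlr hr hc

/-- key sum bound up to the top index, for elements of `Z m` -/
lemma sum_to_top {m : ℕ} {c : ℕ → ℕ} (hc : c ∈ Z m) {l : ℕ} (hl : Even l) (hlm : l ≤ m) :
    ∑ i ∈ Finset.Icc l m, c i ≤ m - l := by
  rcases Nat.eq_or_lt_of_le hlm with rfl | hlt
  · rw [Finset.Icc_self, Finset.sum_singleton, hc.1 l le_rfl]
    exact Nat.zero_le _
  · obtain ⟨r', rfl⟩ : ∃ r', m = r' + 1 := ⟨m - 1, by omega⟩
    rw [Finset.sum_Icc_succ_top (by omega), hc.1 (r'+1) le_rfl]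
    have := hc.2 l r' hl (by omega) (by omega) (Or.inr rfl)
    omega

lemma hmulX (t : ℕ) : X * hZ t = ∑ a ∈ Zfin t, (X : Polynomial ℤ) ^ (cnt t a + 1) := by
  rw [hZ, Finset.mul_sum]
  apply Finset.sum_congr rfl
  intro a _
  rw [pow_succ, mul_comm]

/-! ### even case -/

lemma Ok_down_even {m : ℕ} (hm : Even m) {a : ℕ → ℕ} (ha : Ok (m+2) a) : Ok (m+1) a := by
  intro l r hl hlr hr hc
  apply ha l r hl hlr (by omega)
  left
  rcases hc with h | h
  · exact h
  · rw [show r = m by omega]; exact hm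

lemma even_E0 {m : ℕ} (hm : Even m) :
    (Zfin (m+2)).filter (fun a => a (m+1) = 0) = Zfin (m+1) := by
  classical
  apply Finset.ext
  intro a
  rw [Finset.mem_filter, mem_Zfin, mem_Zfin]
  constructor
  · rintro ⟨⟨hsupp, hok⟩, h0⟩
    refine ⟨fun i hi => ?_, Ok_down_even hm hok⟩
    rcases Nat.eq_or_lt_of_le hi with rfl | hlt
    · exact h0
    · exact hsupp i (by omega)
  · rintro ⟨hsupp, hok⟩
    have h0 : a (m+1) = 0 := hsupp (m+1) le_rfl
    refine ⟨⟨fun i hi => hsupp i (by omega), ?_⟩, h0⟩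
    intro l r hl hlr hr hc
    have hr2 : r ≤ m + 1 := by omega
    rcases Nat.eq_or_lt_of_le hr2 with rfl | hrlt
    · -- r = m+1
      have hlm : l ≤ m := by
        rcases Nat.eq_or_lt_of_le hlr with rfl | h
        · exfalso; rw [Nat.even_add_one] at hl; exact hl hm
        · omega
      have h1 := hok l m hl hlm (by omega) (Or.inl hm)
      rw [Finset.sum_Icc_succ_top (by omega), h0]
      omega
    · have hev : Even r := by
        rcases hc with h | h
        · exact h
        · omega
      exact hok l r hl hlr (by omega) (Or.inl hev)

lemma even_E1_mem {m : ℕ} (hm : Even m) {a : ℕ → ℕ}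
    (ha : a ∈ Zfin (m+2)) :
    Function.update a (m+1) 0 ∈ Zfin (m+1) := by
  rw [mem_Zfin] at ha ⊢
  constructor
  · intro i hi
    rcases Nat.eq_or_lt_of_le hi with rfl | hlt
    · exact Function.update_self _ _ _
    · rw [Function.update_of_ne (by omega)]
      exact ha.1 i (by omega)
  · exact Ok_congr (fun i hi => (Function.update_of_ne (by omega) _ _).symm)
      (Ok_down_even hm ha.2)

lemma even_E1_mem' {m : ℕ} (hm : Even m) {b : ℕ → ℕ}
    (hb : b ∈ Zfin (m+1)) :
    Function.update b (m+1) 1 ∈ Zfin (m+2) := by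
  rw [mem_Zfin] at hb ⊢
  constructor
  · intro i hi
    rw [Function.update_of_ne (by omega)]
    exact hb.1 i (by omega)
  · intro l r hl hlr hr hc
    have hr2 : r ≤ m + 1 := by omega
    rcases Nat.eq_or_lt_of_le hr2 with rfl | hrlt
    · have hlm : l ≤ m := by
        rcases Nat.eq_or_lt_of_le hlr with rfl | h
        · exfalso; rw [Nat.even_add_one] at hl; exact hl hm
        · omega
      have h1 := hb.2 l m hl hlm (by omega) (Or.inl hm)
      rw [Finset.sum_Icc_succ_top (by omega), Function.update_self,
        sum_update_of_gt (by omega)]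
      omega
    · have hev : Even r := by
        rcases hc with h | h
        · exact h
        · omega
      rw [sum_update_of_gt (by omega)]
      exact hb.2 l r hl hlr (by omega) (Or.inl hev)

lemma even_E2_facts {m : ℕ} (hm : Even m) {a : ℕ → ℕ}
    (ha : a ∈ Zfin (m+2)) (h2 : 2 ≤ a (m+1)) : a m = 0 ∧ a (m+1) = 2 := by
  rw [mem_Zfin] at ha
  have := ha.2 m (m+1) hm (by omega) (by omega) (Or.inr rfl)
  rw [Finset.sum_Icc_succ_top (by omega), Finset.Icc_self, Finset.sum_singleton] at this
  omega

lemma even_E2_mem {m : ℕ} (hm : Even m) {a : ℕ → ℕ}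
    (ha : a ∈ Zfin (m+2)) (h2 : 2 ≤ a (m+1)) :
    Function.update a (m+1) 0 ∈ Zfin m := by
  obtain ⟨ham, ham1⟩ := even_E2_facts hm ha h2
  rw [mem_Zfin] at ha ⊢
  constructor
  · intro i hi
    rcases Nat.lt_or_ge i (m+1) with hlt | hge
    · rw [Function.update_of_ne (by omega), show i = m by omega]; exact ham
    · rcases Nat.eq_or_lt_of_le hge with rfl | hlt2
      · exact Function.update_self _ _ _
      · rw [Function.update_of_ne (by omega)]; exact ha.1 i (by omega)
  · intro l r hl hlr hr hc
    rw [sum_update_of_gt (by omega)]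
    rcases hc with hev | hrm
    · exact ha.2 l r hl hlr (by omega) (Or.inl hev)
    · -- r + 1 = m
      have key := ha.2 l (r+2) hl (by omega) (by omega) (Or.inr (by omega))
      rw [Finset.sum_Icc_succ_top (by omega), Finset.sum_Icc_succ_top (by omega)] at key
      have e1 : a (r+1) = 0 := by rw [show r + 1 = m by omega]; exact ham
      have e2 : a (r+1+1) = 2 := by rw [show r + 1 + 1 = m + 1 by omega]; exact ham1
      omega

lemma even_E2_mem' {m : ℕ} (hm : Even m) {c : ℕ → ℕ}
    (hc : c ∈ Zfin m) :
    Function.update c (m+1) 2 ∈ Zfin (m+2) := by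
  rw [mem_Zfin] at hc ⊢
  have hcm : c m = 0 := hc.1 m le_rfl
  constructor
  · intro i hi
    rw [Function.update_of_ne (by omega)]
    exact hc.1 i (by omega)
  · intro l r hl hlr hr hc2
    have hr2 : r ≤ m + 1 := by omega
    rcases Nat.eq_or_lt_of_le hr2 with rfl | hrlt
    · -- r = m + 1
      have hlm : l ≤ m := by
        rcases Nat.eq_or_lt_of_le hlr with rfl | h
        · exfalso; rw [Nat.even_add_one] at hl; exact hl hm
        · omega
      rw [Finset.sum_Icc_succ_top (by omega), Function.update_self,
        sum_update_of_gt (by omega)]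
      have := sum_to_top hc hl hlm
      omega
    · rw [sum_update_of_gt (by omega)]
      have hev : Even r := by
        rcases hc2 with h | h
        · exact h
        · omega
      rcases Nat.lt_or_ge r m with hrm | hge
      · exact hc.2 l r hl hlr (by omega) (Or.inl hev)
      · -- r = m
        have hrm : r = m := by omega
        subst hrm
        have := sum_to_top hc hl hlr
        omega

lemma hZ_rec_even {m : ℕ} (hm : Even m) :
    hZ (m+2) = hZ (m+1) + X * hZ (m+1) + X * hZ m := by
  classical
  have split1 := Finset.sum_filter_add_sum_filter_not (Zfin (m+2))
    (fun a => a (m+1) = 0) (fun a => (X : Polynomial ℤ) ^ cnt (m+2) a)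
  have split2 := Finset.sum_filter_add_sum_filter_not
    ((Zfin (m+2)).filter (fun a => ¬ a (m+1) = 0))
    (fun a => a (m+1) = 1) (fun a => (X : Polynomial ℤ) ^ cnt (m+2) a)
  have e0 : ∑ a ∈ (Zfin (m+2)).filter (fun a => a (m+1) = 0), (X : Polynomial ℤ) ^ cnt (m+2) a
      = hZ (m+1) := by
    rw [even_E0 hm, hZ]
    apply Finset.sum_congr rfl
    intro a ha
    rw [cnt_succ_of_eq ((mem_Zfin.mp ha).1 (m+1) le_rfl)]
  have e1 : ∑ a ∈ ((Zfin (m+2)).filter (fun a => ¬ a (m+1) = 0)).filter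
        (fun a => a (m+1) = 1), (X : Polynomial ℤ) ^ cnt (m+2) a
      = X * hZ (m+1) := by
    rw [hmulX]
    apply Finset.sum_nbij' (fun a => Function.update a (m+1) 0)
      (fun b => Function.update b (m+1) 1)
    · intro a ha
      rw [Finset.mem_filter, Finset.mem_filter] at ha
      exact even_E1_mem hm ha.1.1
    · intro b hb
      rw [Finset.mem_filter, Finset.mem_filter]
      refine ⟨⟨even_E1_mem' hm hb, ?_⟩, ?_⟩ <;> simp
    · intro a ha
      rw [Finset.mem_filter, Finset.mem_filter] at ha
      rw [Function.update_idem]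
      exact Function.update_eq_self_iff.mpr ha.2.symm
    · intro b hb
      rw [Function.update_idem]
      exact Function.update_eq_self_iff.mpr ((mem_Zfin.mp hb).1 (m+1) le_rfl).symm
    · intro a ha
      rw [Finset.mem_filter, Finset.mem_filter] at ha
      congr 1
      rw [cnt_succ_of_ne (by rw [ha.2]; omega)]
      congr 1
      apply cnt_congr
      intro i hi
      rw [Function.update_of_ne (by omega)]
  have e2 : ∑ a ∈ ((Zfin (m+2)).filter (fun a => ¬ a (m+1) = 0)).filter
        (fun a => ¬ a (m+1) = 1), (X : Polynomial ℤ) ^ cnt (m+2) a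
      = X * hZ m := by
    rw [hmulX]
    apply Finset.sum_nbij' (fun a => Function.update a (m+1) 0)
      (fun c => Function.update c (m+1) 2)
    · intro a ha
      rw [Finset.mem_filter, Finset.mem_filter] at ha
      exact even_E2_mem hm ha.1.1 (by omega)
    · intro c hc
      rw [Finset.mem_filter, Finset.mem_filter]
      refine ⟨⟨even_E2_mem' hm hc, ?_⟩, ?_⟩ <;> simp
    · intro a ha
      rw [Finset.mem_filter, Finset.mem_filter] at ha
      rw [Function.update_idem]
      exact Function.update_eq_self_iff.mpr (even_E2_facts hm ha.1.1 (by omega)).2.symm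
    · intro c hc
      rw [Function.update_idem]
      exact Function.update_eq_self_iff.mpr ((mem_Zfin.mp hc).1 (m+1) (by omega)).symm
    · intro a ha
      rw [Finset.mem_filter, Finset.mem_filter] at ha
      obtain ⟨ham, ham1⟩ := even_E2_facts hm ha.1.1 (by omega)
      congr 1
      rw [cnt_succ_of_ne (by omega), cnt_succ_of_eq ham]
      congr 1
      apply cnt_congr
      intro i hi
      rw [Function.update_of_ne (by omega)]
  rw [hZ, ← split1, ← split2, e0, e1, e2]
  ring
/-! ### odd case -/

lemma Ok_down_odd {m : ℕ} (hm : Odd m) {a : ℕ → ℕ} (ha : Ok (m+2) a) : Ok m a := by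
  intro l r hl hlr hr hc
  apply ha l r hl hlr (by omega)
  left
  rcases hc with h | h
  · exact h
  · rw [show r = m - 1 by omega]
    exact Nat.Odd.sub_odd hm odd_one

lemma odd_bound1 {m : ℕ} (hm : Odd m) {a : ℕ → ℕ} (ha : a ∈ Zfin (m+2)) : a (m+1) ≤ 1 := by
  rw [mem_Zfin] at ha
  have := ha.2 (m+1) (m+1) (Odd.add_one hm) le_rfl (by omega) (Or.inl (Odd.add_one hm))
  rw [Finset.Icc_self, Finset.sum_singleton] at this
  omega

/-- the unique value forced at position `m` in the "excess" case -/
def gm (m : ℕ) (c : ℕ → ℕ) : ℕ :=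
  m + 2 - ((Finset.range m).filter (fun l => Even l)).sup
    (fun l => l + ∑ i ∈ Finset.Icc l m, c i)

lemma gm_facts {m : ℕ} (hm : Odd m) {c : ℕ → ℕ} (hc : c ∈ Z m) :
    2 ≤ gm m c ∧
    (∀ l, Even l → l < m → gm m c + (l + ∑ i ∈ Finset.Icc l m, c i) ≤ m + 2) ∧
    (∃ l₀, Even l₀ ∧ l₀ < m ∧ gm m c + (l₀ + ∑ i ∈ Finset.Icc l₀ m, c i) = m + 2) := by
  classical
  have hm1 : 1 ≤ m := hm.pos
  set E := (Finset.range m).filter (fun l => Even l) with hE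
  set f : ℕ → ℕ := fun l => l + ∑ i ∈ Finset.Icc l m, c i with hf
  have hne : E.Nonempty := ⟨0, by
    rw [hE, Finset.mem_filter, Finset.mem_range]
    exact ⟨by omega, Even.zero⟩⟩
  have hsup_le : E.sup f ≤ m := by
    apply Finset.sup_le
    intro l hl
    rw [hE, Finset.mem_filter, Finset.mem_range] at hl
    have h1 := sum_to_top hc hl.2 (le_of_lt hl.1)
    show l + ∑ i ∈ Finset.Icc l m, c i ≤ m
    omega
  obtain ⟨l₀, hl₀, hsup⟩ := Finset.exists_mem_eq_sup E hne f
  rw [hE, Finset.mem_filter, Finset.mem_range] at hl₀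
  have hgm : gm m c = m + 2 - E.sup f := rfl
  have hfl₀ : l₀ + ∑ i ∈ Finset.Icc l₀ m, c i = E.sup f := hsup.symm
  refine ⟨by rw [hgm]; omega, ?_, ⟨l₀, hl₀.2, hl₀.1, ?_⟩⟩
  · intro l hl hlm
    have hle : l + ∑ i ∈ Finset.Icc l m, c i ≤ E.sup f :=
      Finset.le_sup (f := f) (by rw [hE, Finset.mem_filter, Finset.mem_range]; exact ⟨hlm, hl⟩)
    rw [hgm]
    omega
  · rw [hgm]
    omega

lemma gm_char {m : ℕ} (hm : Odd m) {c : ℕ → ℕ} (hc : c ∈ Z m) {x : ℕ}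
    (h1 : ∀ l, Even l → l < m → x + (l + ∑ i ∈ Finset.Icc l m, c i) ≤ m + 2)
    (h2 : ∃ l, Even l ∧ l < m ∧ m + 2 ≤ x + (l + ∑ i ∈ Finset.Icc l m, c i)) :
    x = gm m c := by
  obtain ⟨hg2, hall, ⟨l₀, hl₀e, hl₀m, heq⟩⟩ := gm_facts hm hc
  -- x ≤ gm m c : apply h1 at l₀ where gm is tight? need: at the sup-attaining l₀.
  have hx_le : x + (l₀ + ∑ i ∈ Finset.Icc l₀ m, c i) ≤ m + 2 := h1 l₀ hl₀e hl₀m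
  obtain ⟨l₁, hl₁e, hl₁m, hge⟩ := h2
  have hx_ge := hall l₁ hl₁e hl₁m
  omega

lemma odd_D0 {m : ℕ} (hm : Odd m) [DecidablePred (fun a : ℕ → ℕ => Ok (m+1) a)] :
    ((Zfin (m+2)).filter (fun a => ¬ a (m+1) = 1)).filter (fun a => Ok (m+1) a)
      = Zfin (m+1) := by
  apply Finset.ext
  intro a
  rw [Finset.mem_filter, Finset.mem_filter, mem_Zfin, mem_Zfin]
  constructor
  · rintro ⟨⟨⟨hsupp, hok⟩, hne1⟩, hok1⟩
    have hb : a (m+1) ≤ 1 := by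
      have := hok (m+1) (m+1) (Odd.add_one hm) le_rfl (by omega) (Or.inl (Odd.add_one hm))
      rw [Finset.Icc_self, Finset.sum_singleton] at this
      omega
    refine ⟨fun i hi => ?_, hok1⟩
    rcases Nat.eq_or_lt_of_le hi with rfl | hlt
    · omega
    · exact hsupp i (by omega)
  · rintro ⟨hsupp, hok⟩
    have h0 : a (m+1) = 0 := hsupp (m+1) le_rfl
    refine ⟨⟨⟨fun i hi => hsupp i (by omega), ?_⟩, by omega⟩, hok⟩
    intro l r hl hlr hr hc
    have hr2 : r ≤ m + 1 := by omega
    rcases Nat.eq_or_lt_of_le hr2 with rfl | hrlt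
    · rcases Nat.eq_or_lt_of_le hlr with rfl | hllt
      · rw [Finset.Icc_self, Finset.sum_singleton, h0]; omega
      · have h1 := hok l m hl (by omega) (by omega) (Or.inr rfl)
        rw [Finset.sum_Icc_succ_top (by omega), h0]
        omega
    · have hev : Even r := by
        rcases hc with h | h
        · exact h
        · omega
      exact hok l r hl hlr (by omega) (Or.inl hev)

lemma odd_D1_mem {m : ℕ} (hm : Odd m) {a : ℕ → ℕ}
    (ha : a ∈ Zfin (m+2)) (h1 : a (m+1) = 1) :
    Function.update a (m+1) 0 ∈ Zfin (m+1) := by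
  rw [mem_Zfin] at ha ⊢
  constructor
  · intro i hi
    rcases Nat.eq_or_lt_of_le hi with rfl | hlt
    · exact Function.update_self _ _ _
    · rw [Function.update_of_ne (by omega)]
      exact ha.1 i (by omega)
  · intro l r hl hlr hr hc
    rw [sum_update_of_gt (by omega)]
    rcases hc with hev | hrm
    · exact ha.2 l r hl hlr (by omega) (Or.inl hev)
    · -- r = m
      have key := ha.2 l (m+1) hl (by omega) (by omega) (Or.inl (Odd.add_one hm))
      rw [Finset.sum_Icc_succ_top (by omega), h1] at key
      rw [show r = m by omega]
      omega

lemma odd_D1_mem' {m : ℕ} (hm : Odd m) {b : ℕ → ℕ}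
    (hb : b ∈ Zfin (m+1)) :
    Function.update b (m+1) 1 ∈ Zfin (m+2) := by
  rw [mem_Zfin] at hb ⊢
  constructor
  · intro i hi
    rw [Function.update_of_ne (by omega)]
    exact hb.1 i (by omega)
  · intro l r hl hlr hr hc
    have hr2 : r ≤ m + 1 := by omega
    rcases Nat.eq_or_lt_of_le hr2 with rfl | hrlt
    · rcases Nat.eq_or_lt_of_le hlr with rfl | hllt
      · rw [Finset.Icc_self, Finset.sum_singleton, Function.update_self]
        omega
      · have h1 := hb.2 l m hl (by omega) (by omega) (Or.inr rfl)
        rw [Finset.sum_Icc_succ_top (by omega), Function.update_self,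
          sum_update_of_gt (by omega)]
        omega
    · have hev : Even r := by
        rcases hc with h | h
        · exact h
        · omega
      rw [sum_update_of_gt (by omega)]
      exact hb.2 l r hl hlr (by omega) (Or.inl hev)

lemma odd_D2_mem {m : ℕ} (hm : Odd m) {a : ℕ → ℕ}
    (ha : a ∈ Zfin (m+2)) (h0 : a (m+1) = 0) :
    Function.update a m 0 ∈ Zfin m := by
  rw [mem_Zfin] at ha ⊢
  constructor
  · intro i hi
    rcases Nat.eq_or_lt_of_le hi with rfl | hlt
    · exact Function.update_self _ _ _
    · rw [Function.update_of_ne (by omega)]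
      rcases Nat.eq_or_lt_of_le hlt with h | h
      · rw [← h]; exact h0
      · exact ha.1 i (by omega)
  · exact Ok_congr (fun i hi => (Function.update_of_ne (by omega) _ _).symm)
      (Ok_down_odd hm ha.2)

lemma odd_D2_facts {m : ℕ} (hm : Odd m) {a : ℕ → ℕ}
    (ha : a ∈ Zfin (m+2)) (h0 : a (m+1) = 0) (hno : ¬ Ok (m+1) a) :
    a m = gm m (Function.update a m 0) ∧ 2 ≤ a m := by
  have hpa := odd_D2_mem hm ha h0
  rw [mem_Zfin] at ha hpa
  obtain ⟨pa, hpadef⟩ : ∃ pa, pa = Function.update a m 0 := ⟨_, rfl⟩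
  rw [← hpadef] at hpa ⊢
  -- extract a violated constraint, necessarily with r = m
  rw [Ok] at hno
  push_neg at hno
  obtain ⟨l₀, r, hl₀, hlr, hrlt, hcc, hviol⟩ := hno
  have hrm : r = m := by
    rcases hcc with hev | h
    · by_contra hne
      exact absurd (ha.2 l₀ r hl₀ hlr (by omega) (Or.inl hev)) (by omega)
    · omega
  rw [hrm] at hviol hlr
  have hl₀m : l₀ < m := by
    rcases Nat.eq_or_lt_of_le hlr with heq2 | h
    · exfalso
      rw [Nat.odd_iff] at hm
      rw [Nat.even_iff] at hl₀
      omega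
    · exact h
  -- relation between sums of a and pa up to m
  have hrel : ∀ l, l ≤ m →
      (∑ i ∈ Finset.Icc l m, pa i) + a m = ∑ i ∈ Finset.Icc l m, a i := by
    intro l hl
    have := sum_update_top (a := a) (l := l) (m := m) (v := 0) hl
    rw [hpadef]
    omega
  have h1 : ∀ l, Even l → l < m → a m + (l + ∑ i ∈ Finset.Icc l m, pa i) ≤ m + 2 := by
    intro l hl hlm
    have key := ha.2 l (m+1) hl (by omega) (by omega) (Or.inl (Odd.add_one hm))
    rw [Finset.sum_Icc_succ_top (by omega), h0] at key
    have := hrel l (by omega)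
    omega
  have h2 : m + 2 ≤ a m + (l₀ + ∑ i ∈ Finset.Icc l₀ m, pa i) := by
    have := hrel l₀ hlr
    omega
  constructor
  · exact gm_char hm hpa h1 ⟨l₀, hl₀, hl₀m, h2⟩
  · have hb := sum_to_top hpa (l := l₀) hl₀ hlr
    omega

lemma odd_D2_mem' {m : ℕ} (hm : Odd m) {c : ℕ → ℕ} (hc : c ∈ Zfin m) :
    Function.update c m (gm m c) ∈ Zfin (m+2) ∧
    (Function.update c m (gm m c)) (m+1) = 0 ∧
    ¬ Ok (m+1) (Function.update c m (gm m c)) := by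
  rw [mem_Zfin] at hc
  obtain ⟨hg2, hall, ⟨l₀, hl₀e, hl₀m, heq⟩⟩ := gm_facts hm hc
  have hcm : c m = 0 := hc.1 m le_rfl
  have hcm1 : c (m+1) = 0 := hc.1 (m+1) (by omega)
  obtain ⟨a, hadef⟩ : ∃ a, a = Function.update c m (gm m c) := ⟨_, rfl⟩
  rw [← hadef]
  have ham1 : a (m+1) = 0 := by
    rw [hadef, Function.update_of_ne (by omega)]; exact hcm1
  have hrel : ∀ l, l ≤ m →
      ∑ i ∈ Finset.Icc l m, a i = (∑ i ∈ Finset.Icc l m, c i) + gm m c := by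
    intro l hl
    have := sum_update_top (a := c) (l := l) (m := m) (v := gm m c) hl
    rw [hadef]
    omega
  refine ⟨?_, ham1, ?_⟩
  · rw [mem_Zfin]
    constructor
    · intro i hi
      rw [hadef, Function.update_of_ne (by omega)]
      exact hc.1 i (by omega)
    · intro l r hl hlr hr hc2
      have hrcases : r < m ∨ r = m + 1 := by
        rcases hc2 with hev | h
        · rcases Nat.lt_trichotomy r m with h1 | h1 | h1
          · exact Or.inl h1
          · exfalso
            rw [Nat.odd_iff] at hm
            rw [Nat.even_iff] at hev
            omega
          · right; omega
        · right; omega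
      rcases hrcases with hrm | hrm
      · rw [hadef, sum_update_of_gt (by omega)]
        exact hc.2 l r hl hlr (by omega) (Or.inl (by
          rcases hc2 with hev | h
          · exact hev
          · omega))
      · subst hrm
        rcases Nat.eq_or_lt_of_le hlr with rfl | hllt
        · rw [Finset.Icc_self, Finset.sum_singleton, ham1]; omega
        · have hlm : l < m := by
            rcases Nat.lt_trichotomy l m with h1 | h1 | h1
            · exact h1
            · exfalso
              rw [Nat.odd_iff] at hm
              rw [Nat.even_iff] at hl
              omega
            · omega
          have := hall l hl hlm
          rw [Finset.sum_Icc_succ_top (by omega), ham1, hrel l (by omega)]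
          omega
  · intro hok
    have := hok l₀ m hl₀e (by omega) (by omega) (Or.inr rfl)
    rw [hrel l₀ (by omega)] at this
    omega

lemma hZ_rec_odd {m : ℕ} (hm : Odd m) :
    hZ (m+2) = hZ (m+1) + X * hZ (m+1) + X * hZ m := by
  classical
  have split1 := Finset.sum_filter_add_sum_filter_not (Zfin (m+2))
    (fun a => a (m+1) = 1) (fun a => (X : Polynomial ℤ) ^ cnt (m+2) a)
  have split2 := Finset.sum_filter_add_sum_filter_not
    ((Zfin (m+2)).filter (fun a => ¬ a (m+1) = 1))
    (fun a => Ok (m+1) a) (fun a => (X : Polynomial ℤ) ^ cnt (m+2) a)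
  have e0 : ∑ a ∈ ((Zfin (m+2)).filter (fun a => ¬ a (m+1) = 1)).filter
        (fun a => Ok (m+1) a), (X : Polynomial ℤ) ^ cnt (m+2) a = hZ (m+1) := by
    rw [odd_D0 hm, hZ]
    apply Finset.sum_congr rfl
    intro a ha
    rw [cnt_succ_of_eq ((mem_Zfin.mp ha).1 (m+1) le_rfl)]
  have e1 : ∑ a ∈ (Zfin (m+2)).filter (fun a => a (m+1) = 1),
        (X : Polynomial ℤ) ^ cnt (m+2) a = X * hZ (m+1) := by
    rw [hmulX]
    apply Finset.sum_nbij' (fun a => Function.update a (m+1) 0)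
      (fun b => Function.update b (m+1) 1)
    · intro a ha
      rw [Finset.mem_filter] at ha
      exact odd_D1_mem hm ha.1 ha.2
    · intro b hb
      rw [Finset.mem_filter]
      exact ⟨odd_D1_mem' hm hb, by simp⟩
    · intro a ha
      rw [Finset.mem_filter] at ha
      rw [Function.update_idem]
      exact Function.update_eq_self_iff.mpr ha.2.symm
    · intro b hb
      rw [Function.update_idem]
      exact Function.update_eq_self_iff.mpr ((mem_Zfin.mp hb).1 (m+1) le_rfl).symm
    · intro a ha
      rw [Finset.mem_filter] at ha
      congr 1
      rw [cnt_succ_of_ne (by omega)]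
      congr 1
      apply cnt_congr
      intro i hi
      rw [Function.update_of_ne (by omega)]
  have e2 : ∑ a ∈ ((Zfin (m+2)).filter (fun a => ¬ a (m+1) = 1)).filter
        (fun a => ¬ Ok (m+1) a), (X : Polynomial ℤ) ^ cnt (m+2) a = X * hZ m := by
    rw [hmulX]
    have hval : ∀ a ∈ ((Zfin (m+2)).filter (fun a => ¬ a (m+1) = 1)).filter
        (fun a => ¬ Ok (m+1) a), a (m+1) = 0 := by
      intro a ha
      rw [Finset.mem_filter, Finset.mem_filter] at ha
      have := odd_bound1 hm ha.1.1
      omega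
    apply Finset.sum_nbij' (fun a => Function.update a m 0)
      (fun c => Function.update c m (gm m c))
    · intro a ha
      have h0 := hval a ha
      rw [Finset.mem_filter, Finset.mem_filter] at ha
      exact odd_D2_mem hm ha.1.1 h0
    · intro c hc
      obtain ⟨h1, h2, h3⟩ := odd_D2_mem' hm hc
      rw [Finset.mem_filter, Finset.mem_filter]
      exact ⟨⟨h1, by omega⟩, h3⟩
    · intro a ha
      have h0 := hval a ha
      rw [Finset.mem_filter, Finset.mem_filter] at ha
      obtain ⟨heq, _⟩ := odd_D2_facts hm ha.1.1 h0 ha.2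
      have hgm_eq : gm m (Function.update a m 0) = a m := heq.symm
      rw [Function.update_idem, hgm_eq]
      exact Function.update_eq_self _ _
    · intro c hc
      rw [Function.update_idem]
      exact Function.update_eq_self_iff.mpr ((mem_Zfin.mp hc).1 m le_rfl).symm
    · intro a ha
      have h0 := hval a ha
      rw [Finset.mem_filter, Finset.mem_filter] at ha
      obtain ⟨heq, h2⟩ := odd_D2_facts hm ha.1.1 h0 ha.2
      congr 1
      rw [cnt_succ_of_eq h0, cnt_succ_of_ne (by omega)]
      congr 1
      apply cnt_congr
      intro i hi
      rw [Function.update_of_ne (by omega)]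
  rw [hZ, ← split1, ← split2, e0, e1, e2]
  ring
lemma zigzagH_rec {n : ℕ} (hn : 2 ≤ n) :
    zigzagH n = (1 + X) * zigzagH (n - 1) + X * zigzagH (n - 2) := by
  obtain ⟨m, rfl⟩ : ∃ m, n = m + 2 := ⟨n - 2, by omega⟩
  rw [show m + 2 - 1 = m + 1 by omega, show m + 2 - 2 = m by omega,
    zigzagH_eq_hZ, zigzagH_eq_hZ, zigzagH_eq_hZ]
  rcases Nat.even_or_odd m with hm | hm
  · rw [hZ_rec_even hm]; ring
  · rw [hZ_rec_odd hm]; ring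

end ZZ

/-- the `h`-polynomial of the zig-zag poset satisfies the
Delannoy recurrence with the Delannoy initial conditions, hence equals the
`n`-th Delannoy polynomial, and its value at `1` (the number of lattice
points) satisfies the Pell recurrence. -/
theorem zigzag_h_eq_delannoy :
    zigzagH 0 = 1 ∧ zigzagH 1 = 1 + X ∧
    (∀ n, 2 ≤ n → zigzagH n = (1 + X) * zigzagH (n - 1) + X * zigzagH (n - 2)) ∧
    (∀ n, zigzagH n = delannoy n) ∧
    (∀ n, 2 ≤ n →
      (zigzagH n).eval 1 = 2 * (zigzagH (n - 1)).eval 1 + (zigzagH (n - 2)).eval 1) := by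
  have h0 : zigzagH 0 = 1 := by rw [ZZ.zigzagH_eq_hZ, ZZ.hZ_zero]
  have h1 : zigzagH 1 = 1 + X := by rw [ZZ.zigzagH_eq_hZ, ZZ.hZ_one]
  have hrec : ∀ n, 2 ≤ n →
      zigzagH n = (1 + X) * zigzagH (n - 1) + X * zigzagH (n - 2) :=
    fun n hn => ZZ.zigzagH_rec hn
  refine ⟨h0, h1, hrec, ?_, ?_⟩
  · intro n
    induction n using Nat.strong_induction_on with
    | _ n ih =>
      match n with
      | 0 => rw [h0, delannoy]
      | 1 => rw [h1, delannoy]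
      | (k + 2) =>
        rw [hrec (k + 2) (by omega), delannoy,
          show k + 2 - 1 = k + 1 by omega, show k + 2 - 2 = k by omega,
          ih (k + 1) (by omega), ih k (by omega)]
  · intro n hn
    rw [hrec n hn]
    simp only [eval_add, eval_mul, eval_one, eval_X]
    ring
end

section
/- Let τ_{m,n} be the ordinal sum of an m-element antichain below an n-element antichain. The lattice points of Q_{τ_{m,n}} are exactly the tuples (a₁,…,a_m,b₁,…,b_n) ∈ ℕ^{m+n} with a_i ∈ {0,1} for all i and, setting k = Σ a_i and writing c_j = max(b_j − 1, 0), the condition Σ_{j : b_j ≥ 1} (b_j − 1) ≤ m − k. Consequently the h-polynomial (counting lattice points by number of nonzero coordinates) equals Σ_{k=0}^m Σ_{ℓ=0}^n C(m−k+ℓ, ℓ) C(m,k) C(n,ℓ) t^{k+ℓ}. -/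
open Polynomial

/-- The ordinal sum of an `m`-element antichain below an `n`-element
antichain: every element of the first summand is below every element of the
second one. -/
def ordinalSumRel (m n : ℕ) (x y : Fin m ⊕ Fin n) : Prop :=
  x = y ∨ (x.isLeft = true ∧ y.isRight = true)

namespace OSAux

open Finset

lemma card_filter_eq_sum {E : Type*} [Fintype E] (x : E → ℕ) :
    (Finset.univ.filter (fun e => x e ≠ 0)).card = ∑ e, if x e ≠ 0 then 1 else 0 := by
  rw [Finset.card_eq_sum_ones, Finset.sum_filter]

noncomputable def g (n M : ℕ) : Polynomial ℤ :=
  ∑ b ∈ Fintype.piFinset (fun _ : Fin n => Finset.range (M + 2)),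
    if ∑ j, (b j - 1) ≤ M then (X : Polynomial ℤ) ^ (univ.filter (fun j => b j ≠ 0)).card else 0

lemma g_eq (n M B : ℕ) (h : M + 2 ≤ B) :
    ∑ b ∈ Fintype.piFinset (fun _ : Fin n => Finset.range B),
      (if ∑ j, (b j - 1) ≤ M then (X : Polynomial ℤ) ^ (univ.filter (fun j => b j ≠ 0)).card else 0)
      = g n M := by
  rw [g]
  refine (Finset.sum_subset (Fintype.piFinset_subset _ _ fun i => Finset.range_subset_range.2 h) ?_).symm
  intro b hb hnb
  simp only [Fintype.mem_piFinset, Finset.mem_range] at hb hnb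
  push_neg at hnb
  obtain ⟨j, hj⟩ := hnb
  have h1 : M + 1 ≤ b j - 1 := by omega
  have h2 : b j - 1 ≤ ∑ j : Fin n, (b j - 1) :=
    Finset.single_le_sum (f := fun j => b j - 1) (fun _ _ => Nat.zero_le _) (Finset.mem_univ j)
  rw [if_neg (by omega)]

lemma sum_piFinset_succ {M : Type*} [AddCommMonoid M] {n : ℕ} (S : Finset ℕ)
    (f : (Fin (n+1) → ℕ) → M) :
    ∑ b ∈ Fintype.piFinset (fun _ : Fin (n+1) => S), f b
      = ∑ v ∈ S, ∑ c ∈ Fintype.piFinset (fun _ : Fin n => S), f (Fin.cons v c) := by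
  rw [← Finset.sum_product']
  refine Finset.sum_nbij' (fun b => (b 0, Fin.tail b)) (fun p => Fin.cons p.1 p.2)
    ?_ ?_ ?_ ?_ ?_
  · intro b hb
    simp only [Fintype.mem_piFinset] at hb
    simp [Finset.mem_product, Fintype.mem_piFinset, Fin.tail, hb _]
  · intro p hp
    simp only [Finset.mem_product, Fintype.mem_piFinset] at hp
    simp only [Fintype.mem_piFinset]
    intro i
    refine Fin.cases ?_ ?_ i
    · simpa using hp.1
    · intro j; simpa using hp.2 j
  · intro b _; simp [Fin.cons_self_tail]
  · intro p _; simp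
  · intro b _; simp [Fin.cons_self_tail]

lemma supp_succ (n : ℕ) (b : Fin (n+1) → ℕ) :
    (Finset.univ.filter (fun j => b j ≠ 0)).card
      = (if b 0 ≠ 0 then 1 else 0) + (Finset.univ.filter (fun j : Fin n => b j.succ ≠ 0)).card := by
  rw [card_filter_eq_sum b, card_filter_eq_sum (fun j : Fin n => b j.succ), Fin.sum_univ_succ]

lemma cond_succ (n : ℕ) (b : Fin (n+1) → ℕ) :
    ∑ j : Fin (n+1), (b j - 1) = (b 0 - 1) + ∑ j : Fin n, (b j.succ - 1) := by
  rw [Fin.sum_univ_succ]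

lemma g_succ (n M : ℕ) :
    g (n+1) M = g n M + ∑ d ∈ Finset.range (M+1), X * g n (M - d) := by
  rw [g]
  rw [sum_piFinset_succ (Finset.range (M + 2))
    (fun b : Fin (n+1) → ℕ => if ∑ j, (b j - 1) ≤ M then (X : Polynomial ℤ) ^ (univ.filter (fun j => b j ≠ 0)).card else 0)]
  rw [Finset.sum_range_succ', add_comm (g n M)]
  congr 1
  · refine Finset.sum_congr rfl fun d hd => ?_
    have hdM : d ≤ M := by simpa [Nat.lt_succ_iff] using hd
    rw [← g_eq n (M - d) (M + 2) (by omega), Finset.mul_sum]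
    refine Finset.sum_congr rfl fun c _ => ?_
    rw [cond_succ _ (Fin.cons (d+1) c), supp_succ _ (Fin.cons (d+1) c)]
    simp only [Fin.cons_zero, Fin.cons_succ]
    have hiff : (d + 1 - 1 + ∑ j : Fin n, (c j - 1) ≤ M) ↔ (∑ j : Fin n, (c j - 1) ≤ M - d) := by
      omega
    rw [if_congr hiff rfl rfl, if_pos (Nat.succ_ne_zero d)]
    split_ifs with h
    · rw [pow_add, pow_one]
    · rw [mul_zero]
  · rw [g]
    refine Finset.sum_congr rfl fun c _ => ?_
    rw [cond_succ _ (Fin.cons 0 c), supp_succ _ (Fin.cons 0 c)]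
    simp only [Fin.cons_zero, Fin.cons_succ]
    simp

lemma g_closed (n : ℕ) : ∀ M, g n M = ∑ l ∈ Finset.range (n+1),
    Polynomial.C (((M + l).choose l * n.choose l : ℕ) : ℤ) * X ^ l := by
  induction n with
  | zero =>
    intro M
    rw [g]
    simp [Fintype.card_piFinset]
  | succ n ih =>
    intro M
    rw [g_succ]
    simp only [ih]
    have hkey : ∀ l, ∑ d ∈ Finset.range (M+1), (M - d + l).choose l
        = (M + l + 1).choose (l+1) := by
      intro l
      rw [← Nat.sum_range_add_choose M l, ← Finset.sum_range_reflect]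
      exact Finset.sum_congr rfl fun d hd => by
        have hd' := Finset.mem_range.1 hd
        congr 1
        omega
    have h2 : ∑ d ∈ Finset.range (M+1), X * ∑ l ∈ Finset.range (n+1),
        (C (((M - d + l).choose l * n.choose l : ℕ) : ℤ)) * X ^ l
        = ∑ l ∈ Finset.range (n+1),
          C (((M + l + 1).choose (l+1) * n.choose l : ℕ) : ℤ) * X ^ (l+1) := by
      simp_rw [Finset.mul_sum]
      rw [Finset.sum_comm]
      refine Finset.sum_congr rfl fun l _ => ?_
      have hterm : ∀ d, X * ((C (((M - d + l).choose l * n.choose l : ℕ) : ℤ)) * X ^ l)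
          = (C (((M - d + l).choose l * n.choose l : ℕ) : ℤ)) * X ^ (l+1) := fun d => by
        ring
      simp_rw [hterm]
      rw [← Finset.sum_mul, ← map_sum]
      congr 2
      push_cast [← hkey l, Finset.sum_mul]
      rfl
    rw [h2]
    conv_lhs => rw [Finset.sum_range_succ']
    conv_rhs => rw [Finset.sum_range_succ']
    have hext : ∑ l ∈ Finset.range n,
        C (((M + (l+1)).choose (l+1) * n.choose (l+1) : ℕ) : ℤ) * X ^ (l+1)
        = ∑ l ∈ Finset.range (n+1),
          C (((M + (l+1)).choose (l+1) * n.choose (l+1) : ℕ) : ℤ) * X ^ (l+1) := by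
      rw [Finset.sum_range_succ]
      simp [Nat.choose_succ_self]
    rw [hext, add_right_comm, ← Finset.sum_add_distrib]
    congr 1
    · refine Finset.sum_congr rfl fun l _ => ?_
      rw [← add_mul, ← C_add, ← Nat.cast_add]
      have h1 : M + (l+1) = M + l + 1 := by omega
      have hn : (M+(l+1)).choose (l+1) * n.choose (l+1) + (M+l+1).choose (l+1) * n.choose l
          = (M+(l+1)).choose (l+1) * (n+1).choose (l+1) := by
        rw [h1, Nat.choose_succ_succ n l, Nat.mul_add]
        exact Nat.add_comm _ _
      rw [hn]
    · simp

lemma mem_iff (m n : ℕ) (x : Fin m ⊕ Fin n → ℕ) :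
    (fun e => (x e : ℝ)) ∈ preorderPolytope (Fin m ⊕ Fin n) (ordinalSumRel m n) ↔
      (∀ i : Fin m, x (Sum.inl i) ≤ 1) ∧
        ∑ j : Fin n, (x (Sum.inr j) - 1) ≤ m - ∑ i : Fin m, x (Sum.inl i) := by
  constructor
  · rintro ⟨hpos, hI⟩
    have h1 : ∀ i, x (Sum.inl i) ≤ 1 := by
      intro i
      have hid : IsOrderIdeal (ordinalSumRel m n) {Sum.inl i} := by
        intro a b hr hb
        simp only [Finset.mem_singleton] at hb ⊢
        subst hb
        rcases hr with h | ⟨_, hb⟩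
        · exact h
        · simp at hb
      have h := hI _ hid
      simp only [Finset.sum_singleton, Finset.card_singleton] at h
      exact_mod_cast h
    refine ⟨h1, ?_⟩
    have hm : ∑ i, x (Sum.inl i) ≤ m := by
      calc ∑ i, x (Sum.inl i) ≤ ∑ _i : Fin m, 1 := Finset.sum_le_sum fun i _ => h1 i
      _ = m := by simp
    set T : Finset (Fin n) := Finset.univ.filter (fun j => x (Sum.inr j) ≠ 0) with hT
    have hid : IsOrderIdeal (ordinalSumRel m n)
        ((Finset.univ : Finset (Fin m)).disjSum T) := by
      intro a b hr hb
      rcases hr with h | ⟨ha, _⟩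
      · exact h ▸ hb
      · rcases a with i | j
        · simp [Finset.mem_disjSum]
        · simp at ha
    have hIneq := hI _ hid
    rw [Finset.sum_disjSum, Finset.card_disjSum] at hIneq
    have hNat : ∑ i, x (Sum.inl i) + ∑ j ∈ T, x (Sum.inr j) ≤ m + T.card := by
      push_cast at hIneq
      simp only [Finset.card_univ, Fintype.card_fin] at hIneq
      exact_mod_cast hIneq
    have hTsum : ∑ j ∈ T, (x (Sum.inr j) - 1) + T.card = ∑ j ∈ T, x (Sum.inr j) := by
      rw [Finset.card_eq_sum_ones, ← Finset.sum_add_distrib]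
      refine Finset.sum_congr rfl fun j hj => ?_
      have : x (Sum.inr j) ≠ 0 := (Finset.mem_filter.1 hj).2
      omega
    have hfull : ∑ j : Fin n, (x (Sum.inr j) - 1) = ∑ j ∈ T, (x (Sum.inr j) - 1) :=
      (Finset.sum_filter_of_ne fun j _ h => by omega).symm
    omega
  · rintro ⟨h1, h2⟩
    have hm : ∑ i, x (Sum.inl i) ≤ m := by
      calc ∑ i, x (Sum.inl i) ≤ ∑ _i : Fin m, 1 := Finset.sum_le_sum fun i _ => h1 i
      _ = m := by simp
    refine ⟨fun e => by positivity, ?_⟩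
    intro I hid
    rw [← Finset.toLeft_disjSum_toRight (u := I), Finset.sum_disjSum, Finset.card_disjSum]
    rcases Finset.eq_empty_or_nonempty I.toRight with hR | hR
    · rw [hR]
      simp only [Finset.sum_empty, Finset.card_empty, add_zero]
      calc ∑ i ∈ I.toLeft, (x (Sum.inl i) : ℝ) ≤ ∑ _i ∈ I.toLeft, (1 : ℝ) :=
            Finset.sum_le_sum fun i _ => by exact_mod_cast h1 i
      _ = I.toLeft.card := by simp
    · obtain ⟨j0, hj0⟩ := hR
      have hL : I.toLeft = Finset.univ := by
        ext i
        simp only [Finset.mem_toLeft, Finset.mem_univ, iff_true]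
        exact hid (Sum.inl i) (Sum.inr j0) (Or.inr ⟨rfl, rfl⟩) (Finset.mem_toRight.1 hj0)
      rw [hL]
      have key : ∑ i, x (Sum.inl i) + ∑ j ∈ I.toRight, x (Sum.inr j)
          ≤ m + I.toRight.card := by
        have hb : ∑ j ∈ I.toRight, x (Sum.inr j)
            ≤ ∑ j ∈ I.toRight, (x (Sum.inr j) - 1) + I.toRight.card := by
          rw [Finset.card_eq_sum_ones, ← Finset.sum_add_distrib]
          exact Finset.sum_le_sum fun j _ => by omega
        have hsub : ∑ j ∈ I.toRight, (x (Sum.inr j) - 1)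
            ≤ ∑ j : Fin n, (x (Sum.inr j) - 1) :=
          Finset.sum_le_sum_of_subset (Finset.subset_univ _)
        omega
      have hcard : ((Finset.univ : Finset (Fin m)).card : ℝ) = (m : ℝ) := by simp
      push_cast
      rw [hcard]
      exact_mod_cast key

lemma sum_sumtype {M : Type*} [AddCommMonoid M] {m n : ℕ} (S : Finset ℕ)
    (f : (Fin m ⊕ Fin n → ℕ) → M) :
    ∑ x ∈ Fintype.piFinset (fun _ : Fin m ⊕ Fin n => S), f x
      = ∑ a ∈ Fintype.piFinset (fun _ : Fin m => S),
          ∑ b ∈ Fintype.piFinset (fun _ : Fin n => S), f (Sum.elim a b) := by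
  rw [← Finset.sum_product']
  refine Finset.sum_nbij' (fun x => (fun i => x (Sum.inl i), fun j => x (Sum.inr j)))
    (fun p => Sum.elim p.1 p.2) ?_ ?_ ?_ ?_ ?_
  · intro x hx
    simp only [Fintype.mem_piFinset] at hx
    simp only [Finset.mem_product, Fintype.mem_piFinset]
    exact ⟨fun i => hx _, fun j => hx _⟩
  · intro p hp
    simp only [Finset.mem_product, Fintype.mem_piFinset] at hp
    simp only [Fintype.mem_piFinset]
    rintro (i | j)
    exacts [hp.1 i, hp.2 j]
  · intro x _
    funext e
    rcases e with i | j <;> rfl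
  · intro p _
    rfl
  · intro x _
    exact congrArg f (by funext e; rcases e with i | j <;> rfl)

lemma supp_elim {m n : ℕ} (a : Fin m → ℕ) (b : Fin n → ℕ) :
    (Finset.univ.filter (fun e => Sum.elim a b e ≠ 0)).card
      = (Finset.univ.filter (fun i => a i ≠ 0)).card
        + (Finset.univ.filter (fun j => b j ≠ 0)).card := by
  rw [card_filter_eq_sum (Sum.elim a b), card_filter_eq_sum a, card_filter_eq_sum b,
    Fintype.sum_sum_type]
  rfl

end OSAux

/-- the lattice points of `Q_{τ_{m,n}}` are exactly the tuples
`(a, b)` with all `a_i ∈ {0,1}` and `Σ_j max(b_j − 1, 0) ≤ m − Σ_i a_i`, and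
consequently the `h`-polynomial equals
`Σ_{k,ℓ} C(m−k+ℓ, ℓ) C(m,k) C(n,ℓ) t^{k+ℓ}`. -/
theorem ordinal_sum_antichains (m n : ℕ) :
    (∀ x : Fin m ⊕ Fin n → ℕ,
      ((fun e => (x e : ℝ)) ∈ preorderPolytope (Fin m ⊕ Fin n) (ordinalSumRel m n) ↔
        (∀ i : Fin m, x (Sum.inl i) ≤ 1) ∧
          ∑ j : Fin n, (x (Sum.inr j) - 1) ≤ m - ∑ i : Fin m, x (Sum.inl i))) ∧
    (∑ᶠ x ∈ {x : Fin m ⊕ Fin n → ℕ |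
          (fun e => (x e : ℝ)) ∈ preorderPolytope (Fin m ⊕ Fin n) (ordinalSumRel m n)},
        (X : Polynomial ℤ) ^ (Finset.univ.filter (fun e => x e ≠ 0)).card) =
      ∑ k ∈ Finset.range (m + 1), ∑ l ∈ Finset.range (n + 1),
        Polynomial.C (((m - k + l).choose l * m.choose k * n.choose l : ℕ) : ℤ) *
          (X : Polynomial ℤ) ^ (k + l) := by
  classical
  refine ⟨OSAux.mem_iff m n, ?_⟩
  have hset : {x : Fin m ⊕ Fin n → ℕ |
        (fun e => (x e : ℝ)) ∈ preorderPolytope (Fin m ⊕ Fin n) (ordinalSumRel m n)}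
      = ↑((Fintype.piFinset (fun _ : Fin m ⊕ Fin n => Finset.range (m+2))).filter
          (fun x => (∀ i, x (Sum.inl i) ≤ 1) ∧
            ∑ j, (x (Sum.inr j) - 1) ≤ m - ∑ i, x (Sum.inl i))) := by
    ext x
    simp only [Set.mem_setOf_eq, Finset.coe_filter, OSAux.mem_iff]
    constructor
    · rintro ⟨hA, hB⟩
      refine ⟨?_, hA, hB⟩
      simp only [Fintype.mem_piFinset, Finset.mem_range]
      rintro (i | j)
      · have := hA i; omega
      · have hle : x (Sum.inr j) - 1 ≤ ∑ j : Fin n, (x (Sum.inr j) - 1) :=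
          Finset.single_le_sum (f := fun j => x (Sum.inr j) - 1) (fun _ _ => Nat.zero_le _)
            (Finset.mem_univ j)
        omega
    · rintro ⟨_, h⟩; exact h
  rw [hset, finsum_mem_coe_finset, Finset.sum_filter, OSAux.sum_sumtype]
  simp only [Sum.elim_inl, Sum.elim_inr, OSAux.supp_elim]
  have step1 : ∀ a : Fin m → ℕ, (∑ b ∈ Fintype.piFinset (fun _ : Fin n => Finset.range (m+2)),
      if (∀ i, a i ≤ 1) ∧ ∑ j, (b j - 1) ≤ m - ∑ i, a i
      then (X : Polynomial ℤ) ^ ((Finset.univ.filter fun i => a i ≠ 0).card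
          + (Finset.univ.filter fun j => b j ≠ 0).card) else 0)
      = if (∀ i, a i ≤ 1)
        then (X : Polynomial ℤ) ^ (Finset.univ.filter fun i => a i ≠ 0).card
          * OSAux.g n (m - ∑ i, a i) else 0 := by
    intro a
    split_ifs with hA
    · rw [← OSAux.g_eq n (m - ∑ i, a i) (m+2) (by omega), Finset.mul_sum]
      refine Finset.sum_congr rfl fun b _ => ?_
      rw [if_congr (and_iff_right hA) rfl rfl]
      split_ifs with hB
      · rw [pow_add]
      · rw [mul_zero]
    · exact Finset.sum_eq_zero fun b _ => by simp [hA]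
  rw [Finset.sum_congr rfl (fun a _ => step1 a)]
  have step2 : ∑ a ∈ Fintype.piFinset (fun _ : Fin m => Finset.range (m+2)),
      (if (∀ i, a i ≤ 1)
        then (X : Polynomial ℤ) ^ (Finset.univ.filter fun i => a i ≠ 0).card
          * OSAux.g n (m - ∑ i, a i) else 0)
      = ∑ a ∈ Fintype.piFinset (fun _ : Fin m => Finset.range 2),
          (X : Polynomial ℤ) ^ (Finset.univ.filter fun i => a i ≠ 0).card
            * OSAux.g n (m - ∑ i, a i) := by
    have hsub : Fintype.piFinset (fun _ : Fin m => Finset.range 2)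
        ⊆ Fintype.piFinset (fun _ : Fin m => Finset.range (m+2)) :=
      Fintype.piFinset_subset _ _ fun i => Finset.range_subset_range.2 (by omega)
    refine ((Finset.sum_subset hsub ?_).symm).trans (Finset.sum_congr rfl ?_)
    · intro a ha hna
      simp only [Fintype.mem_piFinset, Finset.mem_range] at ha hna
      push_neg at hna
      obtain ⟨i, hi⟩ := hna
      rw [if_neg]
      intro hA
      have := hA i
      omega
    · intro a ha
      simp only [Fintype.mem_piFinset, Finset.mem_range] at ha
      rw [if_pos fun i => by have := ha i; omega]
  rw [step2]
  have step3 : ∑ a ∈ Fintype.piFinset (fun _ : Fin m => Finset.range 2),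
      (X : Polynomial ℤ) ^ (Finset.univ.filter fun i => a i ≠ 0).card
        * OSAux.g n (m - ∑ i, a i)
      = ∑ a ∈ Fintype.piFinset (fun _ : Fin m => Finset.range 2),
          (X : Polynomial ℤ) ^ (Finset.univ.filter fun i => a i ≠ 0).card
            * OSAux.g n (m - (Finset.univ.filter fun i => a i ≠ 0).card) := by
    refine Finset.sum_congr rfl fun a ha => ?_
    simp only [Fintype.mem_piFinset, Finset.mem_range] at ha
    have hsum : ∑ i, a i = (Finset.univ.filter fun i => a i ≠ 0).card := by
      rw [OSAux.card_filter_eq_sum a]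
      refine Finset.sum_congr rfl fun i _ => ?_
      have := ha i
      split_ifs with h <;> omega
    rw [hsum]
  rw [step3]
  have step4 : ∑ a ∈ Fintype.piFinset (fun _ : Fin m => Finset.range 2),
      (X : Polynomial ℤ) ^ (Finset.univ.filter fun i => a i ≠ 0).card
        * OSAux.g n (m - (Finset.univ.filter fun i => a i ≠ 0).card)
      = ∑ s ∈ (Finset.univ : Finset (Fin m)).powerset,
          (X : Polynomial ℤ) ^ s.card * OSAux.g n (m - s.card) := by
    refine Finset.sum_nbij' (fun a => Finset.univ.filter fun i => a i ≠ 0)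
      (fun s => fun i => if i ∈ s then 1 else 0) ?_ ?_ ?_ ?_ ?_
    · exact fun a _ => Finset.mem_powerset.2 (Finset.filter_subset _ _)
    · intro s _
      simp only [Fintype.mem_piFinset, Finset.mem_range]
      intro i
      split_ifs <;> omega
    · intro a ha
      simp only [Fintype.mem_piFinset, Finset.mem_range] at ha
      funext i
      simp only [Finset.mem_filter, Finset.mem_univ, true_and]
      have := ha i
      split_ifs with h <;> omega
    · intro s _
      ext i
      simp only [Finset.mem_filter, Finset.mem_univ, true_and]
      split_ifs with h <;> simp [h]
    · intro a _; rfl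
  rw [step4,
    Finset.sum_powerset_apply_card (fun k => (X : Polynomial ℤ) ^ k * OSAux.g n (m - k))]
  simp only [Finset.card_univ, Fintype.card_fin]
  refine Finset.sum_congr rfl fun k hk => ?_
  rw [OSAux.g_closed n (m - k), Finset.mul_sum, Finset.smul_sum]
  refine Finset.sum_congr rfl fun l hl => ?_
  simp only [nsmul_eq_mul, Nat.cast_mul, map_mul, pow_add, ← Polynomial.C_eq_natCast]
  ring
end

section
/- For all nonnegative integers m, n: Σ_{k=0}^m Σ_{ℓ=0}^n C(m−k+ℓ, ℓ) C(m,k) C(n,ℓ) t^{k+ℓ} = Σ_{i≥0} C(m,i) C(n,i) t^i (1+t)^{m+n−2i}. In particular the left-hand side is a palindromic polynomial of degree m+n. -/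
open Polynomial

lemma vanish (n a b : ℕ) (h : n < a + b) : n.choose a * (n - a).choose b = 0 := by
  rcases le_or_gt a n with ha | ha
  · rw [Nat.choose_eq_zero_of_lt (show n - a < b by omega), mul_zero]
  · rw [Nat.choose_eq_zero_of_lt ha, zero_mul]

lemma committee (n a b : ℕ) : n.choose a * (n - a).choose b = n.choose b * (n - b).choose a := by
  rcases le_or_gt (a + b) n with h | h
  · have h1 := Nat.choose_mul (n := n) (show a ≤ a + b by omega)
    have h2 := Nat.choose_mul (n := n) (show b ≤ a + b by omega)
    have h3 : (a + b).choose a = (a + b).choose b := by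
      rw [← Nat.choose_symm (show b ≤ a + b by omega)]
      congr 1
      omega
    simp only [Nat.add_sub_cancel, Nat.add_sub_cancel_left, h3] at h1 h2
    omega
  · rw [vanish n a b h, vanish n b a (by omega)]

lemma one_add_X_pow_eq (d N : ℕ) (h : d ≤ N) :
    ((1 + X : Polynomial ℤ)) ^ d
      = ∑ k ∈ Finset.range (N + 1), Polynomial.C ((d.choose k : ℕ) : ℤ) * X ^ k := by
  ext j
  rw [coeff_one_add_X_pow, finset_sum_coeff]
  simp only [coeff_C_mul, coeff_X_pow, mul_ite, mul_one, mul_zero]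
  rw [Finset.sum_ite_eq (Finset.range (N + 1)) j]
  split_ifs with hj
  · rfl
  · rw [Nat.choose_eq_zero_of_lt (by simp at hj; omega), Nat.cast_zero]

lemma tri_sum {M : Type*} [AddCommMonoid M] (n : ℕ) (F : ℕ → ℕ → M)
    (hF : ∀ a b, n < a + b → F a b = 0) :
    ∑ l ∈ Finset.range (n + 1), ∑ p ∈ Finset.HasAntidiagonal.antidiagonal l, F p.1 p.2
      = ∑ a ∈ Finset.range (n + 1), ∑ b ∈ Finset.range (n + 1), F a b := by
  have hdisj : (↑(Finset.range (n + 1) : Finset ℕ) : Set ℕ).PairwiseDisjoint Finset.HasAntidiagonal.antidiagonal := by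
    intro x _ y _ hxy
    simp only [Finset.disjoint_left, Finset.HasAntidiagonal.mem_antidiagonal]
    rintro p hp hq
    exact hxy (by omega)
  rw [← Finset.sum_product']
  rw [← Finset.sum_biUnion hdisj]
  apply Finset.sum_subset
  · rintro ⟨a, b⟩ hp
    simp only [Finset.mem_biUnion, Finset.mem_range, Finset.HasAntidiagonal.mem_antidiagonal] at hp
    obtain ⟨l, hl, rfl⟩ := hp
    simp only [Finset.mem_product, Finset.mem_range]
    omega
  · rintro ⟨a, b⟩ hp hnp
    simp only [Finset.mem_biUnion, Finset.mem_range, Finset.HasAntidiagonal.mem_antidiagonal] at hnp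
    push_neg at hnp
    exact hF a b (by have := hnp (a + b); omega)

lemma key_nat (m n k l : ℕ) (hk : k ≤ m) (hl : l ≤ n) :
    (m - k + l).choose l * m.choose k * n.choose l
      = ∑ p ∈ Finset.HasAntidiagonal.antidiagonal l,
          m.choose p.1 * n.choose p.1 * (m - p.1).choose k * (n - p.1).choose p.2 := by
  rw [Nat.add_choose_eq, Finset.sum_mul, Finset.sum_mul]
  apply Finset.sum_congr rfl
  rintro ⟨a, b⟩ hp
  simp only [Finset.HasAntidiagonal.mem_antidiagonal] at hp
  have h1 : m.choose k * (m - k).choose a = m.choose a * (m - a).choose k := committee m k a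
  have h2 : n.choose l * l.choose b = n.choose a * (n - a).choose b := by
    rw [Nat.choose_mul (n := n) (show b ≤ l by omega), show l - b = a by omega, committee]
  calc (m - k).choose a * l.choose b * m.choose k * n.choose l
      = (m.choose k * (m - k).choose a) * (n.choose l * l.choose b) := by ring
    _ = (m.choose a * (m - a).choose k) * (n.choose a * (n - a).choose b) := by rw [h1, h2]
    _ = m.choose a * n.choose a * (m - a).choose k * (n - a).choose b := by ring

lemma hmain (m n : ℕ) :
    (∑ k ∈ Finset.range (m + 1), ∑ l ∈ Finset.range (n + 1),
        Polynomial.C (((m - k + l).choose l * m.choose k * n.choose l : ℕ) : ℤ) *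
          (X : Polynomial ℤ) ^ (k + l)) =
      (∑ i ∈ Finset.range (min m n + 1),
        Polynomial.C ((m.choose i * n.choose i : ℕ) : ℤ) *
          (X : Polynomial ℤ) ^ i * (1 + X) ^ (m + n - 2 * i)) := by
  calc
    (∑ k ∈ Finset.range (m + 1), ∑ l ∈ Finset.range (n + 1),
        Polynomial.C (((m - k + l).choose l * m.choose k * n.choose l : ℕ) : ℤ) *
          (X : Polynomial ℤ) ^ (k + l))
      = ∑ k ∈ Finset.range (m + 1), ∑ l ∈ Finset.range (n + 1),
          ∑ p ∈ Finset.HasAntidiagonal.antidiagonal l,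
            Polynomial.C ((m.choose p.1 * n.choose p.1 * (m - p.1).choose k
                * (n - p.1).choose p.2 : ℕ) : ℤ) * (X : Polynomial ℤ) ^ (k + (p.1 + p.2)) := by
        refine Finset.sum_congr rfl fun k hk => Finset.sum_congr rfl fun l hl => ?_
        simp only [Finset.mem_range] at hk hl
        rw [key_nat m n k l (by omega) (by omega), Nat.cast_sum, map_sum, Finset.sum_mul]
        refine Finset.sum_congr rfl fun p hp => ?_
        simp only [Finset.HasAntidiagonal.mem_antidiagonal] at hp
        rw [show k + l = k + (p.1 + p.2) by omega]
    _ = ∑ k ∈ Finset.range (m + 1), ∑ a ∈ Finset.range (n + 1), ∑ b ∈ Finset.range (n + 1),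
            Polynomial.C ((m.choose a * n.choose a * (m - a).choose k
                * (n - a).choose b : ℕ) : ℤ) * (X : Polynomial ℤ) ^ (k + (a + b)) := by
        refine Finset.sum_congr rfl fun k hk => ?_
        refine tri_sum n (fun a b => Polynomial.C ((m.choose a * n.choose a * (m - a).choose k
            * (n - a).choose b : ℕ) : ℤ) * (X : Polynomial ℤ) ^ (k + (a + b))) fun a b h => ?_
        have h0 : m.choose a * n.choose a * (m - a).choose k * (n - a).choose b = 0 := by
          have hv := vanish n a b h
          calc m.choose a * n.choose a * (m - a).choose k * (n - a).choose b
              = (m.choose a * (m - a).choose k) * (n.choose a * (n - a).choose b) := by ring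
            _ = 0 := by rw [hv, mul_zero]
        simp only [h0, Nat.cast_zero, map_zero, zero_mul]
    _ = ∑ a ∈ Finset.range (n + 1), ∑ k ∈ Finset.range (m + 1), ∑ b ∈ Finset.range (n + 1),
            Polynomial.C ((m.choose a * n.choose a * (m - a).choose k
                * (n - a).choose b : ℕ) : ℤ) * (X : Polynomial ℤ) ^ (k + (a + b)) :=
        Finset.sum_comm
    _ = ∑ a ∈ Finset.range (n + 1),
          (Polynomial.C ((m.choose a * n.choose a : ℕ) : ℤ) * (X : Polynomial ℤ) ^ a)
            * (∑ k ∈ Finset.range (m + 1),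
                Polynomial.C (((m - a).choose k : ℕ) : ℤ) * (X : Polynomial ℤ) ^ k)
            * (∑ b ∈ Finset.range (n + 1),
                Polynomial.C (((n - a).choose b : ℕ) : ℤ) * (X : Polynomial ℤ) ^ b) := by
        refine Finset.sum_congr rfl fun a ha => ?_
        simp only [Finset.mul_sum, Finset.sum_mul]
        rw [Finset.sum_comm]
        refine Finset.sum_congr rfl fun p hp => Finset.sum_congr rfl fun q hq => ?_
        simp only [Nat.cast_mul, map_mul, pow_add]
        ring
    _ = ∑ a ∈ Finset.range (n + 1),
          Polynomial.C ((m.choose a * n.choose a : ℕ) : ℤ) * (X : Polynomial ℤ) ^ a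
            * (1 + X) ^ (m - a) * (1 + X) ^ (n - a) := by
        refine Finset.sum_congr rfl fun a ha => ?_
        rw [← one_add_X_pow_eq (m - a) m (by omega), ← one_add_X_pow_eq (n - a) n (by omega)]
    _ = ∑ a ∈ Finset.range (min m n + 1),
          Polynomial.C ((m.choose a * n.choose a : ℕ) : ℤ) * (X : Polynomial ℤ) ^ a
            * (1 + X) ^ (m - a) * (1 + X) ^ (n - a) := by
        refine (Finset.sum_subset (Finset.range_subset_range.mpr (by omega)) fun a ha hna => ?_).symm
        simp only [Finset.mem_range] at ha hna
        rcases le_or_gt a m with ham | ham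
        · rw [Nat.choose_eq_zero_of_lt (show n < a by omega)]
          simp
        · rw [Nat.choose_eq_zero_of_lt ham]
          simp
    _ = ∑ i ∈ Finset.range (min m n + 1),
          Polynomial.C ((m.choose i * n.choose i : ℕ) : ℤ) *
            (X : Polynomial ℤ) ^ i * (1 + X) ^ (m + n - 2 * i) := by
        refine Finset.sum_congr rfl fun a ha => ?_
        simp only [Finset.mem_range] at ha
        rw [mul_assoc, ← pow_add, show m - a + (n - a) = m + n - 2 * a by omega]

/-- the identity
`Σ_{k=0}^m Σ_{ℓ=0}^n C(m−k+ℓ,ℓ) C(m,k) C(n,ℓ) t^{k+ℓ}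
  = Σ_i C(m,i) C(n,i) t^i (1+t)^{m+n−2i}`,
and consequently the left-hand side is palindromic of degree `m+n`. -/
theorem shuffle_h_polynomial_identity (m n : ℕ) :
    (∑ k ∈ Finset.range (m + 1), ∑ l ∈ Finset.range (n + 1),
        Polynomial.C (((m - k + l).choose l * m.choose k * n.choose l : ℕ) : ℤ) *
          (X : Polynomial ℤ) ^ (k + l)) =
      (∑ i ∈ Finset.range (min m n + 1),
        Polynomial.C ((m.choose i * n.choose i : ℕ) : ℤ) *
          (X : Polynomial ℤ) ^ i * (1 + X) ^ (m + n - 2 * i)) ∧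
    ∀ i ≤ m + n,
      (∑ k ∈ Finset.range (m + 1), ∑ l ∈ Finset.range (n + 1),
          Polynomial.C (((m - k + l).choose l * m.choose k * n.choose l : ℕ) : ℤ) *
            (X : Polynomial ℤ) ^ (k + l)).coeff i =
        (∑ k ∈ Finset.range (m + 1), ∑ l ∈ Finset.range (n + 1),
          Polynomial.C (((m - k + l).choose l * m.choose k * n.choose l : ℕ) : ℤ) *
            (X : Polynomial ℤ) ^ (k + l)).coeff (m + n - i) := by
  refine ⟨hmain m n, fun i hi => ?_⟩
  rw [hmain m n, finset_sum_coeff, finset_sum_coeff]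
  refine Finset.sum_congr rfl fun a ha => ?_
  simp only [Finset.mem_range] at ha
  have hm : a ≤ m := by omega
  have hn : a ≤ n := by omega
  have key : ∀ j, (Polynomial.C ((m.choose a * n.choose a : ℕ) : ℤ) * (X : Polynomial ℤ) ^ a
        * (1 + X) ^ (m + n - 2 * a)).coeff j
      = if a ≤ j then ((m.choose a * n.choose a : ℕ) : ℤ)
          * (((m + n - 2 * a).choose (j - a) : ℕ) : ℤ) else 0 := by
    intro j
    rw [show Polynomial.C ((m.choose a * n.choose a : ℕ) : ℤ) * (X : Polynomial ℤ) ^ a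
          * (1 + X) ^ (m + n - 2 * a)
        = Polynomial.C ((m.choose a * n.choose a : ℕ) : ℤ) * (1 + X) ^ (m + n - 2 * a)
          * X ^ a by ring, coeff_mul_X_pow']
    split_ifs with h
    · rw [coeff_C_mul, coeff_one_add_X_pow]
    · rfl
  rw [key i, key (m + n - i)]
  split_ifs with h1 h2 h2
  · congr 1
    rcases le_or_gt (i - a) (m + n - 2 * a) with hle | hlt
    · rw [← Nat.choose_symm hle, show m + n - 2 * a - (i - a) = m + n - i - a by omega]
    · rw [Nat.choose_eq_zero_of_lt hlt, Nat.choose_eq_zero_of_lt (by omega)]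
  · rw [Nat.choose_eq_zero_of_lt (by omega : m + n - 2 * a < i - a)]
    simp
  · rw [Nat.choose_eq_zero_of_lt (by omega : m + n - 2 * a < m + n - i - a)]
    simp
  · rfl
end

section
/- The polynomial Σ_{i=0}^{min(m,n)} C(m,i) C(n,i) t^i has only real roots, and consequently h_{m,n}(t) = Σ_i C(m,i)C(n,i) t^i (1+t)^{m+n−2i} has only real roots. -/
open Polynomial Finset Nat

lemma nat_key (m n j : ℕ) :
    m.choose j * (n + j).choose n =
      ∑ i ∈ range (min m n + 1),
        m.choose i * n.choose i * (if i ≤ j then (m - i).choose (j - i) else 0) := by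
  have step1 : ∀ i ∈ range (min m n + 1),
      m.choose i * n.choose i * (if i ≤ j then (m - i).choose (j - i) else 0)
        = m.choose j * (j.choose i * n.choose i) := by
    intro i hi
    simp only [mem_range, Nat.lt_succ_iff] at hi
    have him : i ≤ m := hi.trans (min_le_left _ _)
    by_cases hij : i ≤ j
    · simp only [hij, if_true]
      by_cases hjm : j ≤ m
      · have := Nat.choose_mul (n := m) (k := j) hij
        calc m.choose i * n.choose i * (m - i).choose (j - i)
            = m.choose i * (m - i).choose (j - i) * n.choose i := by ring
          _ = m.choose j * j.choose i * n.choose i := by rw [← this]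
          _ = m.choose j * (j.choose i * n.choose i) := by ring
      · have h1 : m.choose j = 0 := Nat.choose_eq_zero_of_lt (lt_of_not_ge hjm)
        have h2 : (m - i).choose (j - i) = 0 := by
          apply Nat.choose_eq_zero_of_lt
          omega
        rw [h1, h2]; ring
    · have h2 : j.choose i = 0 := Nat.choose_eq_zero_of_lt (lt_of_not_ge hij)
      simp [hij, h2]
  rw [Finset.sum_congr rfl step1, ← Finset.mul_sum]
  by_cases hjm : j ≤ m
  · congr 1
    have hsub : ∑ i ∈ range (min m n + 1), j.choose i * n.choose i
        = ∑ i ∈ range (j + n + 1), j.choose i * n.choose i := by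
      apply Finset.sum_subset
      · apply Finset.range_subset_range.2; omega
      · intro i hi hni
        simp only [mem_range, Nat.lt_succ_iff] at hi hni
        push_neg at hni
        by_cases hin : i ≤ n
        · have : j.choose i = 0 := Nat.choose_eq_zero_of_lt (by omega)
          simp [this]
        · have : n.choose i = 0 := Nat.choose_eq_zero_of_lt (by omega)
          simp [this]
    have hsub2 : ∑ i ∈ range (j + 1), j.choose i * n.choose i
        = ∑ i ∈ range (j + n + 1), j.choose i * n.choose i := by
      apply Finset.sum_subset
      · apply Finset.range_subset_range.2; omega
      · intro i hi hni
        simp only [mem_range, Nat.lt_succ_iff] at hi hni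
        have : j.choose i = 0 := Nat.choose_eq_zero_of_lt (by omega)
        simp [this]
    rw [hsub, ← hsub2]
    have hv : (n + j).choose j = ∑ ij ∈ Finset.HasAntidiagonal.antidiagonal j, n.choose ij.1 * j.choose ij.2 :=
      Nat.add_choose_eq n j j
    rw [Nat.choose_symm_add, hv, Nat.sum_antidiagonal_eq_sum_range_succ
      (fun a b => n.choose a * j.choose b)]
    apply Finset.sum_congr rfl
    intro i hi
    simp only [mem_range, Nat.lt_succ_iff] at hi
    rw [Nat.choose_symm hi, mul_comm]
  · have h1 : m.choose j = 0 := Nat.choose_eq_zero_of_lt (lt_of_not_ge hjm)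
    simp [h1]

lemma poly_ident (m n : ℕ) :
    derivative^[n] ((X : ℝ[X]) ^ n * (1 + X) ^ m)
      = C (n ! : ℝ) * ∑ i ∈ range (min m n + 1),
          C ((m.choose i * n.choose i : ℕ) : ℝ) * X ^ i * (1 + X) ^ (m - i) := by
  have hexp : ((X : ℝ[X])) ^ n * (1 + X) ^ m
      = ∑ k ∈ range (m + 1), C ((m.choose k : ℕ) : ℝ) * X ^ (n + k) := by
    rw [add_comm (1 : ℝ[X]) X, add_pow]
    rw [Finset.mul_sum]
    apply Finset.sum_congr rfl
    intro k _
    rw [C_eq_natCast]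
    ring
  have hlhs : derivative^[n] ((X : ℝ[X]) ^ n * (1 + X) ^ m)
      = ∑ k ∈ range (m + 1),
          C ((m.choose k * (n + k).descFactorial n : ℕ) : ℝ) * X ^ k := by
    rw [hexp, iterate_derivative_sum]
    apply Finset.sum_congr rfl
    intro k _
    rw [C_eq_natCast, iterate_derivative_natCast_mul, iterate_derivative_X_pow_eq_natCast_mul,
      C_eq_natCast]
    have : n + k - n = k := by omega
    rw [this]
    push_cast
    ring
  rw [hlhs]
  ext j
  rw [finset_sum_coeff, coeff_C_mul, finset_sum_coeff]
  have hL : ∑ k ∈ range (m + 1),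
      (C ((m.choose k * (n + k).descFactorial n : ℕ) : ℝ) * X ^ k).coeff j
      = ((m.choose j * (n + j).descFactorial n : ℕ) : ℝ) := by
    simp only [coeff_C_mul, coeff_X_pow, mul_ite, mul_one, mul_zero]
    rw [Finset.sum_ite_eq (range (m + 1)) j]
    by_cases hj : j ∈ range (m + 1)
    · simp [hj]
    · simp only [hj, if_false]
      simp only [mem_range, Nat.lt_succ_iff] at hj
      have : m.choose j = 0 := Nat.choose_eq_zero_of_lt (by omega)
      simp [this]
  rw [hL]
  have hR : ∀ i ∈ range (min m n + 1),
      (C ((m.choose i * n.choose i : ℕ) : ℝ) * X ^ i * (1 + X) ^ (m - i)).coeff j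
      = ((m.choose i * n.choose i * (if i ≤ j then (m - i).choose (j - i) else 0) : ℕ) : ℝ) := by
    intro i _
    have : C ((m.choose i * n.choose i : ℕ) : ℝ) * X ^ i * (1 + X) ^ (m - i)
        = C ((m.choose i * n.choose i : ℕ) : ℝ) * ((1 + X) ^ (m - i) * X ^ i) := by ring
    rw [this, coeff_C_mul, coeff_mul_X_pow', coeff_one_add_X_pow]
    push_cast [apply_ite (Nat.cast : ℕ → ℝ)]
    by_cases hij : i ≤ j <;> simp [hij]
  rw [Finset.sum_congr rfl hR]
  rw [← Nat.cast_sum]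
  have : ((n ! : ℕ) : ℝ) * ((∑ i ∈ range (min m n + 1),
      m.choose i * n.choose i * (if i ≤ j then (m - i).choose (j - i) else 0) : ℕ) : ℝ)
      = ((n ! * ∑ i ∈ range (min m n + 1),
      m.choose i * n.choose i * (if i ≤ j then (m - i).choose (j - i) else 0) : ℕ) : ℝ) := by
    push_cast; ring
  rw [this]
  congr 1
  rw [← nat_key m n j, Nat.descFactorial_eq_factorial_mul_choose]
  ring

lemma iterate_deriv_count (p : ℝ[X]) (hp : p ≠ 0)
    (h : Multiset.card p.roots = p.natDegree) :
    ∀ k, k ≤ p.natDegree →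
      derivative^[k] p ≠ 0 ∧ (derivative^[k] p).natDegree = p.natDegree - k ∧
        Multiset.card (derivative^[k] p).roots = p.natDegree - k := by
  intro k
  induction k with
  | zero =>
    intro _
    exact ⟨by simpa using hp, by simp, by simpa using h⟩
  | succ k ih =>
    intro hk
    obtain ⟨h0, h1, h2⟩ := ih (by omega)
    set q := derivative^[k] p with hq
    have hq1 : 1 ≤ q.natDegree := by omega
    have hd0 : derivative q ≠ 0 := by
      intro hc
      have := natDegree_eq_zero_of_derivative_eq_zero hc
      omega
    have hge : p.natDegree - (k + 1) ≤ Multiset.card (derivative q).roots := by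
      have := card_roots_le_derivative q
      omega
    have hle : Multiset.card (derivative q).roots ≤ (derivative q).natDegree :=
      card_roots' _
    have hdeg : (derivative q).natDegree ≤ p.natDegree - (k + 1) := by
      have := natDegree_derivative_le q
      omega
    rw [Function.iterate_succ_apply', ← hq]
    exact ⟨hd0, by omega, by omega⟩

lemma real_roots_only (p : ℝ[X]) (hp : p ≠ 0) (h : Multiset.card p.roots = p.natDegree)
    (z : ℂ) (hz : aeval z p = 0) : z.im = 0 := by
  have hinj : Function.Injective (algebraMap ℝ ℂ) := (algebraMap ℝ ℂ).injective
  have hmap : p.roots.map (algebraMap ℝ ℂ) = (p.map (algebraMap ℝ ℂ)).roots :=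
    roots_map_of_injective_of_card_eq_natDegree hinj h
  have hz' : z ∈ (p.map (algebraMap ℝ ℂ)).roots := by
    rw [mem_roots']
    refine ⟨(Polynomial.map_ne_zero_iff hinj).mpr hp, ?_⟩
    rw [IsRoot, eval_map, ← aeval_def, hz]
  rw [← hmap] at hz'
  obtain ⟨x, _, hx⟩ := Multiset.mem_map.mp hz'
  rw [← hx]
  simp [Complex.ofReal_im]

lemma F_facts (m n : ℕ) :
    ((X : ℝ[X]) ^ n * (1 + X) ^ m) ≠ 0 ∧
      ((X : ℝ[X]) ^ n * (1 + X) ^ m).natDegree = n + m ∧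
        Multiset.card ((X : ℝ[X]) ^ n * (1 + X) ^ m).roots = n + m := by
  have h1X : (1 + X : ℝ[X]) = X - C (-1) := by
    rw [map_neg, C_1, sub_neg_eq_add, add_comm]
  have hXn : ((X : ℝ[X]) ^ n) ≠ 0 := pow_ne_zero _ X_ne_zero
  have h1Xm : ((1 + X : ℝ[X]) ^ m) ≠ 0 := by
    rw [h1X]; exact pow_ne_zero _ (X_sub_C_ne_zero (-1))
  have hne : ((X : ℝ[X]) ^ n * (1 + X) ^ m) ≠ 0 := mul_ne_zero hXn h1Xm
  refine ⟨hne, ?_, ?_⟩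
  · rw [natDegree_mul hXn h1Xm, natDegree_pow, natDegree_X, h1X, natDegree_pow,
      natDegree_X_sub_C]
    ring
  · rw [roots_mul hne, roots_pow, h1X, roots_pow, roots_X, roots_X_sub_C]
    simp

lemma S_real_roots (m n : ℕ) (z : ℂ)
    (hz : aeval z (∑ i ∈ range (min m n + 1),
      C ((m.choose i * n.choose i : ℕ) : ℝ) * X ^ i * (1 + X) ^ (m - i)) = 0) : z.im = 0 := by
  set S : ℝ[X] := ∑ i ∈ range (min m n + 1),
      C ((m.choose i * n.choose i : ℕ) : ℝ) * X ^ i * (1 + X) ^ (m - i) with hS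
  obtain ⟨hF0, hFdeg, hFroots⟩ := F_facts m n
  obtain ⟨hd0, hddeg, hdroots⟩ := iterate_deriv_count _ hF0 (by rw [hFdeg, hFroots]) n
    (by rw [hFdeg]; omega)
  rw [poly_ident m n, ← hS] at hd0 hddeg hdroots
  have hfact : ((n ! : ℕ) : ℝ) ≠ 0 := Nat.cast_ne_zero.mpr (Nat.factorial_ne_zero n)
  have hS0 : S ≠ 0 := fun hc => hd0 (by rw [hc, mul_zero])
  have hcard : Multiset.card S.roots = S.natDegree := by
    have hr : (C ((n ! : ℕ) : ℝ) * S).roots = S.roots := roots_C_mul S hfact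
    have hn : (C ((n ! : ℕ) : ℝ) * S).natDegree = S.natDegree := natDegree_C_mul hfact
    rw [hr] at hdroots
    rw [hn] at hddeg
    rw [hdroots, hddeg]
  exact real_roots_only S hS0 hcard z hz

lemma part1 (m n : ℕ) (z : ℂ)
    (hz : aeval z (∑ i ∈ range (min m n + 1),
      C ((m.choose i * n.choose i : ℕ) : ℝ) * X ^ i) = 0) : z.im = 0 := by
  have hz' : ∑ i ∈ range (min m n + 1), ((m.choose i * n.choose i : ℕ) : ℂ) * z ^ i = 0 := by
    rw [map_sum] at hz
    rw [← hz]
    apply Finset.sum_congr rfl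
    intro i _
    simp
  have hz1 : z ≠ 1 := by
    intro hc
    rw [hc] at hz'
    simp only [one_pow, mul_one] at hz'
    rw [← Nat.cast_sum] at hz'
    have hpos : 0 < ∑ i ∈ range (min m n + 1), m.choose i * n.choose i := by
      apply Finset.sum_pos'
      · intro i _; exact Nat.zero_le _
      · exact ⟨0, Finset.mem_range.mpr (by omega), by simp⟩
    exact_mod_cast absurd hz' (by exact_mod_cast Nat.pos_iff_ne_zero.mp hpos)
  have h1z : (1 : ℂ) - z ≠ 0 := sub_ne_zero_of_ne (Ne.symm hz1)
  set t : ℂ := z / (1 - z) with ht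
  have h1t : 1 + t = 1 / (1 - z) := by
    rw [ht]; field_simp; ring
  have h1t0 : 1 + t ≠ 0 := by
    rw [h1t]; exact one_div_ne_zero h1z
  have htz : t = z * (1 + t) := by
    rw [h1t, ht]; field_simp
  have hSz : aeval t (∑ i ∈ range (min m n + 1),
      C ((m.choose i * n.choose i : ℕ) : ℝ) * X ^ i * (1 + X) ^ (m - i)) = 0 := by
    rw [map_sum]
    have : ∀ i ∈ range (min m n + 1),
        aeval t (C ((m.choose i * n.choose i : ℕ) : ℝ) * X ^ i * (1 + X) ^ (m - i))
          = (1 + t) ^ m * (((m.choose i * n.choose i : ℕ) : ℂ) * z ^ i) := by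
      intro i hi
      simp only [mem_range, Nat.lt_succ_iff] at hi
      have him : i ≤ m := hi.trans (min_le_left _ _)
      have : aeval t (C ((m.choose i * n.choose i : ℕ) : ℝ) * X ^ i * (1 + X) ^ (m - i))
          = ((m.choose i * n.choose i : ℕ) : ℂ) * t ^ i * (1 + t) ^ (m - i) := by
        simp
      rw [this]
      have hpow : t ^ i = z ^ i * (1 + t) ^ i := by rw [← mul_pow, ← htz]
      have hpow2 : (1 + t) ^ i * (1 + t) ^ (m - i) = (1 + t) ^ m := by
        rw [← pow_add]; congr 1; omega
      calc ((m.choose i * n.choose i : ℕ) : ℂ) * t ^ i * (1 + t) ^ (m - i)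
          = ((m.choose i * n.choose i : ℕ) : ℂ) * z ^ i
              * ((1 + t) ^ i * (1 + t) ^ (m - i)) := by rw [hpow]; ring
        _ = (1 + t) ^ m * (((m.choose i * n.choose i : ℕ) : ℂ) * z ^ i) := by
            rw [hpow2]; ring
    rw [Finset.sum_congr rfl this, ← Finset.mul_sum, hz', mul_zero]
  have htim : t.im = 0 := S_real_roots m n t hSz
  have htr : t = ((t.re : ℝ) : ℂ) := Complex.ext rfl (by simp [htim])
  have h1r : (1 : ℝ) + t.re ≠ 0 := by
    intro hc
    apply h1t0
    rw [htr]
    exact_mod_cast congrArg (Complex.ofReal) hc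
  have hzt : z = t / (1 + t) := by
    rw [eq_div_iff h1t0]; exact htz.symm
  rw [hzt, htr]
  simp [Complex.div_im, htim]

lemma part2 (m n : ℕ) (z : ℂ)
    (hz : aeval z (∑ i ∈ range (min m n + 1),
      C ((m.choose i * n.choose i : ℕ) : ℝ) * X ^ i * (1 + X) ^ (m + n - 2 * i)) = 0) :
    z.im = 0 := by
  by_cases hz1 : z = -1
  · rw [hz1]; simp
  have h1z : (1 : ℂ) + z ≠ 0 := by
    intro hc; apply hz1; linear_combination hc
  set w : ℂ := z / (1 + z) ^ 2 with hw
  have hwz : w * (1 + z) ^ 2 = z := by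
    rw [hw]; field_simp
  have hP : aeval w (∑ i ∈ range (min m n + 1),
      C ((m.choose i * n.choose i : ℕ) : ℝ) * X ^ i) = 0 := by
    have hkey : (1 + z) ^ (m + n) * aeval w (∑ i ∈ range (min m n + 1),
        C ((m.choose i * n.choose i : ℕ) : ℝ) * X ^ i) = 0 := by
      rw [map_sum, Finset.mul_sum, ← hz, map_sum]
      apply Finset.sum_congr rfl
      intro i hi
      simp only [mem_range, Nat.lt_succ_iff] at hi
      have h2i : 2 * i ≤ m + n := by
        have := min_le_left m n; have := min_le_right m n; omega
      have ht1 : aeval w (C ((m.choose i * n.choose i : ℕ) : ℝ) * X ^ i)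
          = ((m.choose i * n.choose i : ℕ) : ℂ) * w ^ i := by simp
      have ht2 : aeval z (C ((m.choose i * n.choose i : ℕ) : ℝ) * X ^ i
            * (1 + X) ^ (m + n - 2 * i))
          = ((m.choose i * n.choose i : ℕ) : ℂ) * z ^ i * (1 + z) ^ (m + n - 2 * i) := by
        simp
      rw [ht1, ht2]
      have hzi : w ^ i * (1 + z) ^ (2 * i) = z ^ i := by
        rw [pow_mul, ← mul_pow, hwz]
      have hsplit : (1 + z) ^ (m + n) = (1 + z) ^ (2 * i) * (1 + z) ^ (m + n - 2 * i) := by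
        rw [← pow_add]; congr 1; omega
      calc (1 + z) ^ (m + n) * (((m.choose i * n.choose i : ℕ) : ℂ) * w ^ i)
          = ((m.choose i * n.choose i : ℕ) : ℂ)
              * (w ^ i * (1 + z) ^ (2 * i)) * (1 + z) ^ (m + n - 2 * i) := by
            rw [hsplit]; ring
        _ = ((m.choose i * n.choose i : ℕ) : ℂ) * z ^ i * (1 + z) ^ (m + n - 2 * i) := by
            rw [hzi]
    have hpow : ((1 : ℂ) + z) ^ (m + n) ≠ 0 := pow_ne_zero _ h1z
    exact (mul_eq_zero.mp hkey).resolve_left hpow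
  have hwim : w.im = 0 := part1 m n w hP
  set r := w.re with hr
  have hwr : w = ((r : ℝ) : ℂ) := Complex.ext rfl (by simp [hwim])
  -- the real number r is a root of a polynomial with nonnegative coefficients and constant 1
  have hreal : ∑ i ∈ range (min m n + 1), ((m.choose i * n.choose i : ℕ) : ℝ) * r ^ i = 0 := by
    have hP' : ∑ i ∈ range (min m n + 1), ((m.choose i * n.choose i : ℕ) : ℂ) * w ^ i = 0 := by
      rw [map_sum] at hP
      rw [← hP]
      apply Finset.sum_congr rfl
      intro i _
      simp
    rw [hwr] at hP'
    have : ((∑ i ∈ range (min m n + 1),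
        ((m.choose i * n.choose i : ℕ) : ℝ) * r ^ i : ℝ) : ℂ) = 0 := by
      rw [← hP']
      push_cast
      ring
    exact_mod_cast this
  have hrneg : r < 0 := by
    by_contra hcon
    push_neg at hcon
    have hpos : 0 < ∑ i ∈ range (min m n + 1), ((m.choose i * n.choose i : ℕ) : ℝ) * r ^ i := by
      apply Finset.sum_pos'
      · intro i _
        exact mul_nonneg (Nat.cast_nonneg _) (pow_nonneg hcon _)
      · refine ⟨0, Finset.mem_range.mpr (by omega), ?_⟩
        simp
    linarith
  -- quadratic equation with real coefficients
  have hq : ((r : ℝ) : ℂ) * (1 + z) ^ 2 = z := by rw [← hwr]; exact hwz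
  set a := z.re with ha
  set b := z.im with hb
  rw [show ((1 : ℂ) + z) ^ 2 = 1 + 2 * z + z * z by ring] at hq
  have hre : r * (1 + 2 * a + (a * a - b * b)) = a := by
    have := congrArg Complex.re hq
    simpa [Complex.mul_re, Complex.mul_im, Complex.add_re, Complex.add_im] using this
  have him : r * (2 * b + (a * b + b * a)) = b := by
    have := congrArg Complex.im hq
    simpa [Complex.mul_re, Complex.mul_im, Complex.add_re, Complex.add_im] using this
  show b = 0
  by_contra hbne
  have hfac : b * (2 * r * (1 + a) - 1) = 0 := by linear_combination him
  have he : 2 * r * (1 + a) = 1 := by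
    rcases mul_eq_zero.mp hfac with h | h
    · exact absurd h hbne
    · linarith
  have hre' : r * (1 + 2 * a + a ^ 2 - b ^ 2) = a := by linear_combination hre
  have hb2 : 4 * (r * b) ^ 2 = 4 * r - 1 := by
    linear_combination (-(4 * r)) * hre' + (2 * r * (1 + a) - 1) * he
  nlinarith [sq_nonneg (r * b), hb2, hrneg]

/-- the polynomial `Σ_i C(m,i) C(n,i) t^i` has only real roots,
and consequently so does
`h_{m,n}(t) = Σ_i C(m,i) C(n,i) t^i (1+t)^{m+n−2i}`. -/
theorem shuffle_polynomials_real_rooted (m n : ℕ) :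
    (∀ z : ℂ,
      Polynomial.aeval z
          (∑ i ∈ Finset.range (min m n + 1),
            Polynomial.C ((m.choose i * n.choose i : ℕ) : ℝ) * (X : Polynomial ℝ) ^ i) = 0 →
        z.im = 0) ∧
    (∀ z : ℂ,
      Polynomial.aeval z
          (∑ i ∈ Finset.range (min m n + 1),
            Polynomial.C ((m.choose i * n.choose i : ℕ) : ℝ) * (X : Polynomial ℝ) ^ i *
              (1 + X) ^ (m + n - 2 * i)) = 0 →
        z.im = 0) :=
  ⟨fun z hz => part1 m n z hz, fun z hz => part2 m n z hz⟩
end
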